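/- arXiv:2204.02535 — 5 statements merged into one kernel-verified Lean document; each statement's English description precedes it below -/
import Mathlib

section
/- For positive integers n, t and 1 ≤ r ≤ 3, the number of triples (α, β, γ) of partitions of total weight n with α 2-distinct of length t, β strict of length t, and γ an ordinary partition with ℓ(γ) = t (respectively ℓ(γ) < t) equals the number of Schmidt 3-partitions of n with exactly 3t parts (respectively exactly 3t−1 parts). -/
/-- `l` is a partition: a weakly decreasing list of positive integers. -/
def IsPartition (l : List ℕ) : Prop :=
  l.Pairwise (· ≥ ·) ∧ ∀ x ∈ l, 0 < x

/-- `l` is a strict partition: a strictly decreasing list of positive integers. -/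
def IsStrict (l : List ℕ) : Prop :=
  l.Pairwise (· > ·) ∧ ∀ x ∈ l, 0 < x

/-- Sum of the parts of `l` in positions `1, k+1, 2k+1, …` (0-indexed `0, k, 2k, …`). -/
def schmidtSum (k : ℕ) (l : List ℕ) : ℕ :=
  ∑ i ∈ Finset.range l.length, if i % k = 0 then l.getD i 0 else 0

/-- `l` is a 2-distinct partition: adjacent parts differ by at least 2, all parts positive. -/
def Is2Distinct (l : List ℕ) : Prop :=
  l.Chain' (fun a b => b + 2 ≤ a) ∧ ∀ x ∈ l, 0 < x

@[simp] lemma chain'_iff_isChain (R : ℕ → ℕ → Prop) (l : List ℕ) :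
    List.Chain' R l ↔ List.IsChain R l := Iff.rfl

/-- interleave three lists into a Schmidt list -/
def itl : List ℕ → List ℕ → List ℕ → List ℕ
  | a::as, b::bs, c::cs =>
      (a+b+c) :: (b+c+as.headD 0+(if as.isEmpty then 0 else 1)) ::
        (c+as.headD 0+bs.headD 0+(if as.isEmpty then 0 else 1)) :: itl as bs cs
  | _, _, _ => []

/-- deinterleave a Schmidt list into three lists -/
def dei : List ℕ → List ℕ × List ℕ × List ℕ
  | x::y::z::rest =>
      let p := dei rest
      let d := if rest.isEmpty then 0 else 1
      ((x - y + d + p.1.headD 0) :: p.1,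
       (y - z + p.2.1.headD 0) :: p.2.1,
       (z - d - rest.headD 0 + p.2.2.headD 0) :: p.2.2)
  | _ => ([],[],[])

lemma ss_nil : schmidtSum 3 [] = 0 := by simp [schmidtSum]

lemma ss_cons3 (x y z : ℕ) (r : List ℕ) :
    schmidtSum 3 (x::y::z::r) = x + schmidtSum 3 r := by
  simp only [schmidtSum, List.length_cons]
  rw [Finset.sum_range_succ', Finset.sum_range_succ', Finset.sum_range_succ']
  have e : ∀ k ∈ Finset.range r.length,
      (if (k+1+1+1) % 3 = 0 then (x::y::z::r).getD (k+1+1+1) 0 else 0)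
        = if k % 3 = 0 then r.getD k 0 else 0 := by
    intro k _
    rw [List.getD_cons_succ, List.getD_cons_succ, List.getD_cons_succ,
      show (k+1+1+1) % 3 = k % 3 from by omega]
  rw [Finset.sum_congr rfl e]
  norm_num [List.getD]
  omega

lemma ss_append (l : List ℕ) (v : ℕ) :
    schmidtSum 3 (l ++ [v]) = schmidtSum 3 l + if l.length % 3 = 0 then v else 0 := by
  simp only [schmidtSum, List.length_append, List.length_cons, List.length_nil]
  rw [show l.length + (0+1) = l.length + 1 by ring, Finset.sum_range_succ]
  congr 1
  · apply Finset.sum_congr rfl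
    intro i hi
    rw [Finset.mem_range] at hi
    rw [List.getD_append _ _ _ _ hi]
  · by_cases h : l.length % 3 = 0 <;> simp [h, List.getD_append_right, List.getD, Nat.sub_self]
lemma lb_last : ∀ (l : List ℕ) (g : ℕ), l.Chain' (· ≥ ·) → l.getLast? = some g →
    ∀ x ∈ l, g ≤ x := by
  intro l
  induction l with
  | nil => simp
  | cons a l ih =>
    intro g hc hg x hx
    cases l with
    | nil => simp at hg hx; omega
    | cons b l' =>
      rw [List.getLast?_cons_cons] at hg
      rw [chain'_iff_isChain, List.isChain_cons_cons] at hc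
      rcases List.mem_cons.1 hx with rfl | hx'
      · exact le_trans (ih g hc.2 hg b (List.mem_cons_self)) hc.1
      · exact ih g hc.2 hg x hx'

lemma le_head : ∀ (l : List ℕ) (a : ℕ), (a::l).Chain' (· ≥ ·) → ∀ x ∈ l, x ≤ a := by
  intro l
  induction l with
  | nil => simp
  | cons b l' ih =>
    intro a hc x hx
    rw [chain'_iff_isChain, List.isChain_cons_cons] at hc
    rcases List.mem_cons.1 hx with rfl | hx'
    · exact hc.1
    · exact le_trans (ih b hc.2 x hx') hc.1

lemma gt_to_ge {l : List ℕ} (h : l.Chain' (· > ·)) : l.Chain' (· ≥ ·) :=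
  h.imp (fun _ _ hab => le_of_lt hab)

lemma dist_to_ge {l : List ℕ} (h : l.Chain' (fun a b => b + 2 ≤ a)) : l.Chain' (· ≥ ·) :=
  h.imp (fun _ _ hab => by omega)

lemma drop_zero : ∀ (l : List ℕ), l.Chain' (· ≥ ·) →
    ∀ x ∈ l.dropWhile (fun v => decide (0 < v)), x = 0 := by
  intro l
  induction l with
  | nil => simp
  | cons a l ih =>
    intro hc x hx
    by_cases ha : 0 < a
    · rw [List.dropWhile_cons_of_pos (by simpa using ha)] at hx
      exact ih hc.tail x hx
    · rw [List.dropWhile_cons_of_neg (by simpa using ha)] at hx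
      rcases List.mem_cons.1 hx with rfl | hx'
      · omega
      · have := le_head l a hc x hx'
        omega

/-- decomposition of a weakly decreasing list into positive prefix and zeros -/
lemma take_drop_decomp (l : List ℕ) (hc : l.Chain' (· ≥ ·)) :
    l = l.takeWhile (fun v => decide (0 < v)) ++
      List.replicate (l.length - (l.takeWhile (fun v => decide (0 < v))).length) 0 := by
  conv_lhs => rw [← List.takeWhile_append_dropWhile (p := fun v => decide (0 < v)) (l := l)]
  congr 1
  rw [List.eq_replicate_iff]
  constructor
  · have h2 := congrArg List.length (List.takeWhile_append_dropWhile (p := fun v => decide (0 < v)) (l := l))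
    simp only [List.length_append] at h2
    omega
  · exact drop_zero l hc

lemma takeWhile_pos_append (γ : List ℕ) (k : ℕ) (hpos : ∀ x ∈ γ, 0 < x) :
    (γ ++ List.replicate k 0).takeWhile (fun v => decide (0 < v)) = γ := by
  induction γ with
  | nil =>
    cases k with
    | zero => rfl
    | succ k' => simp [List.replicate_succ]
  | cons a γ' ih =>
    rw [List.cons_append, List.takeWhile_cons_of_pos
      (by simpa using hpos a (List.mem_cons_self))]
    rw [ih (fun x hx => hpos x (List.mem_cons_of_mem _ hx))]
lemma masterA : ∀ (α β γ : List ℕ), α.length = β.length → α.length = γ.length →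
    α.Chain' (fun a b => b + 2 ≤ a) → β.Chain' (· > ·) → γ.Chain' (· ≥ ·) →
    (∀ x ∈ α, 0 < x) → (∀ x ∈ β, 0 < x) →
    (itl α β γ).length = 3 * α.length ∧
    (itl α β γ).Chain' (· > ·) ∧
    (itl α β γ).getLast? = γ.getLast? ∧
    ((∀ x ∈ γ, 0 < x) → ∀ x ∈ itl α β γ, 0 < x) ∧
    (∀ x ∈ (itl α β γ).dropLast, 0 < x) ∧
    schmidtSum 3 (itl α β γ) = α.sum + β.sum + γ.sum ∧
    dei (itl α β γ) = (α, β, γ) := by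
  intro α
  induction α with
  | nil =>
    intro β γ h1 h2 _ _ _ _ _
    have hβ : β = [] := List.length_eq_zero_iff.1 h1.symm
    have hγ : γ = [] := List.length_eq_zero_iff.1 h2.symm
    subst hβ; subst hγ
    refine ⟨rfl, ?_, rfl, ?_, ?_, ?_, rfl⟩ <;> simp [itl, ss_nil]
  | cons a as ih =>
    intro β γ h1 h2 hca hcb hcc hpa hpb
    match β, γ with
    | [], _ => simp at h1
    | _, [] => simp at h2
    | b :: bs, c :: cs =>
      simp only [List.length_cons, Nat.add_right_cancel_iff] at h1 h2
      have ihr := ih bs cs h1 h2 hca.tail hcb.tail hcc.tail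
        (fun x hx => hpa x (List.mem_cons_of_mem _ hx))
        (fun x hx => hpb x (List.mem_cons_of_mem _ hx))
      obtain ⟨iL, iC, iG, iP, iD, iS, iR⟩ := ihr
      have ha : 0 < a := hpa a (List.mem_cons_self)
      have hb : 0 < b := hpb b (List.mem_cons_self)
      match as, bs, cs, h1, h2 with
      | [], [], [], _, _ =>
        have h3 : itl [a] [b] [c] = [a+b+c, b+c, c] := by simp [itl]
        rw [h3]
        refine ⟨rfl, ?_, rfl, ?_, ?_, ?_, ?_⟩
        · refine List.isChain_cons_cons.2 ⟨by omega, List.isChain_cons_cons.2 ⟨by omega, ?_⟩⟩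
          simp
        · intro hg x hx
          have hc : 0 < c := hg c (List.mem_cons_self)
          simp at hx
          rcases hx with rfl | rfl | rfl <;> omega
        · intro x hx
          simp at hx
          rcases hx with rfl | rfl <;> omega
        · simp [ss_cons3, ss_nil]
        · simp [dei, Prod.ext_iff]
          omega
      | a' :: as', b' :: bs', c' :: cs', _, _ =>
        have haa : a' + 2 ≤ a := (List.isChain_cons_cons.1 hca).1
        have hbb : b' < b := (List.isChain_cons_cons.1 hcb).1
        have hcc' : c' ≤ c := (List.isChain_cons_cons.1 hcc).1
        have hR : itl (a'::as') (b'::bs') (c'::cs') =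
            (a'+b'+c') :: (b'+c'+as'.headD 0+(if as'.isEmpty then 0 else 1)) ::
            (c'+as'.headD 0+bs'.headD 0+(if as'.isEmpty then 0 else 1)) :: itl as' bs' cs' := rfl
        have hitl : itl (a::a'::as') (b::b'::bs') (c::c'::cs') =
            (a+b+c) :: (b+c+a'+1) :: (c+a'+b'+1) :: itl (a'::as') (b'::bs') (c'::cs') := rfl
        rw [hitl]
        refine ⟨?_, ?_, ?_, ?_, ?_, ?_, ?_⟩
        · simp only [List.length_cons, iL, List.length_cons]; ring
        · refine List.isChain_cons_cons.2 ⟨by omega, List.isChain_cons_cons.2 ⟨by omega,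
            List.isChain_cons.2 ⟨?_, iC⟩⟩⟩
          intro y hy
          rw [hR] at hy
          simp only [List.head?_cons, Option.mem_def, Option.some.injEq] at hy
          omega
        · rw [hR, List.getLast?_cons_cons, List.getLast?_cons_cons, List.getLast?_cons_cons,
            ← hR, iG, List.getLast?_cons_cons]
        · intro hg x hx
          simp only [List.mem_cons] at hx
          rcases hx with rfl | rfl | rfl | hx'
          · omega
          · omega
          · omega
          · exact iP (fun y hy => hg y (List.mem_cons_of_mem _ hy)) x hx'
        · intro x hx
          rw [List.dropLast_cons_of_ne_nil (List.cons_ne_nil _ _),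
            List.dropLast_cons_of_ne_nil (List.cons_ne_nil _ _),
            List.dropLast_cons_of_ne_nil (by rw [hR]; simp)] at hx
          simp only [List.mem_cons] at hx
          rcases hx with rfl | rfl | rfl | hx'
          · omega
          · omega
          · omega
          · exact iD x hx'
        · rw [ss_cons3, iS]
          simp only [List.sum_cons]
          ring
        · have hRne : itl (a'::as') (b'::bs') (c'::cs') ≠ [] := by rw [hR]; simp
          have hhead : (itl (a'::as') (b'::bs') (c'::cs')).headD 0 = a'+b'+c' := by
            rw [hR]; rfl
          show dei ((a+b+c) :: (b+c+a'+1) :: (c+a'+b'+1) :: itl (a'::as') (b'::bs') (c'::cs'))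
            = _
          rw [dei]
          simp only [iR, List.isEmpty_iff, if_neg hRne, hhead]
          refine Prod.ext ?_ (Prod.ext ?_ ?_) <;> simp only [List.headD_cons] <;>
            · congr 1; omega
lemma masterB : ∀ (m : ℕ) (l : List ℕ), l.length = 3 * m → l.Chain' (· > ·) →
    (dei l).1.length = m ∧ (dei l).2.1.length = m ∧ (dei l).2.2.length = m ∧
    (dei l).1.Chain' (fun a b => b + 2 ≤ a) ∧ (dei l).2.1.Chain' (· > ·) ∧
    (dei l).2.2.Chain' (· ≥ ·) ∧
    (∀ x ∈ (dei l).1, 0 < x) ∧ (∀ x ∈ (dei l).2.1, 0 < x) ∧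
    (dei l).2.2.getLast? = l.getLast? ∧
    itl (dei l).1 (dei l).2.1 (dei l).2.2 = l := by
  intro m
  induction m with
  | zero =>
    intro l hl _
    have : l = [] := List.length_eq_zero_iff.1 (by omega)
    subst this
    exact ⟨rfl, rfl, rfl, by simp [dei], by simp [dei], by simp [dei],
      by simp [dei], by simp [dei], by simp [dei], rfl⟩
  | succ m ih =>
    intro l hl hc
    obtain ⟨x, l1, rfl⟩ := List.exists_cons_of_ne_nil (show l ≠ [] by
      intro h; rw [h] at hl; simp at hl
      all_goals omega)
    obtain ⟨y, l2, rfl⟩ := List.exists_cons_of_ne_nil (show l1 ≠ [] by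
      intro h; rw [h] at hl; simp at hl
      all_goals omega)
    obtain ⟨z, rest, rfl⟩ := List.exists_cons_of_ne_nil (show l2 ≠ [] by
      intro h; rw [h] at hl; simp at hl
      all_goals omega)
    have hrl : rest.length = 3 * m := by
      simp at hl
      all_goals omega
    have hxy : y < x := (List.isChain_cons_cons.1 hc).1
    have hyz : z < y := (List.isChain_cons_cons.1 (List.isChain_cons_cons.1 hc).2).1
    have hcr : rest.Chain' (· > ·) :=
      ((List.isChain_cons_cons.1 (List.isChain_cons_cons.1 hc).2).2).tail
    obtain ⟨iA, iB, iG, iCA, iCB, iCG, iPA, iPB, iLast, iR⟩ := ih rest hrl hcr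
    match m, rest, hrl with
    | 0, rest, hrl =>
      have hre : rest = [] := List.length_eq_zero_iff.1 (by omega)
      subst hre
      have hd : dei [x, y, z] = ([x - y], [y - z], [z]) := by
        simp [dei]
      rw [hd]
      refine ⟨rfl, rfl, rfl, by simp, by simp, by simp, by simp <;> omega, by simp <;> omega,
        by simp, ?_⟩
      simp [itl]
      omega
    | (m'+1), rest, hrl =>
      obtain ⟨x', rest', rfl⟩ := List.exists_cons_of_ne_nil (show rest ≠ [] by
        intro h; rw [h] at hrl; simp at hrl)
      have hzx : x' < z := by
        have := (List.isChain_cons_cons.1 (List.isChain_cons_cons.1 hc).2).2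
        exact (List.isChain_cons_cons.1 this).1
      obtain ⟨a', as', hAs⟩ := List.exists_cons_of_ne_nil (show (dei (x'::rest')).1 ≠ [] by
        intro h; rw [h] at iA; simp at iA)
      obtain ⟨b', bs', hBs⟩ := List.exists_cons_of_ne_nil (show (dei (x'::rest')).2.1 ≠ [] by
        intro h; rw [h] at iB; simp at iB)
      obtain ⟨c', cs', hCs⟩ := List.exists_cons_of_ne_nil (show (dei (x'::rest')).2.2 ≠ [] by
        intro h; rw [h] at iG; simp at iG)
      have hx' : x' = a' + b' + c' := by
        have : itl (a'::as') (b'::bs') (c'::cs') = x'::rest' := by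
          rw [← hAs, ← hBs, ← hCs]; exact iR
        rw [itl] at this
        exact (List.cons.injEq _ _ _ _ ▸ this).1.symm
      have hdei : dei (x::y::z::x'::rest') =
          ((x - y + 1 + a') :: (dei (x'::rest')).1,
           (y - z + b') :: (dei (x'::rest')).2.1,
           (z - 1 - x' + c') :: (dei (x'::rest')).2.2) := by
        rw [dei]
        simp [hAs, hBs, hCs]
      rw [hdei]
      simp only [hAs, hBs, hCs]
      refine ⟨by simp [← hAs, iA], by simp [← hBs, iB], by simp [← hCs, iG], ?_, ?_, ?_,
        ?_, ?_, ?_, ?_⟩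
      · refine List.isChain_cons_cons.2 ⟨by omega, hAs ▸ iCA⟩
      · refine List.isChain_cons_cons.2 ⟨by omega, hBs ▸ iCB⟩
      · refine List.isChain_cons_cons.2 ⟨by omega, hCs ▸ iCG⟩
      · intro w hw
        rcases List.mem_cons.1 hw with rfl | hw'
        · omega
        · exact iPA w (hAs ▸ hw')
      · intro w hw
        rcases List.mem_cons.1 hw with rfl | hw'
        · omega
        · exact iPB w (hBs ▸ hw')
      · rw [hCs] at iLast
        simp only [List.getLast?_cons_cons] at iLast ⊢
        exact iLast
      · rw [itl]
        simp only [← hAs, ← hBs, ← hCs, iR]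
        have h1 : (dei (x'::rest')).1.headD 0 = a' := by rw [hAs]; rfl
        have h2 : (dei (x'::rest')).2.1.headD 0 = b' := by rw [hBs]; rfl
        have h3 : (dei (x'::rest')).1.isEmpty = false := by rw [hAs]; rfl
        rw [h1, h2, h3]
        simp only [if_neg (by simp : ¬false = true)]
        congr 1 <;> try omega
        congr 1 <;> try omega
        congr 1 <;> omega
lemma sorted_gt_iff (l : List ℕ) : l.Pairwise (· > ·) ↔ l.Chain' (· > ·) :=
  List.isChain_iff_pairwise.symm

lemma sorted_ge_iff (l : List ℕ) : l.Pairwise (· ≥ ·) ↔ l.Chain' (· ≥ ·) :=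
  List.isChain_iff_pairwise.symm

lemma part1 (n t : ℕ) (ht : 1 ≤ t) :
    Nat.card {p : List ℕ × List ℕ × List ℕ //
        Is2Distinct p.1 ∧ p.1.length = t ∧
        IsStrict p.2.1 ∧ p.2.1.length = t ∧
        IsPartition p.2.2 ∧ p.2.2.length = t ∧
        p.1.sum + p.2.1.sum + p.2.2.sum = n} =
      Nat.card {l : List ℕ // IsStrict l ∧ l.length = 3 * t ∧ schmidtSum 3 l = n} := by
  apply Nat.card_congr
  refine
    { toFun := fun p => ⟨itl p.1.1 p.1.2.1 p.1.2.2, ?_⟩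
      invFun := fun l => ⟨dei l.1, ?_⟩
      left_inv := ?_
      right_inv := ?_ }
  · obtain ⟨⟨α, β, γ⟩, ⟨hA2, hApos⟩, hAl, ⟨hBs, hBpos⟩, hBl, ⟨hGs, hGpos⟩, hGl, hsum⟩ := p
    obtain ⟨mL, mC, mG, mP, mD, mS, mR⟩ := masterA α β γ (hAl.trans hBl.symm)
      (hAl.trans hGl.symm) hA2
      ((sorted_gt_iff β).1 hBs) ((sorted_ge_iff γ).1 hGs) hApos hBpos
    exact ⟨⟨(sorted_gt_iff _).2 mC, mP hGpos⟩, by rw [mL, hAl], by rw [mS, hsum]⟩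
  · obtain ⟨l, ⟨hs, hpos⟩, hl, hss⟩ := l
    obtain ⟨iA, iB, iG, iCA, iCB, iCG, iPA, iPB, iLast, iR⟩ :=
      masterB t l hl ((sorted_gt_iff l).1 hs)
    have hlne : l ≠ [] := by intro h; rw [h] at hl; simp at hl; omega
    have hgl : l.getLast? = some (l.getLast hlne) := List.getLast?_eq_getLast hlne
    have hgpos : 0 < l.getLast hlne := hpos _ (List.getLast_mem hlne)
    have hGpos : ∀ x ∈ (dei l).2.2, 0 < x := by
      intro x hx
      have := lb_last (dei l).2.2 (l.getLast hlne) iCG (by rw [iLast, hgl]) x hx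
      omega
    refine ⟨⟨iCA, iPA⟩, iA, ⟨(sorted_gt_iff _).2 iCB, iPB⟩, iB,
      ⟨(sorted_ge_iff _).2 iCG, hGpos⟩, iG, ?_⟩
    obtain ⟨_, _, _, _, _, mS, _⟩ := masterA (dei l).1 (dei l).2.1 (dei l).2.2
      (iA.trans iB.symm) (iA.trans iG.symm) iCA iCB iCG iPA iPB
    rw [iR] at mS
    rw [← mS, hss]
  · rintro ⟨⟨α, β, γ⟩, ⟨hA2, hApos⟩, hAl, ⟨hBs, hBpos⟩, hBl, ⟨hGs, hGpos⟩, hGl, hsum⟩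
    apply Subtype.ext
    exact (masterA α β γ (hAl.trans hBl.symm) (hAl.trans hGl.symm) hA2
      ((sorted_gt_iff β).1 hBs) ((sorted_ge_iff γ).1 hGs) hApos hBpos).2.2.2.2.2.2
  · rintro ⟨l, ⟨hs, hpos⟩, hl, hss⟩
    apply Subtype.ext
    exact (masterB t l hl ((sorted_gt_iff l).1 hs)).2.2.2.2.2.2.2.2.2
lemma chain_replicate_zero (k : ℕ) : (List.replicate k 0).Chain' (· ≥ ·) := by
  induction k with
  | zero => simp
  | succ k ih =>
    rw [List.replicate_succ, chain'_iff_isChain, List.isChain_cons]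
    refine ⟨fun y hy => ?_, ih⟩
    cases k with
    | zero => simp at hy
    | succ k' =>
      rw [List.replicate_succ] at hy
      simp at hy
      omega

lemma pad_chain (γ : List ℕ) (k : ℕ) (h : γ.Chain' (· ≥ ·)) :
    (γ ++ List.replicate k 0).Chain' (· ≥ ·) := by
  rw [chain'_iff_isChain, List.isChain_append]
  exact ⟨h, chain_replicate_zero k, fun x _ y hy => by
    have : y = 0 := by
      cases k with
      | zero => simp at hy
      | succ k' => rw [List.replicate_succ] at hy; simp at hy; omega
    omega⟩

lemma part2 (n t : ℕ) (ht : 1 ≤ t) :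
    Nat.card {p : List ℕ × List ℕ × List ℕ //
        Is2Distinct p.1 ∧ p.1.length = t ∧
        IsStrict p.2.1 ∧ p.2.1.length = t ∧
        IsPartition p.2.2 ∧ p.2.2.length < t ∧
        p.1.sum + p.2.1.sum + p.2.2.sum = n} =
      Nat.card {l : List ℕ // IsStrict l ∧ l.length = 3 * t - 1 ∧ schmidtSum 3 l = n} := by
  apply Nat.card_congr
  refine
    { toFun := fun p =>
        ⟨(itl p.1.1 p.1.2.1 (p.1.2.2 ++ List.replicate (t - p.1.2.2.length) 0)).dropLast, ?_⟩
      invFun := fun l =>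
        ⟨((dei (l.1 ++ [0])).1, (dei (l.1 ++ [0])).2.1,
          (dei (l.1 ++ [0])).2.2.takeWhile (fun v => decide (0 < v))), ?_⟩
      left_inv := ?_
      right_inv := ?_ }
  · obtain ⟨⟨α, β, γ⟩, ⟨hA2, hApos⟩, hAl, ⟨hBs, hBpos⟩, hBl, ⟨hGs, hGpos⟩, hGl, hsum⟩ := p
    have hGl' : γ.length < t := hGl
    have hsum' : α.sum + β.sum + γ.sum = n := hsum
    set γ' := γ ++ List.replicate (t - γ.length) 0 with hγ'
    have hγ'l : γ'.length = t := by simp [hγ']; omega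
    obtain ⟨mL, mC, mG, mP, mD, mS, mR⟩ := masterA α β γ'
      (hAl.trans hBl.symm) (by rw [hγ'l]; exact hAl)
      hA2 ((sorted_gt_iff β).1 hBs) (pad_chain γ _ ((sorted_ge_iff γ).1 hGs)) hApos hBpos
    have hlen : (itl α β γ').length = 3 * t := by rw [mL, hAl]
    have hne : itl α β γ' ≠ [] := by
      intro h; rw [h] at hlen; simp at hlen; omega
    have hlast0 : (itl α β γ').getLast hne = 0 := by
      have h1 : γ'.getLast? = some 0 := by
        rw [hγ', List.getLast?_append]
        have : t - γ.length ≠ 0 := by omega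
        obtain ⟨k, hk⟩ := Nat.exists_eq_succ_of_ne_zero this
        rw [hk, List.replicate_succ']
        simp
      rw [← Option.some_inj, ← List.getLast?_eq_getLast hne, mG, h1]
    refine ⟨⟨?_, mD⟩, ?_, ?_⟩
    · exact (sorted_gt_iff _).2 (mC.prefix (List.dropLast_prefix _))
    · rw [List.length_dropLast, hlen]
    · show schmidtSum 3 ((itl α β γ').dropLast) = n
      have hdec : (itl α β γ').dropLast ++ [0] = itl α β γ' := by
        conv_rhs => rw [← List.dropLast_append_getLast hne]
        rw [hlast0]
      have h5 := ss_append ((itl α β γ').dropLast) 0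
      have hif : (if ((itl α β γ').dropLast).length % 3 = 0 then 0 else 0) = 0 := by
        split <;> rfl
      rw [hdec, hif] at h5
      have hγs : γ'.sum = γ.sum := by simp [hγ']
      rw [mS, hγs] at h5
      omega

  · obtain ⟨l, ⟨hs, hpos⟩, hl, hss⟩ := l
    have hlne : l ≠ [] := by
      intro h; rw [h] at hl; simp at hl; omega
    have hl0c : (l ++ [0]).Chain' (· > ·) := by
      rw [chain'_iff_isChain, List.isChain_append]
      refine ⟨(sorted_gt_iff l).1 hs, by simp, ?_⟩
      intro x hx y hy
      simp at hy; subst hy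
      rw [List.getLast?_eq_getLast hlne] at hx
      simp at hx; subst hx
      exact hpos _ (List.getLast_mem hlne)
    have hl0l : (l ++ [0]).length = 3 * t := by simp [hl]; omega
    obtain ⟨iA, iB, iG, iCA, iCB, iCG, iPA, iPB, iLast, iR⟩ := masterB t (l ++ [0]) hl0l hl0c
    have hGlast : (dei (l ++ [0])).2.2.getLast? = some 0 := by
      rw [iLast, List.getLast?_concat]
    refine ⟨⟨iCA, iPA⟩, iA, ⟨(sorted_gt_iff _).2 iCB, iPB⟩, iB,
      ⟨?_, ?_⟩, ?_, ?_⟩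
    · exact (sorted_ge_iff _).2 (iCG.prefix (List.takeWhile_prefix _))
    · intro x hx
      have := List.mem_takeWhile_imp hx
      simpa using this
    · -- takeWhile length < t
      show ((dei (l ++ [0])).2.2.takeWhile (fun v => decide (0 < v))).length < t
      have hle : ((dei (l ++ [0])).2.2.takeWhile (fun v => decide (0 < v))).length ≤
          (dei (l ++ [0])).2.2.length := (List.takeWhile_prefix _).length_le
      rcases lt_or_eq_of_le hle with h | h
      · omega
      · exfalso
        have heq : (dei (l ++ [0])).2.2.takeWhile (fun v => decide (0 < v)) =
            (dei (l ++ [0])).2.2 :=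
          (List.takeWhile_prefix _).eq_of_length h
        have hne2 : (dei (l ++ [0])).2.2 ≠ [] := by
          intro hh; rw [hh] at iG; simp at iG; omega
        have hmem : (dei (l ++ [0])).2.2.getLast hne2 ∈
            (dei (l ++ [0])).2.2.takeWhile (fun v => decide (0 < v)) := by
          rw [heq]; exact List.getLast_mem hne2
        have h0 : (dei (l ++ [0])).2.2.getLast hne2 = 0 := by
          rw [← Option.some_inj, ← List.getLast?_eq_getLast hne2, hGlast]
        have := List.mem_takeWhile_imp hmem
        rw [h0] at this
        simp at this
    · -- sum
      show (dei (l ++ [0])).1.sum + (dei (l ++ [0])).2.1.sum +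
        ((dei (l ++ [0])).2.2.takeWhile (fun v => decide (0 < v))).sum = n
      obtain ⟨_, _, _, _, _, mS, _⟩ := masterA (dei (l ++ [0])).1 (dei (l ++ [0])).2.1
        (dei (l ++ [0])).2.2 (iA.trans iB.symm) (iA.trans iG.symm) iCA iCB iCG iPA iPB
      rw [iR] at mS
      rw [ss_append, hss] at mS
      have hsum0 : schmidtSum 3 l + (if l.length % 3 = 0 then 0 else 0) = schmidtSum 3 l := by
        split <;> rfl
      have hdecomp := take_drop_decomp (dei (l ++ [0])).2.2 iCG
      have hsum2 : ((dei (l ++ [0])).2.2.takeWhile (fun v => decide (0 < v))).sum =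
          (dei (l ++ [0])).2.2.sum := by
        conv_rhs => rw [hdecomp]
        simp
      rw [hsum2]
      omega
  · rintro ⟨⟨α, β, γ⟩, ⟨hA2, hApos⟩, hAl, ⟨hBs, hBpos⟩, hBl, ⟨hGs, hGpos⟩, hGl, hsum⟩
    apply Subtype.ext
    have hGl' : γ.length < t := hGl
    set γ' := γ ++ List.replicate (t - γ.length) 0 with hγ'
    have hγ'l : γ'.length = t := by simp [hγ']; omega
    obtain ⟨mL, mC, mG, mP, mD, mS, mR⟩ := masterA α β γ'
      (hAl.trans hBl.symm) (by rw [hγ'l]; exact hAl)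
      hA2 ((sorted_gt_iff β).1 hBs) (pad_chain γ _ ((sorted_ge_iff γ).1 hGs)) hApos hBpos
    have hlen : (itl α β γ').length = 3 * t := by rw [mL, hAl]
    have hne : itl α β γ' ≠ [] := by
      intro h; rw [h] at hlen; simp at hlen; omega
    have hlast0 : (itl α β γ').getLast hne = 0 := by
      have h1 : γ'.getLast? = some 0 := by
        rw [hγ', List.getLast?_append]
        have : t - γ.length ≠ 0 := by omega
        obtain ⟨k, hk⟩ := Nat.exists_eq_succ_of_ne_zero this
        rw [hk, List.replicate_succ']
        simp
      rw [← Option.some_inj, ← List.getLast?_eq_getLast hne, mG, h1]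
    have hdec : (itl α β γ').dropLast ++ [0] = itl α β γ' := by
      conv_rhs => rw [← List.dropLast_append_getLast hne]
      rw [hlast0]
    show ((dei ((itl α β γ').dropLast ++ [0])).1,
        (dei ((itl α β γ').dropLast ++ [0])).2.1,
        ((dei ((itl α β γ').dropLast ++ [0])).2.2.takeWhile (fun v => decide (0 < v)))) =
      (α, β, γ)
    rw [hdec, mR]
    refine Prod.ext rfl (Prod.ext rfl ?_)
    exact takeWhile_pos_append γ _ hGpos
  · rintro ⟨l, ⟨hs, hpos⟩, hl, hss⟩
    apply Subtype.ext
    have hlne : l ≠ [] := by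
      intro h; rw [h] at hl; simp at hl; omega
    have hl0c : (l ++ [0]).Chain' (· > ·) := by
      rw [chain'_iff_isChain, List.isChain_append]
      refine ⟨(sorted_gt_iff l).1 hs, by simp, ?_⟩
      intro x hx y hy
      simp at hy; subst hy
      rw [List.getLast?_eq_getLast hlne] at hx
      simp at hx; subst hx
      exact hpos _ (List.getLast_mem hlne)
    have hl0l : (l ++ [0]).length = 3 * t := by simp [hl]; omega
    obtain ⟨iA, iB, iG, iCA, iCB, iCG, iPA, iPB, iLast, iR⟩ := masterB t (l ++ [0]) hl0l hl0c
    have hdecomp := take_drop_decomp (dei (l ++ [0])).2.2 iCG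
    have hpad : (dei (l ++ [0])).2.2.takeWhile (fun v => decide (0 < v)) ++
        List.replicate (t - ((dei (l ++ [0])).2.2.takeWhile (fun v => decide (0 < v))).length) 0 =
        (dei (l ++ [0])).2.2 := by
      conv_rhs => rw [hdecomp]
      rw [iG]
    show (itl (dei (l ++ [0])).1 (dei (l ++ [0])).2.1
        ((dei (l ++ [0])).2.2.takeWhile (fun v => decide (0 < v)) ++
          List.replicate
            (t - ((dei (l ++ [0])).2.2.takeWhile (fun v => decide (0 < v))).length) 0)).dropLast
      = l
    rw [hpad, iR, List.dropLast_concat]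

/-- Refined Schmidt 3-partition theorem: triples `(α, β, γ)` of total weight `n` with
`α` 2-distinct of length `t`, `β` strict of length `t`, and `γ` an ordinary partition
with `ℓ(γ) = t` (resp. `ℓ(γ) < t`) are equinumerous with Schmidt 3-partitions of `n`
with exactly `3t` (resp. `3t - 1`) parts. -/
theorem schmidt_three_refined (n t : ℕ) (hn : 1 ≤ n) (ht : 1 ≤ t) :
    (Nat.card {p : List ℕ × List ℕ × List ℕ //
        Is2Distinct p.1 ∧ p.1.length = t ∧
        IsStrict p.2.1 ∧ p.2.1.length = t ∧
        IsPartition p.2.2 ∧ p.2.2.length = t ∧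
        p.1.sum + p.2.1.sum + p.2.2.sum = n} =
      Nat.card {l : List ℕ // IsStrict l ∧ l.length = 3 * t ∧ schmidtSum 3 l = n}) ∧
    (Nat.card {p : List ℕ × List ℕ × List ℕ //
        Is2Distinct p.1 ∧ p.1.length = t ∧
        IsStrict p.2.1 ∧ p.2.1.length = t ∧
        IsPartition p.2.2 ∧ p.2.2.length < t ∧
        p.1.sum + p.2.1.sum + p.2.2.sum = n} =
      Nat.card {l : List ℕ // IsStrict l ∧ l.length = 3 * t - 1 ∧ schmidtSum 3 l = n}) := by
  exact ⟨part1 n t ht, part2 n t ht⟩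
end

section
/- Define Φ mapping a k×t integer matrix A = (a_{i,j}) to the sequence λ of length kt via λ_{(j−1)k+i} = φ(a_{i,j}), where φ(a_{1,j}) = Σ_{s=1}^k a_{s,j}, φ(a_{i,t}) = Σ_{s=i}^k a_{s,t}, and otherwise φ(a_{i,j}) = Σ_{s=i}^k a_{s,j} + Σ_{s=1}^{i−1} a_{s,j+1}. Then Φ is a bijection from k×t integer matrices with entry sum n onto integer sequences (λ₁, …, λ_{kt}) with λ₁ + λ_{k+1} + ⋯ + λ_{(t−1)k+1} = n. -/
/-- The map `Φ` of Li–Yee (0-indexed): a `k × t` integer matrix `A` (given as a function,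
with row index `< k` and column index `< t` relevant) is sent to the sequence of length
`k * t` whose entry at 0-indexed position `m = j * k + i` (`i < k`, `j < t`) is
`Σ_{s=i}^{k-1} A s j + Σ_{s=0}^{i-1} A s (j+1)`, the second sum being absent when
`j = t - 1`. -/
def phiMap (k t : ℕ) (A : ℕ → ℕ → ℤ) : ℕ → ℤ := fun m =>
  (∑ s ∈ Finset.Ico (m % k) k, A s (m / k)) +
    (if m / k + 1 < t then ∑ s ∈ Finset.range (m % k), A s (m / k + 1) else 0)

/-- explicit inverse -/
def psiMap (k t : ℕ) (l : ℕ → ℤ) : ℕ → ℕ → ℤ := fun i j =>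
  if i < k ∧ j < t then ∑ j' ∈ Finset.Ico j t, (l (j' * k + i) - l (j' * k + i + 1)) else 0

lemma telescopeIco (g : ℕ → ℤ) {a b : ℕ} (h : a ≤ b) :
    ∑ j ∈ Finset.Ico a b, (g j - g (j + 1)) = g a - g b := by
  induction b with
  | zero => interval_cases a; simp
  | succ b ih =>
    rcases Nat.lt_or_ge a (b + 1) with h' | h'
    · have h'' : a ≤ b := Nat.lt_succ_iff.mp h'
      rw [Finset.sum_Ico_succ_top h'', ih h'']
      ring
    · have : a = b + 1 := le_antisymm h h'
      subst this; simp

lemma shiftIco (g : ℕ → ℤ) (a b : ℕ) :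
    ∑ j ∈ Finset.Ico a b, g (j + 1) = ∑ j ∈ Finset.Ico (a + 1) (b + 1), g j := by
  rw [Finset.sum_Ico_eq_sum_range, Finset.sum_Ico_eq_sum_range]
  simp only [Nat.add_sub_add_right]
  apply Finset.sum_congr rfl
  intro x _
  congr 1
  omega

lemma idx_mod {k : ℕ} (i j : ℕ) (hi : i < k) : (j * k + i) % k = i := by
  rw [add_comm, Nat.add_mul_mod_self_right, Nat.mod_eq_of_lt hi]

lemma idx_div {k : ℕ} (i j : ℕ) (hi : i < k) : (j * k + i) / k = j := by
  rw [mul_comm, Nat.mul_add_div (by omega)]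
  simp [Nat.div_eq_of_lt hi]

lemma phi_val (k t : ℕ) (A : ℕ → ℕ → ℤ) {i j : ℕ} (hi : i < k) (hj : j < t) :
    (if j * k + i < k * t then phiMap k t A (j * k + i) else 0) =
      (∑ s ∈ Finset.Ico i k, A s j) +
        (if j + 1 < t then ∑ s ∈ Finset.range i, A s (j + 1) else 0) := by
  have hlt : j * k + i < k * t := by
    calc j * k + i < (j + 1) * k := by nlinarith
    _ ≤ t * k := Nat.mul_le_mul_right _ hj
    _ = k * t := mul_comm _ _
  rw [if_pos hlt]
  unfold phiMap
  rw [idx_mod i j hi, idx_div i j hi]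

def phiT (k t : ℕ) (A : ℕ → ℕ → ℤ) : ℕ → ℤ := fun m =>
  if m < k * t then phiMap k t A m else 0

lemma phiT_val (k t : ℕ) (A : ℕ → ℕ → ℤ) {i j : ℕ} (hi : i < k) (hj : j < t) :
    phiT k t A (j * k + i) =
      (∑ s ∈ Finset.Ico i k, A s j) +
        (if j + 1 < t then ∑ s ∈ Finset.range i, A s (j + 1) else 0) :=
  phi_val k t A hi hj

lemma phi_diff (k t : ℕ) (A : ℕ → ℕ → ℤ)
    (hA : ∀ i j, k ≤ i ∨ t ≤ j → A i j = 0) {i j : ℕ} (hi : i < k) (hj : j < t) :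
    phiT k t A (j * k + i) - phiT k t A (j * k + i + 1) = A i j - A i (j + 1) := by
  rcases Nat.lt_or_ge (i + 1) k with hik | hik
  · -- stay in same column
    have e1 := phiT_val k t A hi hj
    have e2 := phiT_val k t A hik hj
    rw [show j * k + i + 1 = j * k + (i + 1) by ring] at *
    rw [e1, e2]
    rw [Finset.sum_eq_sum_Ico_succ_bot hi, Finset.sum_range_succ]
    rcases Nat.lt_or_ge (j + 1) t with hjt | hjt
    · rw [if_pos hjt, if_pos hjt]; ring
    · rw [if_neg (by omega), if_neg (by omega), hA i (j + 1) (Or.inr hjt)]; ring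
  · -- i = k - 1, move to next column
    have hik' : i + 1 = k := by omega
    have hnext : j * k + i + 1 = (j + 1) * k + 0 := by rw [← hik']; ring
    rw [hnext, phiT_val k t A hi hj]
    have hIco : Finset.Ico i k = {i} := by rw [← hik']; simp
    rcases Nat.lt_or_ge (j + 1) t with hjt | hjt
    · rw [phiT_val k t A (by omega : 0 < k) hjt]
      have hIco0 : Finset.Ico 0 k = Finset.range k := by
        rw [Finset.range_eq_Ico]
      have hsplit : ∑ s ∈ Finset.range k, A s (j + 1) =
          ∑ s ∈ Finset.range i, A s (j + 1) + A i (j + 1) := by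
        rw [← hik', Finset.sum_range_succ]
      rw [hIco, hIco0, hsplit, if_pos hjt, Finset.sum_singleton]
      rcases Nat.lt_or_ge (j + 2) t with hjt2 | hjt2
      · rw [if_pos hjt2]
        simp only [Finset.range_zero, Finset.sum_empty]
        ring
      · rw [if_neg (by omega)]; ring
    · -- j + 1 = t : next entry is out of range, and A i (j+1) = 0
      have hjt' : j + 1 = t := by omega
      have hout : ¬ ((j + 1) * k + 0 < k * t) := by
        rw [hjt', add_zero, mul_comm k t]
        exact lt_irrefl _
      have h0 : phiT k t A ((j + 1) * k + 0) = 0 := if_neg hout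
      rw [h0, if_neg (by omega), hA i (j + 1) (Or.inr (by omega)), hIco,
        Finset.sum_singleton]
      ring

lemma psi_phi (k t : ℕ) (A : ℕ → ℕ → ℤ)
    (hA : ∀ i j, k ≤ i ∨ t ≤ j → A i j = 0) (i j : ℕ) :
    psiMap k t (phiT k t A) i j = A i j := by
  unfold psiMap
  by_cases h : i < k ∧ j < t
  · rw [if_pos h]
    have step : ∀ j' ∈ Finset.Ico j t,
        phiT k t A (j' * k + i) - phiT k t A (j' * k + i + 1) = A i j' - A i (j' + 1) := by
      intro j' hj'
      exact phi_diff k t A hA h.1 (Finset.mem_Ico.mp hj').2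
    rw [Finset.sum_congr rfl step, telescopeIco (fun j' => A i j') h.2.le]
    rw [hA i t (Or.inr le_rfl)]
    ring
  · rw [if_neg h]
    rcases Nat.lt_or_ge i k with hi | hi
    · exact (hA i j (Or.inr (by omega))).symm
    · exact (hA i j (Or.inl hi)).symm

lemma phi_psi (k t : ℕ) (hk : 0 < k) (l : ℕ → ℤ)
    (hl : ∀ m, k * t ≤ m → l m = 0) (m : ℕ) :
    phiT k t (psiMap k t l) m = l m := by
  rcases Nat.lt_or_ge m (k * t) with hm | hm
  · set i := m % k with hidef
    set j := m / k with hjdef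
    have hi : i < k := Nat.mod_lt _ hk
    have hj : j < t := by
      rw [hjdef]
      exact Nat.div_lt_of_lt_mul hm
    have hmeq : m = j * k + i := by
      rw [hidef, hjdef, mul_comm]
      exact (Nat.div_add_mod m k).symm
    rw [hmeq, phiT_val k t (psiMap k t l) hi hj]
    -- first sum
    have S1 : ∑ s ∈ Finset.Ico i k, psiMap k t l s j
        = ∑ j' ∈ Finset.Ico j t, (l (j' * k + i) - l (j' * k + k)) := by
      have e : ∀ s ∈ Finset.Ico i k, psiMap k t l s j
          = ∑ j' ∈ Finset.Ico j t, (l (j' * k + s) - l (j' * k + s + 1)) := by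
        intro s hs
        have hs' := Finset.mem_Ico.mp hs
        unfold psiMap
        rw [if_pos ⟨hs'.2, hj⟩]
      rw [Finset.sum_congr rfl e, Finset.sum_comm]
      apply Finset.sum_congr rfl
      intro j' _
      have := telescopeIco (fun s => l (j' * k + s)) hi.le
      simp only [← add_assoc] at this
      exact this
    -- second sum
    have S2 : ∀ (j₀ : ℕ), j₀ < t → ∑ s ∈ Finset.range i, psiMap k t l s j₀
        = ∑ j' ∈ Finset.Ico j₀ t, (l (j' * k) - l (j' * k + i)) := by
      intro j₀ hj₀
      have e : ∀ s ∈ Finset.range i, psiMap k t l s j₀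
          = ∑ j' ∈ Finset.Ico j₀ t, (l (j' * k + s) - l (j' * k + s + 1)) := by
        intro s hs
        have hs' := Finset.mem_range.mp hs
        unfold psiMap
        rw [if_pos ⟨by omega, hj₀⟩]
      rw [Finset.sum_congr rfl e, Finset.range_eq_Ico, Finset.sum_comm]
      apply Finset.sum_congr rfl
      intro j' _
      have := telescopeIco (fun s => l (j' * k + s)) (Nat.zero_le i)
      simp only [← add_assoc, add_zero] at this
      exact this
    rw [S1]
    have hifsum : (if j + 1 < t then ∑ s ∈ Finset.range i, psiMap k t l s (j + 1) else 0)
        = ∑ j' ∈ Finset.Ico (j + 1) t, (l (j' * k) - l (j' * k + i)) := by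
      rcases Nat.lt_or_ge (j + 1) t with hjt | hjt
      · rw [if_pos hjt, S2 (j + 1) hjt]
      · rw [if_neg (by omega), Finset.Ico_eq_empty (by omega), Finset.sum_empty]
    rw [hifsum]
    -- now pure sum manipulation
    rw [Finset.sum_sub_distrib, Finset.sum_sub_distrib,
      Finset.sum_eq_sum_Ico_succ_bot hj (fun j' => l (j' * k + i))]
    have shift : ∑ j' ∈ Finset.Ico j t, l (j' * k + k)
        = ∑ j' ∈ Finset.Ico (j + 1) t, l (j' * k) := by
      have e : ∀ j' ∈ Finset.Ico j t, l (j' * k + k) = (fun x => l (x * k)) (j' + 1) := by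
        intro j' _
        simp [add_mul]
      rw [Finset.sum_congr rfl e, shiftIco (fun x => l (x * k)) j t,
        Finset.sum_Ico_succ_top (by omega : j + 1 ≤ t), hl (t * k) (le_of_eq (mul_comm k t)), add_zero]
    rw [shift]
    ring
  · have h1 : phiT k t (psiMap k t l) m = 0 := if_neg (by omega)
    rw [h1, hl m hm]

lemma phiT_col (k t : ℕ) (hk : 0 < k) (A : ℕ → ℕ → ℤ) {j : ℕ} (hj : j < t) :
    phiT k t A (j * k) = ∑ s ∈ Finset.range k, A s j := by
  have h := phiT_val k t A hk hj
  simp only [Finset.range_zero, Finset.sum_empty, ite_self, add_zero,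
    ← Finset.range_eq_Ico] at h
  exact h

/-- `Φ` is a bijection from `k × t` integer matrices with entry sum `n` onto integer
sequences of length `k * t` whose entries at positions `1, k+1, …, (t-1)k+1`
(0-indexed `0, k, …, (t-1)k`) sum to `n`. Matrices and sequences are represented as
functions vanishing outside the relevant index ranges. -/
theorem phiMap_bijOn (k t : ℕ) (hk : 1 ≤ k) (ht : 1 ≤ t) (n : ℤ) :
    Set.BijOn (fun A m => if m < k * t then phiMap k t A m else 0)
      {A : ℕ → ℕ → ℤ | (∀ i j, k ≤ i ∨ t ≤ j → A i j = 0) ∧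
        ∑ i ∈ Finset.range k, ∑ j ∈ Finset.range t, A i j = n}
      {l : ℕ → ℤ | (∀ m, k * t ≤ m → l m = 0) ∧
        ∑ j ∈ Finset.range t, l (j * k) = n} := by
  have hk' : 0 < k := hk
  have hF : (fun (A : ℕ → ℕ → ℤ) (m : ℕ) => if m < k * t then phiMap k t A m else 0)
      = phiT k t := rfl
  rw [hF]
  refine ⟨?_, ?_, ?_⟩
  · -- MapsTo
    rintro A ⟨hA0, hAsum⟩
    refine ⟨fun m hm => if_neg (by omega), ?_⟩
    have e : ∀ j ∈ Finset.range t, phiT k t A (j * k) = ∑ s ∈ Finset.range k, A s j :=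
      fun j hj => phiT_col k t hk' A (Finset.mem_range.mp hj)
    rw [Finset.sum_congr rfl e, Finset.sum_comm]
    exact hAsum
  · -- InjOn
    rintro A ⟨hA0, _⟩ B ⟨hB0, _⟩ hAB
    funext i j
    calc A i j = psiMap k t (phiT k t A) i j := (psi_phi k t A hA0 i j).symm
    _ = psiMap k t (phiT k t B) i j := by rw [hAB]
    _ = B i j := psi_phi k t B hB0 i j
  · -- SurjOn
    rintro l ⟨hl0, hlsum⟩
    refine ⟨psiMap k t l, ⟨?_, ?_⟩, ?_⟩
    · intro i j hij
      unfold psiMap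
      rw [if_neg (by omega)]
    · have key : ∀ j ∈ Finset.range t, l (j * k) = ∑ s ∈ Finset.range k, psiMap k t l s j := by
        intro j hj
        rw [← phi_psi k t hk' l hl0 (j * k), phiT_col k t hk' (psiMap k t l)
          (Finset.mem_range.mp hj)]
      rw [Finset.sum_congr rfl key, Finset.sum_comm] at hlsum
      exact hlsum
    · funext m
      exact phi_psi k t hk' l hl0 m
end

section
/- Let A be a k×t nonnegative integer matrix and Φ(A) the sequence of length kt defined by λ_{(j−1)k+i} = Σ_{s=i}^k a_{s,j} + Σ_{s=1}^{i−1} a_{s,j+1} (with the convention that the column j+1 terms are absent when j = t, and for i = 1 the formula reads Σ_{s=1}^k a_{s,j}). Then Φ(A) is weakly decreasing if and only if every row of A is weakly decreasing. -/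
/-- The map `Φ` of Li–Yee (0-indexed, nonnegative entries): a `k × t` matrix `A` of
natural numbers is sent to the sequence of length `k * t` whose entry at 0-indexed
position `m = j * k + i` (`i < k`, `j < t`) is
`Σ_{s=i}^{k-1} A s j + Σ_{s=0}^{i-1} A s (j+1)`, the second sum being absent when
`j = t - 1`. -/
def phiMapN (k t : ℕ) (A : ℕ → ℕ → ℕ) : ℕ → ℕ := fun m =>
  (∑ s ∈ Finset.Ico (m % k) k, A s (m / k)) +
    (if m / k + 1 < t then ∑ s ∈ Finset.range (m % k), A s (m / k + 1) else 0)

lemma phi_eval (k t : ℕ) (hk : 1 ≤ k) (A : ℕ → ℕ → ℕ) (i j : ℕ) (hi : i < k) :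
    phiMapN k t A (j * k + i) =
      (∑ s ∈ Finset.Ico i k, A s j) +
        (if j + 1 < t then ∑ s ∈ Finset.range i, A s (j + 1) else 0) := by
  have h1 : (j * k + i) % k = i := by
    rw [add_comm, Nat.add_mul_mod_self_right, Nat.mod_eq_of_lt hi]
  have h2 : (j * k + i) / k = j := by
    rw [mul_comm, Nat.mul_add_div hk, Nat.div_eq_of_lt hi, add_zero]
  simp only [phiMapN, h1, h2]

/-- For a nonnegative `k × t` matrix `A`, the sequence `Φ(A)` is weakly decreasing if
and only if every row of `A` is weakly decreasing. -/
theorem phiMap_monotone_iff (k t : ℕ) (hk : 1 ≤ k) (ht : 1 ≤ t) (A : ℕ → ℕ → ℕ) :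
    (∀ m, m + 1 < k * t → phiMapN k t A (m + 1) ≤ phiMapN k t A m) ↔
      (∀ i < k, ∀ j, j + 1 < t → A i (j + 1) ≤ A i j) := by
  constructor
  · intro h i hi j hj
    have hm : j * k + i + 1 < k * t := by
      have h1 : j * k + i + 1 ≤ (j + 1) * k := by nlinarith
      have h2 : (j + 1) * k < t * k :=
        Nat.mul_lt_mul_of_lt_of_le hj le_rfl hk
      calc j * k + i + 1 ≤ (j + 1) * k := h1
        _ < t * k := h2
        _ = k * t := mul_comm t k
    have key := h (j * k + i) hm
    by_cases hik : i + 1 < k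
    · rw [phi_eval k t hk A i j hi,
        show j * k + i + 1 = j * k + (i + 1) from rfl,
        phi_eval k t hk A (i + 1) j hik, if_pos hj, if_pos hj,
        Finset.sum_range_succ,
        Finset.sum_eq_sum_Ico_succ_bot hi] at key
      linarith
    · have hik' : i + 1 = k := by omega
      have hm1 : j * k + i + 1 = (j + 1) * k + 0 := by
        rw [add_mul, one_mul]; omega
      rw [phi_eval k t hk A i j hi, hm1, phi_eval k t hk A 0 (j + 1) hk,
        if_pos hj] at key
      simp only [Finset.sum_range_zero, ite_self, add_zero] at key
      have e1 : (∑ s ∈ Finset.Ico 0 k, A s (j + 1)) =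
          (∑ s ∈ Finset.range i, A s (j + 1)) + A i (j + 1) := by
        rw [← Finset.range_eq_Ico, ← hik', Finset.sum_range_succ]
      have e2 : (∑ s ∈ Finset.Ico i k, A s j) = A i j := by
        rw [← hik', Finset.sum_Ico_eq_sum_range]; simp
      rw [e1, e2] at key
      linarith
  · intro h m hm
    set i := m % k with hidef
    set j := m / k with hjdef
    have hi : i < k := Nat.mod_lt _ hk
    have hme : m = j * k + i := by rw [mul_comm]; exact (Nat.div_add_mod m k).symm
    by_cases hik : i + 1 < k
    · rw [hme, show j * k + i + 1 = j * k + (i + 1) from rfl,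
        phi_eval k t hk A i j hi, phi_eval k t hk A (i + 1) j hik]
      by_cases ht' : j + 1 < t
      · rw [if_pos ht', if_pos ht', Finset.sum_range_succ,
          Finset.sum_eq_sum_Ico_succ_bot hi]
        have := h i hi j ht'
        linarith
      · rw [if_neg ht', if_neg ht', add_zero, add_zero,
          Finset.sum_eq_sum_Ico_succ_bot hi]
        exact Nat.le_add_left _ _
    · have hik' : i + 1 = k := by omega
      have hm1 : j * k + i + 1 = (j + 1) * k + 0 := by
        rw [add_mul, one_mul]; omega
      have hj1 : j + 1 < t := by
        have hlt : (j + 1) * k < t * k := by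
          calc (j + 1) * k = j * k + k := by ring
            _ = j * k + (i + 1) := by rw [hik']
            _ = m + 1 := by omega
            _ < k * t := hm
            _ = t * k := mul_comm k t
        exact lt_of_mul_lt_mul_right hlt (Nat.zero_le k)
      rw [hme, hm1, phi_eval k t hk A 0 (j + 1) hk,
        phi_eval k t hk A i j hi, if_pos hj1]
      simp only [Finset.sum_range_zero, ite_self, add_zero]
      have e1 : (∑ s ∈ Finset.Ico 0 k, A s (j + 1)) =
          (∑ s ∈ Finset.range i, A s (j + 1)) + A i (j + 1) := by
        rw [← Finset.range_eq_Ico, ← hik', Finset.sum_range_succ]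
      have e2 : (∑ s ∈ Finset.Ico i k, A s j) = A i j := by
        rw [← hik', Finset.sum_Ico_eq_sum_range]; simp
      rw [e1, e2]
      have := h i hi j hj1
      linarith
end

section
/- For every k ≥ 1, the generating function for the number d_k(n) of k-elongated partition diamonds of n satisfies Σ_{n≥0} d_k(n) qⁿ = (q²;q²)_∞^k / (q;q)_∞^{3k+1}. -/
/-- A `k`-elongated partition diamond, encoded 1-indexed as a finitely supported function
`π : ℕ →₀ ℕ` (so trailing zero building blocks are identified).  For each building block
`i ≥ 0` (with `b = i(2k+1)`), the chain condition
`π_{b+1} ⪰ (π_{b+2}, π_{b+3}) ⪰ ⋯ ⪰ (π_{b+2k}, π_{b+2k+1}) ⪰ π_{b+2k+2}` holds, where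
`(a₁,…,aₘ) ⪰ (b₁,…,bₙ)` means `min aᵢ ≥ max bⱼ`. -/
def IsDiamond (k : ℕ) (π : ℕ →₀ ℕ) : Prop :=
  π 0 = 0 ∧
  ∀ i : ℕ,
    (π (i * (2 * k + 1) + 1) ≥
      max (π (i * (2 * k + 1) + 2)) (π (i * (2 * k + 1) + 3))) ∧
    (∀ j, 1 ≤ j → j < k →
      min (π (i * (2 * k + 1) + 2 * j)) (π (i * (2 * k + 1) + 2 * j + 1)) ≥
        max (π (i * (2 * k + 1) + 2 * j + 2)) (π (i * (2 * k + 1) + 2 * j + 3))) ∧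
    min (π (i * (2 * k + 1) + 2 * k)) (π (i * (2 * k + 1) + 2 * k + 1)) ≥
      π ((i + 1) * (2 * k + 1) + 1)

/-- The weight of a diamond: the sum of its entries at positions
`1, 2k+2, 4k+3, …`, i.e. positions `≡ 1 (mod 2k+1)`. -/
def diamondWeight (k : ℕ) (π : ℕ →₀ ℕ) : ℕ :=
  ∑ m ∈ π.support, if 1 ≤ m ∧ (m - 1) % (2 * k + 1) = 0 then π m else 0

/-- The number of `k`-elongated partition diamonds of `n`. -/
noncomputable def diamondCount (k n : ℕ) : ℕ :=
  Nat.card {π : ℕ →₀ ℕ // IsDiamond k π ∧ diamondWeight k π = n}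

namespace DiamondAux

variable {k : ℕ} {π : ℕ →₀ ℕ}

/-- every pair in block `i` has max bounded by the block anchor -/
lemma pair_le_anchor (hk : 1 ≤ k) (hd : IsDiamond k π) (i : ℕ) :
    ∀ j, 1 ≤ j → j ≤ k →
      max (π (i * (2 * k + 1) + 2 * j)) (π (i * (2 * k + 1) + 2 * j + 1)) ≤
        π (i * (2 * k + 1) + 1) := by
  intro j
  induction j with
  | zero => omega
  | succ j ih =>
    intro _ hjk
    rcases Nat.eq_or_lt_of_le (Nat.one_le_iff_ne_zero.mpr (Nat.succ_ne_zero j)) with h1 | h1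
    · have := (hd.2 i).1
      have h3 : i * (2 * k + 1) + 2 * (j+1) + 1 = i * (2 * k + 1) + 3 := by omega
      have h2 : i * (2 * k + 1) + 2 * (j+1) = i * (2 * k + 1) + 2 := by omega
      rw [h3, h2]
      exact this
    · have hj1 : 1 ≤ j := by omega
      have hjk' : j < k := by omega
      have hmid := (hd.2 i).2.1 j hj1 hjk'
      have hih := ih hj1 (by omega)
      have hmm : min (π (i * (2 * k + 1) + 2 * j)) (π (i * (2 * k + 1) + 2 * j + 1)) ≤
          π (i * (2 * k + 1) + 1) := le_trans (min_le_max) hih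
      have h3 : i * (2 * k + 1) + 2 * (j+1) + 1 = i * (2 * k + 1) + 2 * j + 3 := by omega
      have h2 : i * (2 * k + 1) + 2 * (j+1) = i * (2 * k + 1) + 2 * j + 2 := by omega
      rw [h3, h2]
      exact le_trans hmid hmm

/-- every pair in block `i` has min bounded below by the next anchor -/
lemma next_anchor_le_pair (hd : IsDiamond k π) (i : ℕ) :
    ∀ j, 1 ≤ j → j ≤ k →
      π ((i + 1) * (2 * k + 1) + 1) ≤
        min (π (i * (2 * k + 1) + 2 * j)) (π (i * (2 * k + 1) + 2 * j + 1)) := by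
  suffices h : ∀ d j, j + d = k → 1 ≤ j →
      π ((i + 1) * (2 * k + 1) + 1) ≤
        min (π (i * (2 * k + 1) + 2 * j)) (π (i * (2 * k + 1) + 2 * j + 1)) by
    intro j hj hjk
    exact h (k - j) j (by omega) hj
  intro d
  induction d with
  | zero =>
    intro j hjk hj
    have : j = k := by omega
    subst this
    exact (hd.2 i).2.2
  | succ d ih =>
    intro j hjk hj
    have hjk' : j < k := by omega
    have hmid := (hd.2 i).2.1 j hj hjk'
    have hih := ih (j+1) (by omega) (by omega)
    have h3 : i * (2 * k + 1) + 2 * (j+1) + 1 = i * (2 * k + 1) + 2 * j + 3 := by omega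
    have h2 : i * (2 * k + 1) + 2 * (j+1) = i * (2 * k + 1) + 2 * j + 2 := by omega
    rw [h3, h2] at hih
    exact le_trans (le_trans hih min_le_max) hmid

/-- every entry in block `i` (offsets 1..2k+1) is at most the anchor -/
lemma entry_le_anchor (hk : 1 ≤ k) (hd : IsDiamond k π) (i c : ℕ) (hc1 : 1 ≤ c)
    (hc2 : c ≤ 2 * k + 1) : π (i * (2 * k + 1) + c) ≤ π (i * (2 * k + 1) + 1) := by
  rcases Nat.eq_or_lt_of_le hc1 with h | h
  · rw [← h]
  · rcases Nat.even_or_odd c with ⟨j, hj⟩ | ⟨j, hj⟩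
    · have hj1 : 1 ≤ j := by omega
      have hjk : j ≤ k := by omega
      have hp := pair_le_anchor hk hd i j hj1 hjk
      rw [show i * (2 * k + 1) + c = i * (2 * k + 1) + 2 * j from by omega]
      exact le_trans (le_max_left _ _) hp
    · have hj1 : 1 ≤ j := by omega
      have hjk : j ≤ k := by omega
      have hp := pair_le_anchor hk hd i j hj1 hjk
      rw [show i * (2 * k + 1) + c = i * (2 * k + 1) + 2 * j + 1 from by omega]
      exact le_trans (le_max_right _ _) hp

/-- every entry in block `i` (offsets 1..2k+1) is at least the next anchor -/
lemma next_anchor_le_entry (hk : 1 ≤ k) (hd : IsDiamond k π) (i c : ℕ) (hc1 : 1 ≤ c)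
    (hc2 : c ≤ 2 * k + 1) :
    π ((i + 1) * (2 * k + 1) + 1) ≤ π (i * (2 * k + 1) + c) := by
  rcases Nat.eq_or_lt_of_le hc1 with h | h
  · rw [← h]
    have h1 := next_anchor_le_pair hd i 1 le_rfl hk
    have h2 := pair_le_anchor hk hd i 1 le_rfl hk
    exact le_trans h1 (le_trans (min_le_max) h2)
  · rcases Nat.even_or_odd c with ⟨j, hj⟩ | ⟨j, hj⟩
    · have hj1 : 1 ≤ j := by omega
      have hjk : j ≤ k := by omega
      have hp := next_anchor_le_pair hd i j hj1 hjk
      rw [show i * (2 * k + 1) + c = i * (2 * k + 1) + 2 * j from by omega]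
      exact le_trans hp (min_le_left _ _)
    · have hj1 : 1 ≤ j := by omega
      have hjk : j ≤ k := by omega
      have hp := next_anchor_le_pair hd i j hj1 hjk
      rw [show i * (2 * k + 1) + c = i * (2 * k + 1) + 2 * j + 1 from by omega]
      exact le_trans hp (min_le_right _ _)

/-- anchors are weakly decreasing -/
lemma anchor_mono (hk : 1 ≤ k) (hd : IsDiamond k π) {i i' : ℕ} (h : i ≤ i') :
    π (i' * (2 * k + 1) + 1) ≤ π (i * (2 * k + 1) + 1) := by
  induction i' with
  | zero => have : i = 0 := by omega
            subst this; exact le_rfl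
  | succ i' ih =>
    rcases Nat.eq_or_lt_of_le h with h1 | h1
    · rw [h1]
    · exact le_trans (next_anchor_le_entry hk hd i' 1 le_rfl (by omega)) (ih (by omega))

/-- if the anchor of block T vanishes, everything from position T*(2k+1)+1 on vanishes -/
lemma zero_from (hk : 1 ≤ k) (hd : IsDiamond k π) {T : ℕ}
    (hT : π (T * (2 * k + 1) + 1) = 0) {p : ℕ} (hp : T * (2 * k + 1) + 1 ≤ p) :
    π p = 0 := by
  set K := 2 * k + 1 with hK
  obtain ⟨i, r, hrK, hpir⟩ : ∃ i r, r < K ∧ p = i * K + (r + 1) := by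
    refine ⟨(p - 1) / K, (p - 1) % K, Nat.mod_lt _ (by omega), ?_⟩
    have h1 := Nat.div_add_mod (p - 1) K
    have h2 : K * ((p - 1) / K) = ((p - 1) / K) * K := Nat.mul_comm _ _
    omega
  have hiT : T ≤ i := by
    by_contra hcon
    push_neg at hcon
    have h1 : (i + 1) * K ≤ T * K := Nat.mul_le_mul_right K (by omega)
    have h2 : (i + 1) * K = i * K + K := by ring
    omega
  have h1 : π p ≤ π (i * K + 1) := by
    rw [hpir]
    exact entry_le_anchor hk hd i (r + 1) (by omega) (by omega)
  have h2 : π (i * K + 1) ≤ π (T * K + 1) := anchor_mono hk hd hiT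
  omega


/-- weight formula: if anchor T vanishes, weight is the sum of the first T anchors -/
lemma weight_eq (hk : 1 ≤ k) (hd : IsDiamond k π) {T : ℕ}
    (hT : π (T * (2 * k + 1) + 1) = 0) :
    diamondWeight k π = ∑ i ∈ Finset.range T, π (i * (2 * k + 1) + 1) := by
  have hsub : π.support.filter (fun m => 1 ≤ m ∧ (m - 1) % (2 * k + 1) = 0) ⊆
      (Finset.range T).image (fun i => i * (2 * k + 1) + 1) := by
    intro m hm
    rw [Finset.mem_filter] at hm
    obtain ⟨hsupp, hm1, hmod⟩ := hm
    obtain ⟨i, hi⟩ := Nat.dvd_of_mod_eq_zero hmod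
    have hcomm : (2 * k + 1) * i = i * (2 * k + 1) := Nat.mul_comm _ _
    have hmi : m = i * (2 * k + 1) + 1 := by omega
    have hiT : i < T := by
      by_contra hcon
      push_neg at hcon
      have h3 : T * (2 * k + 1) ≤ i * (2 * k + 1) := Nat.mul_le_mul_right _ hcon
      have h4 : π m = 0 := zero_from hk hd hT (by omega)
      rw [Finsupp.mem_support_iff] at hsupp
      exact hsupp h4
    rw [Finset.mem_image]
    exact ⟨i, Finset.mem_range.mpr hiT, hmi.symm⟩
  calc diamondWeight k π
      = ∑ m ∈ π.support.filter (fun m => 1 ≤ m ∧ (m - 1) % (2 * k + 1) = 0), π m := by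
        rw [Finset.sum_filter]; rfl
    _ = ∑ m ∈ (Finset.range T).image (fun i => i * (2 * k + 1) + 1), π m := by
        apply Finset.sum_subset hsub
        intro m hm hnm
        rw [Finset.mem_image] at hm
        obtain ⟨i, _, him⟩ := hm
        by_contra hne
        apply hnm
        rw [Finset.mem_filter]
        refine ⟨Finsupp.mem_support_iff.mpr hne, by omega, ?_⟩
        have : m - 1 = i * (2 * k + 1) := by omega
        rw [this, Nat.mul_mod_left]
    _ = ∑ i ∈ Finset.range T, π (i * (2 * k + 1) + 1) := by
        rw [Finset.sum_image]
        intro a _ b _ hab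
        have : 0 < 2 * k + 1 := by omega
        exact Nat.eq_of_mul_eq_mul_right this (by simp only at hab; omega)

/-- every entry of a diamond in `S t n` is at most `n` -/
lemma entry_le_n (hk : 1 ≤ k) (hd : IsDiamond k π) {t n : ℕ}
    (hw : diamondWeight k π = n) (hT : π (t * (2 * k + 1) + 1) = 0) (p : ℕ) :
    π p ≤ n := by
  rcases Nat.eq_zero_or_pos p with hp | hp
  · rw [hp, hd.1]; omega
  rcases Nat.lt_or_ge p (t * (2 * k + 1) + 1) with hpt | hpt
  · rcases Nat.eq_zero_or_pos t with rfl | ht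
    · simp only [Nat.zero_mul] at hpt; omega
    obtain ⟨i, r, hrK, hpir⟩ : ∃ i r, r < 2 * k + 1 ∧ p = i * (2 * k + 1) + (r + 1) := by
      refine ⟨(p - 1) / (2 * k + 1), (p - 1) % (2 * k + 1), Nat.mod_lt _ (by omega), ?_⟩
      have h1 := Nat.div_add_mod (p - 1) (2 * k + 1)
      have h2 : (2 * k + 1) * ((p - 1) / (2 * k + 1)) =
        ((p - 1) / (2 * k + 1)) * (2 * k + 1) := Nat.mul_comm _ _
      omega
    have h1 : π p ≤ π (i * (2 * k + 1) + 1) := by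
      rw [hpir]; exact entry_le_anchor hk hd i (r + 1) (by omega) (by omega)
    have h2 : π (i * (2 * k + 1) + 1) ≤ π (0 * (2 * k + 1) + 1) :=
      anchor_mono hk hd (Nat.zero_le i)
    have h3 : π (0 * (2 * k + 1) + 1) ≤ n := by
      rw [← hw, weight_eq hk hd hT]
      exact Finset.single_le_sum (f := fun i => π (i * (2 * k + 1) + 1))
        (fun i _ => Nat.zero_le _) (Finset.mem_range.mpr ht)
    omega
  · rw [zero_from hk hd hT hpt]; omega

/-- the set of diamonds of weight `n` with vanishing anchor `t` is finite -/
lemma S_finite (hk : 1 ≤ k) (t n : ℕ) :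
    Finite {π : ℕ →₀ ℕ // IsDiamond k π ∧ diamondWeight k π = n ∧
      π (t * (2 * k + 1) + 1) = 0} := by
  apply Finite.of_injective
    (f := fun π : {π : ℕ →₀ ℕ // IsDiamond k π ∧ diamondWeight k π = n ∧
      π (t * (2 * k + 1) + 1) = 0} =>
      (fun p : Fin (t * (2 * k + 1) + 1) => (⟨π.1 p, Nat.lt_succ_of_le
        (entry_le_n hk π.2.1 π.2.2.1 π.2.2.2 p)⟩ : Fin (n + 1))))
  intro π π' hpp
  ext p
  rcases Nat.lt_or_ge p (t * (2 * k + 1) + 1) with hp | hp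
  · have := congrFun hpp ⟨p, hp⟩
    simpa using this
  · rw [zero_from hk π.2.1 π.2.2.2 hp, zero_from hk π'.2.1 π'.2.2.2 hp]

lemma zero_mem : IsDiamond k 0 ∧ diamondWeight k 0 = 0 ∧
    (0 : ℕ →₀ ℕ) (0 * (2 * k + 1) + 1) = 0 := by
  refine ⟨⟨rfl, fun i => ⟨by simp, fun j _ _ => by simp, by simp⟩⟩, ?_, rfl⟩
  simp [diamondWeight]

lemma base_card (hk : 1 ≤ k) (n : ℕ) :
    Nat.card {π : ℕ →₀ ℕ // IsDiamond k π ∧ diamondWeight k π = n ∧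
      π (0 * (2 * k + 1) + 1) = 0} = if n = 0 then 1 else 0 := by
  have key : ∀ π : ℕ →₀ ℕ, IsDiamond k π → π (0 * (2 * k + 1) + 1) = 0 → π = 0 := by
    intro π hd h0
    ext p
    rcases Nat.eq_zero_or_pos p with hp | hp
    · rw [hp, hd.1]; rfl
    · rw [zero_from hk hd h0 (by omega)]; rfl
  split_ifs with hn
  · subst hn
    rw [Nat.card_eq_one_iff_unique]
    constructor
    · constructor
      intro a b
      ext p
      rw [key a.1 a.2.1 a.2.2.2, key b.1 b.2.1 b.2.2.2]
    · exact ⟨⟨0, zero_mem⟩⟩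
  · rw [Nat.card_eq_zero]
    left
    constructor
    intro π
    apply hn
    rw [← π.2.2.1, key π.1 π.2.1 π.2.2.2]
    simp [diamondWeight]


/-- number of chains of `j` descending pairs with top bound `m` -/
def f : ℕ → ℕ → ℕ
  | 0, _ => 1
  | j + 1, m => ∑ x ∈ Finset.range (m + 1), ∑ y ∈ Finset.range (m + 1), f j (min x y)

/-- chain condition for `k` pairs bounded above by `m` -/
def ChainCond (k m : ℕ) (c : Fin k → ℕ × ℕ) : Prop :=
  (∀ h : 0 < k, max (c ⟨0, h⟩).1 (c ⟨0, h⟩).2 ≤ m) ∧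
  ∀ j : ℕ, ∀ h : j + 1 < k, max (c ⟨j + 1, h⟩).1 (c ⟨j + 1, h⟩).2 ≤
    min (c ⟨j, by omega⟩).1 (c ⟨j, by omega⟩).2

lemma chain_bound {k m : ℕ} {c : Fin k → ℕ × ℕ} (hc : ChainCond k m c) :
    ∀ i : Fin k, (c i).1 ≤ m ∧ (c i).2 ≤ m := by
  intro ⟨i, hi⟩
  induction i with
  | zero =>
    have := hc.1 (by omega)
    omega
  | succ i ih =>
    have h1 := hc.2 i hi
    have h2 := ih (by omega)
    omega

lemma chain_finite (k m : ℕ) : Finite {c : Fin k → ℕ × ℕ // ChainCond k m c} := by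
  apply Finite.of_injective
    (f := fun c : {c : Fin k → ℕ × ℕ // ChainCond k m c} =>
      (fun i : Fin k => ((⟨(c.1 i).1, Nat.lt_succ_of_le (chain_bound c.2 i).1⟩ : Fin (m+1)),
        (⟨(c.1 i).2, Nat.lt_succ_of_le (chain_bound c.2 i).2⟩ : Fin (m+1)))))
  intro c c' h
  apply Subtype.ext
  funext i
  have := congrFun h i
  simp only [Prod.mk.injEq, Fin.mk.injEq] at this
  exact Prod.ext this.1 this.2

def ctail {j : ℕ} (c : Fin (j + 1) → ℕ × ℕ) : Fin j → ℕ × ℕ :=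
  fun i => c ⟨i.1 + 1, by omega⟩

def cprepend {j : ℕ} (p : ℕ × ℕ) (c : Fin j → ℕ × ℕ) : Fin (j + 1) → ℕ × ℕ :=
  fun i => if h : i.1 = 0 then p else c ⟨i.1 - 1, by omega⟩

lemma cprepend_zero {j : ℕ} (p : ℕ × ℕ) (c : Fin j → ℕ × ℕ) (h : 0 < j + 1) :
    cprepend p c ⟨0, h⟩ = p := rfl

lemma cprepend_succ {j : ℕ} (p : ℕ × ℕ) (c : Fin j → ℕ × ℕ) (i : ℕ) (h : i + 1 < j + 1) :
    cprepend p c ⟨i + 1, h⟩ = c ⟨i, by omega⟩ := rfl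

lemma ctail_chainCond {j m : ℕ} {c : Fin (j + 1) → ℕ × ℕ} (hc : ChainCond (j + 1) m c) :
    ChainCond j (min (c ⟨0, by omega⟩).1 (c ⟨0, by omega⟩).2) (ctail c) := by
  constructor
  · intro h
    exact hc.2 0 (by omega)
  · intro i h
    exact hc.2 (i + 1) (by omega)

lemma cprepend_chainCond {j m : ℕ} {p : ℕ × ℕ} {c : Fin j → ℕ × ℕ}
    (hp1 : p.1 ≤ m) (hp2 : p.2 ≤ m) (hc : ChainCond j (min p.1 p.2) c) :
    ChainCond (j + 1) m (cprepend p c) := by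
  constructor
  · intro h
    rw [cprepend_zero]
    simp only [max_le_iff]
    exact ⟨hp1, hp2⟩
  · intro i h
    rw [cprepend_succ]
    rcases Nat.eq_zero_or_pos i with rfl | hi
    · rw [cprepend_zero]
      have h1 := hc.1 (by omega)
      refine le_trans h1 ?_
      simp only [le_min_iff, min_le_iff]
      omega
    · obtain ⟨i', rfl⟩ : ∃ i', i = i' + 1 := ⟨i - 1, by omega⟩
      rw [cprepend_succ]
      exact hc.2 i' (by omega)

/-- peel off the first pair of a chain -/
def chainEquiv (j m : ℕ) :
    {c : Fin (j + 1) → ℕ × ℕ // ChainCond (j + 1) m c} ≃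
      Σ p : Fin (m + 1) × Fin (m + 1),
        {c : Fin j → ℕ × ℕ // ChainCond j (min p.1.1 p.2.1) c} where
  toFun c := ⟨(⟨(c.1 ⟨0, by omega⟩).1, Nat.lt_succ_of_le (chain_bound c.2 _).1⟩,
      ⟨(c.1 ⟨0, by omega⟩).2, Nat.lt_succ_of_le (chain_bound c.2 _).2⟩),
    ⟨ctail c.1, ctail_chainCond c.2⟩⟩
  invFun pc := ⟨cprepend (pc.1.1.1, pc.1.2.1) pc.2.1,
    cprepend_chainCond (Nat.lt_succ_iff.mp pc.1.1.2) (Nat.lt_succ_iff.mp pc.1.2.2) pc.2.2⟩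
  left_inv c := by
    apply Subtype.ext
    funext i
    dsimp only
    rcases Nat.eq_zero_or_pos i.1 with h0 | h0
    · have : i = ⟨0, by omega⟩ := Fin.ext h0
      rw [this, cprepend_zero]
    · obtain ⟨i', hi'⟩ : ∃ i', i.1 = i' + 1 := ⟨i.1 - 1, by omega⟩
      have : i = ⟨i' + 1, by omega⟩ := Fin.ext hi'
      rw [this, cprepend_succ]
      rfl
  right_inv pc := rfl

lemma chain_card (j m : ℕ) :
    Nat.card {c : Fin j → ℕ × ℕ // ChainCond j m c} = f j m := by
  induction j generalizing m with
  | zero =>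
    have hu : ∀ c c' : {c : Fin 0 → ℕ × ℕ // ChainCond 0 m c}, c = c' := by
      intro c c'
      exact Subtype.ext (funext fun i => i.elim0)
    have hne : Nonempty {c : Fin 0 → ℕ × ℕ // ChainCond 0 m c} :=
      ⟨⟨fun i => i.elim0, ⟨fun h => by omega, fun j h => by omega⟩⟩⟩
    rw [show f 0 m = 1 from rfl, Nat.card_eq_one_iff_unique]
    exact ⟨⟨hu⟩, hne⟩
  | succ j ih =>
    letI : ∀ p : Fin (m + 1) × Fin (m + 1),
        Fintype {c : Fin j → ℕ × ℕ // ChainCond j (min p.1.1 p.2.1) c} :=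
      fun p => @Fintype.ofFinite _ (chain_finite _ _)
    calc Nat.card {c : Fin (j + 1) → ℕ × ℕ // ChainCond (j + 1) m c}
        = Nat.card (Σ p : Fin (m + 1) × Fin (m + 1),
            {c : Fin j → ℕ × ℕ // ChainCond j (min p.1.1 p.2.1) c}) :=
          Nat.card_congr (chainEquiv j m)
      _ = ∑ p : Fin (m + 1) × Fin (m + 1), f j (min p.1.1 p.2.1) := by
          rw [Nat.card_eq_fintype_card, Fintype.card_sigma]
          apply Finset.sum_congr rfl
          intro p _
          rw [← ih (min p.1.1 p.2.1), Nat.card_eq_fintype_card]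
      _ = ∑ x ∈ Finset.range (m + 1), ∑ y ∈ Finset.range (m + 1), f j (min x y) := by
          rw [Fintype.sum_prod_type]
          rw [Fin.sum_univ_eq_sum_range fun x => ∑ y : Fin (m + 1), f j (min x y.1)]
          apply Finset.sum_congr rfl
          intro x _
          rw [Fin.sum_univ_eq_sum_range fun y => f j (min x y)]
      _ = f (j + 1) m := rfl


/-- remove `m` from positions `1..t(2k+1)+1`, kill everything above -/
noncomputable def peel (k t m : ℕ) (π : ℕ →₀ ℕ) : ℕ →₀ ℕ :=
  Finsupp.onFinset π.support
    (fun p => if 1 ≤ p ∧ p ≤ t * (2 * k + 1) + 1 then π p - m else 0)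
    (by
      intro p hp
      rw [Finsupp.mem_support_iff]
      intro h0
      apply hp
      show (if 1 ≤ p ∧ p ≤ t * (2 * k + 1) + 1 then π p - m else 0) = 0
      rw [h0]
      simp)

lemma peel_apply (k t m : ℕ) (π : ℕ →₀ ℕ) (p : ℕ) :
    peel k t m π p = if 1 ≤ p ∧ p ≤ t * (2 * k + 1) + 1 then π p - m else 0 := rfl

/-- the chain sitting in block `t` -/
def blockChain (k t : ℕ) (π : ℕ →₀ ℕ) : Fin k → ℕ × ℕ :=
  fun j => (π (t * (2 * k + 1) + 2 * j.1 + 2), π (t * (2 * k + 1) + 2 * j.1 + 3))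

/-- add `m` to positions `1..t(2k+1)+1`, install a chain in block `t` -/
noncomputable def glue (k t m : ℕ) (c : Fin k → ℕ × ℕ) (π' : ℕ →₀ ℕ) : ℕ →₀ ℕ :=
  Finsupp.onFinset (π'.support ∪ Finset.range ((t + 1) * (2 * k + 1) + 1))
    (fun p =>
      if 1 ≤ p ∧ p ≤ t * (2 * k + 1) + 1 then π' p + m
      else if h2 : t * (2 * k + 1) + 2 ≤ p ∧ p ≤ t * (2 * k + 1) + 2 * k + 1 then
        (if hr : (p - (t * (2 * k + 1) + 2)) / 2 < k then
          (if (p - (t * (2 * k + 1) + 2)) % 2 = 0 then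
            (c ⟨(p - (t * (2 * k + 1) + 2)) / 2, hr⟩).1
          else (c ⟨(p - (t * (2 * k + 1) + 2)) / 2, hr⟩).2)
        else 0)
      else 0)
    (by
      intro p hp
      simp only [Finset.mem_union, Finset.mem_range, Finsupp.mem_support_iff]
      right
      by_contra hcon
      push_neg at hcon
      apply hp
      show (if 1 ≤ p ∧ p ≤ t * (2 * k + 1) + 1 then π' p + m
        else if h2 : t * (2 * k + 1) + 2 ≤ p ∧ p ≤ t * (2 * k + 1) + 2 * k + 1 then
          (if hr : (p - (t * (2 * k + 1) + 2)) / 2 < k then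
            (if (p - (t * (2 * k + 1) + 2)) % 2 = 0 then
              (c ⟨(p - (t * (2 * k + 1) + 2)) / 2, hr⟩).1
            else (c ⟨(p - (t * (2 * k + 1) + 2)) / 2, hr⟩).2)
          else 0)
        else 0) = 0
      have h3 : (t + 1) * (2 * k + 1) = t * (2 * k + 1) + (2 * k + 1) := by ring
      rw [if_neg (by omega), dif_neg (by omega)])

lemma glue_apply (k t m : ℕ) (c : Fin k → ℕ × ℕ) (π' : ℕ →₀ ℕ) (p : ℕ) :
    glue k t m c π' p =
      if 1 ≤ p ∧ p ≤ t * (2 * k + 1) + 1 then π' p + m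
      else if h2 : t * (2 * k + 1) + 2 ≤ p ∧ p ≤ t * (2 * k + 1) + 2 * k + 1 then
        (if hr : (p - (t * (2 * k + 1) + 2)) / 2 < k then
          (if (p - (t * (2 * k + 1) + 2)) % 2 = 0 then
            (c ⟨(p - (t * (2 * k + 1) + 2)) / 2, hr⟩).1
          else (c ⟨(p - (t * (2 * k + 1) + 2)) / 2, hr⟩).2)
        else 0)
      else 0 := rfl

lemma glue_low (k t m : ℕ) (c : Fin k → ℕ × ℕ) (π' : ℕ →₀ ℕ) (p : ℕ)
    (h1 : 1 ≤ p) (h2 : p ≤ t * (2 * k + 1) + 1) :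
    glue k t m c π' p = π' p + m := by
  rw [glue_apply, if_pos ⟨h1, h2⟩]

lemma glue_fst (k t m : ℕ) (c : Fin k → ℕ × ℕ) (π' : ℕ →₀ ℕ) (j : ℕ) (hj : j < k) :
    glue k t m c π' (t * (2 * k + 1) + 2 * j + 2) = (c ⟨j, hj⟩).1 := by
  rw [glue_apply, if_neg (by omega), dif_pos (by omega), dif_pos (by omega),
    if_pos (by omega)]
  exact congrArg (fun i => (c i).1) (Fin.ext (by
    show (t * (2 * k + 1) + 2 * j + 2 - (t * (2 * k + 1) + 2)) / 2 = j
    omega))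

lemma glue_snd (k t m : ℕ) (c : Fin k → ℕ × ℕ) (π' : ℕ →₀ ℕ) (j : ℕ) (hj : j < k) :
    glue k t m c π' (t * (2 * k + 1) + 2 * j + 3) = (c ⟨j, hj⟩).2 := by
  rw [glue_apply, if_neg (by omega), dif_pos (by omega), dif_pos (by omega),
    if_neg (by omega)]
  exact congrArg (fun i => (c i).2) (Fin.ext (by
    show (t * (2 * k + 1) + 2 * j + 3 - (t * (2 * k + 1) + 2)) / 2 = j
    omega))

lemma glue_zero (k t m : ℕ) (c : Fin k → ℕ × ℕ) (π' : ℕ →₀ ℕ) :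
    glue k t m c π' 0 = 0 := by
  rw [glue_apply, if_neg (by omega), dif_neg (by omega)]

lemma glue_high (k t m : ℕ) (c : Fin k → ℕ × ℕ) (π' : ℕ →₀ ℕ) (p : ℕ)
    (hp : (t + 1) * (2 * k + 1) + 1 ≤ p) :
    glue k t m c π' p = 0 := by
  have h3 : (t + 1) * (2 * k + 1) = t * (2 * k + 1) + (2 * k + 1) := by ring
  rw [glue_apply, if_neg (by omega), dif_neg (by omega)]


lemma glue_isDiamond {k t m : ℕ} {c : Fin k → ℕ × ℕ} {π' : ℕ →₀ ℕ} (hk : 1 ≤ k)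
    (hc : ChainCond k m c) (hd' : IsDiamond k π') (h0 : π' (t * (2 * k + 1) + 1) = 0) :
    IsDiamond k (glue k t m c π') := by
  have hring : ∀ a : ℕ, (a + 1) * (2 * k + 1) = a * (2 * k + 1) + (2 * k + 1) := by
    intro a; ring
  constructor
  · exact glue_zero k t m c π'
  intro i
  rw [hring i]
  rcases lt_trichotomy i t with hit | rfl | hit
  · -- block fully below the glued chain
    have hmul : (i + 1) * (2 * k + 1) ≤ t * (2 * k + 1) := Nat.mul_le_mul_right _ (by omega)
    rw [hring i] at hmul
    have hlow : ∀ p, 1 ≤ p → p ≤ i * (2 * k + 1) + (2 * k + 1) + 1 →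
        glue k t m c π' p = π' p + m := by
      intro p h1 h2
      exact glue_low k t m c π' p h1 (by omega)
    refine ⟨?_, ?_, ?_⟩
    · rw [hlow _ (by omega) (by omega), hlow _ (by omega) (by omega),
        hlow _ (by omega) (by omega)]
      have h := (hd'.2 i).1
      simp only [ge_iff_le, max_le_iff] at h ⊢
      omega
    · intro j hj1 hjk
      rw [hlow _ (by omega) (by omega), hlow _ (by omega) (by omega),
        hlow _ (by omega) (by omega), hlow _ (by omega) (by omega)]
      have h := (hd'.2 i).2.1 j hj1 hjk
      simp only [ge_iff_le, max_le_iff, le_min_iff] at h ⊢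
      omega
    · have h := (hd'.2 i).2.2
      rw [hring i] at h
      rw [hlow _ (by omega) (by omega), hlow _ (by omega) (by omega),
        hlow _ (by omega) (by omega)]
      simp only [ge_iff_le, le_min_iff] at h ⊢
      omega
  · -- block t = i : the glued chain
    refine ⟨?_, ?_, ?_⟩
    · rw [glue_low k i m c π' _ (by omega) (by omega), h0,
        show i * (2 * k + 1) + 2 = i * (2 * k + 1) + 2 * 0 + 2 from by omega,
        show i * (2 * k + 1) + 2 * 0 + 2 + 1 = i * (2 * k + 1) + 2 * 0 + 3 from by omega,
        glue_fst k i m c π' 0 (by omega), glue_snd k i m c π' 0 (by omega)]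
      have h := hc.1 (by omega)
      simp only [ge_iff_le, max_le_iff] at h ⊢
      omega
    · intro j hj1 hjk
      obtain ⟨j', rfl⟩ : ∃ j', j = j' + 1 := ⟨j - 1, by omega⟩
      rw [glue_fst k i m c π' (j' + 1) (by omega), glue_snd k i m c π' (j' + 1) (by omega),
        show i * (2 * k + 1) + 2 * (j' + 1) + 1 = i * (2 * k + 1) + 2 * j' + 3 from by omega,
        show i * (2 * k + 1) + 2 * (j' + 1) = i * (2 * k + 1) + 2 * j' + 2 from by omega,
        glue_fst k i m c π' j' (by omega), glue_snd k i m c π' j' (by omega)]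
      have h := hc.2 j' hjk
      simp only [ge_iff_le, max_le_iff, le_min_iff] at h ⊢
      omega
    · rw [show i * (2 * k + 1) + 2 * k = i * (2 * k + 1) + 2 * (k - 1) + 2 from by omega,
        show i * (2 * k + 1) + 2 * (k - 1) + 2 + 1 = i * (2 * k + 1) + 2 * (k - 1) + 3 from by omega,
        glue_fst k i m c π' (k - 1) (by omega), glue_snd k i m c π' (k - 1) (by omega),
        glue_high k i m c π' _ (by rw [hring i])]
      simp
  · -- blocks above t: everything is zero
    have hmul : (t + 1) * (2 * k + 1) ≤ i * (2 * k + 1) := Nat.mul_le_mul_right _ (by omega)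
    rw [hring t] at hmul
    have hhigh : ∀ p, i * (2 * k + 1) + 1 ≤ p → glue k t m c π' p = 0 := by
      intro p hp
      refine glue_high k t m c π' p ?_
      rw [hring t]
      omega
    refine ⟨?_, ?_, ?_⟩
    · rw [hhigh _ (by omega), hhigh _ (by omega), hhigh _ (by omega)]
      simp
    · intro j hj1 hjk
      rw [hhigh _ (by omega), hhigh _ (by omega), hhigh _ (by omega), hhigh _ (by omega)]
      simp
    · rw [hhigh _ (by omega), hhigh _ (by omega), hhigh _ (by omega)]
      simp


lemma peel_isDiamond {k t m : ℕ} {π : ℕ →₀ ℕ} (hk : 1 ≤ k) (hd : IsDiamond k π) :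
    IsDiamond k (peel k t m π) := by
  have hring : ∀ a : ℕ, (a + 1) * (2 * k + 1) = a * (2 * k + 1) + (2 * k + 1) := by
    intro a; ring
  constructor
  · rw [peel_apply, if_neg (by omega)]
  intro i
  rw [hring i]
  rcases Nat.lt_or_ge i t with hit | hit
  · -- block fully inside the kept region
    have hmul : (i + 1) * (2 * k + 1) ≤ t * (2 * k + 1) := Nat.mul_le_mul_right _ (by omega)
    rw [hring i] at hmul
    have hlow : ∀ p, 1 ≤ p → p ≤ i * (2 * k + 1) + (2 * k + 1) + 1 →
        peel k t m π p = π p - m := by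
      intro p h1 h2
      rw [peel_apply, if_pos ⟨h1, by omega⟩]
    refine ⟨?_, ?_, ?_⟩
    · rw [hlow _ (by omega) (by omega), hlow _ (by omega) (by omega),
        hlow _ (by omega) (by omega)]
      have h := (hd.2 i).1
      simp only [ge_iff_le, max_le_iff] at h ⊢
      omega
    · intro j hj1 hjk
      rw [hlow _ (by omega) (by omega), hlow _ (by omega) (by omega),
        hlow _ (by omega) (by omega), hlow _ (by omega) (by omega)]
      have h := (hd.2 i).2.1 j hj1 hjk
      simp only [ge_iff_le, max_le_iff, le_min_iff] at h ⊢
      omega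
    · have h := (hd.2 i).2.2
      rw [hring i] at h
      rw [hlow _ (by omega) (by omega), hlow _ (by omega) (by omega),
        hlow _ (by omega) (by omega)]
      simp only [ge_iff_le, le_min_iff] at h ⊢
      omega
  · -- blocks at or above t: only position t*(2k+1)+1 may be nonzero, and only if i = t
    have hmul : t * (2 * k + 1) ≤ i * (2 * k + 1) := Nat.mul_le_mul_right _ hit
    have hhigh : ∀ p, i * (2 * k + 1) + 2 ≤ p → peel k t m π p = 0 := by
      intro p hp
      rw [peel_apply, if_neg (by omega)]
    refine ⟨?_, ?_, ?_⟩
    · rw [hhigh (i * (2 * k + 1) + 2) (by omega), hhigh (i * (2 * k + 1) + 3) (by omega)]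
      simp
    · intro j hj1 hjk
      rw [hhigh (i * (2 * k + 1) + 2 * j) (by omega),
        hhigh (i * (2 * k + 1) + 2 * j + 1) (by omega),
        hhigh (i * (2 * k + 1) + 2 * j + 2) (by omega),
        hhigh (i * (2 * k + 1) + 2 * j + 3) (by omega)]
      simp
    · rw [hhigh (i * (2 * k + 1) + 2 * k) (by omega),
        hhigh (i * (2 * k + 1) + 2 * k + 1) (by omega),
        hhigh (i * (2 * k + 1) + (2 * k + 1) + 1) (by omega)]
      simp

lemma peel_anchor_zero {k t : ℕ} (π : ℕ →₀ ℕ) :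
    peel k t (π (t * (2 * k + 1) + 1)) π (t * (2 * k + 1) + 1) = 0 := by
  rw [peel_apply, if_pos ⟨by omega, le_rfl⟩]
  omega

/-- low entries are at least the anchor of block `t` -/
lemma low_entry_ge {k t : ℕ} {π : ℕ →₀ ℕ} (hk : 1 ≤ k) (hd : IsDiamond k π)
    {p : ℕ} (h1 : 1 ≤ p) (h2 : p ≤ t * (2 * k + 1) + 1) :
    π (t * (2 * k + 1) + 1) ≤ π p := by
  obtain ⟨i, r, hrK, hpir⟩ : ∃ i r, r < 2 * k + 1 ∧ p = i * (2 * k + 1) + (r + 1) := by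
    refine ⟨(p - 1) / (2 * k + 1), (p - 1) % (2 * k + 1), Nat.mod_lt _ (by omega), ?_⟩
    have h1 := Nat.div_add_mod (p - 1) (2 * k + 1)
    have h2 : (2 * k + 1) * ((p - 1) / (2 * k + 1)) =
      ((p - 1) / (2 * k + 1)) * (2 * k + 1) := Nat.mul_comm _ _
    omega
  rcases Nat.lt_or_ge i t with hit | hit
  · have h3 : π ((i + 1) * (2 * k + 1) + 1) ≤ π p := by
      rw [hpir]
      exact next_anchor_le_entry hk hd i (r + 1) (by omega) (by omega)
    exact le_trans (anchor_mono hk hd (by omega : i + 1 ≤ t)) h3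
  · -- then p must be exactly the anchor t*(2k+1)+1
    have hmul : t * (2 * k + 1) ≤ i * (2 * k + 1) := Nat.mul_le_mul_right _ hit
    have hti : i = t := by
      by_contra hne
      have : (t + 1) * (2 * k + 1) ≤ i * (2 * k + 1) :=
        Nat.mul_le_mul_right _ (by omega)
      have h3 : (t + 1) * (2 * k + 1) = t * (2 * k + 1) + (2 * k + 1) := by ring
      omega
    subst hti
    have : p = i * (2 * k + 1) + 1 := by omega
    rw [this]

lemma peel_weight {k t : ℕ} {π : ℕ →₀ ℕ} (hk : 1 ≤ k) (hd : IsDiamond k π)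
    (hT1 : π ((t + 1) * (2 * k + 1) + 1) = 0) :
    diamondWeight k π =
      diamondWeight k (peel k t (π (t * (2 * k + 1) + 1)) π) +
        (t + 1) * π (t * (2 * k + 1) + 1) := by
  set m := π (t * (2 * k + 1) + 1) with hm
  have hpd : IsDiamond k (peel k t m π) := peel_isDiamond hk hd
  rw [weight_eq hk hd (T := t + 1) hT1, weight_eq hk hpd (T := t) (peel_anchor_zero π),
    Finset.sum_range_succ]
  have hterm : ∀ i ∈ Finset.range t, π (i * (2 * k + 1) + 1) =
      peel k t m π (i * (2 * k + 1) + 1) + m := by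
    intro i hi
    rw [Finset.mem_range] at hi
    have hmul : i * (2 * k + 1) ≤ t * (2 * k + 1) := Nat.mul_le_mul_right _ (by omega)
    rw [peel_apply, if_pos ⟨by omega, by omega⟩]
    have : m ≤ π (i * (2 * k + 1) + 1) := anchor_mono hk hd (by omega)
    omega
  rw [Finset.sum_congr rfl hterm, Finset.sum_add_distrib, Finset.sum_const,
    Finset.card_range, smul_eq_mul]
  have : (t + 1) * m = t * m + m := by ring
  omega

lemma anchor_le_weight {k t : ℕ} {π : ℕ →₀ ℕ} (hk : 1 ≤ k) (hd : IsDiamond k π)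
    (hT1 : π ((t + 1) * (2 * k + 1) + 1) = 0) :
    (t + 1) * π (t * (2 * k + 1) + 1) ≤ diamondWeight k π := by
  rw [weight_eq hk hd (T := t + 1) hT1]
  have := Finset.card_nsmul_le_sum (Finset.range (t + 1))
    (fun i => π (i * (2 * k + 1) + 1)) (π (t * (2 * k + 1) + 1))
    (fun i hi => anchor_mono hk hd (by rw [Finset.mem_range] at hi; omega))
  rw [Finset.card_range, smul_eq_mul] at this
  exact this

lemma blockChain_chainCond {k t : ℕ} {π : ℕ →₀ ℕ} (hk : 1 ≤ k) (hd : IsDiamond k π) :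
    ChainCond k (π (t * (2 * k + 1) + 1)) (blockChain k t π) := by
  constructor
  · intro h
    have h1 := (hd.2 t).1
    show max (π (t * (2 * k + 1) + 2 * 0 + 2)) (π (t * (2 * k + 1) + 2 * 0 + 3)) ≤ _
    rw [show t * (2 * k + 1) + 2 * 0 + 2 = t * (2 * k + 1) + 2 from by omega,
      show t * (2 * k + 1) + 2 * 0 + 3 = t * (2 * k + 1) + 3 from by omega]
    exact h1
  · intro j h
    have h1 := (hd.2 t).2.1 (j + 1) (by omega) h
    show max (π (t * (2 * k + 1) + 2 * (j + 1) + 2)) (π (t * (2 * k + 1) + 2 * (j + 1) + 3)) ≤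
      min (π (t * (2 * k + 1) + 2 * j + 2)) (π (t * (2 * k + 1) + 2 * j + 3))
    rw [show t * (2 * k + 1) + 2 * j + 2 = t * (2 * k + 1) + 2 * (j + 1) from by omega,
      show t * (2 * k + 1) + 2 * j + 3 = t * (2 * k + 1) + 2 * (j + 1) + 1 from by omega]
    exact h1


lemma glue_weight {k t m : ℕ} {c : Fin k → ℕ × ℕ} {π' : ℕ →₀ ℕ} (hk : 1 ≤ k)
    (hc : ChainCond k m c) (hd' : IsDiamond k π') (h0 : π' (t * (2 * k + 1) + 1) = 0) :
    diamondWeight k (glue k t m c π') = diamondWeight k π' + (t + 1) * m := by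
  have hgd : IsDiamond k (glue k t m c π') := glue_isDiamond hk hc hd' h0
  have hanchor : glue k t m c π' ((t + 1) * (2 * k + 1) + 1) = 0 :=
    glue_high k t m c π' _ le_rfl
  rw [weight_eq hk hgd (T := t + 1) hanchor, weight_eq hk hd' (T := t) h0]
  have hterm : ∀ i ∈ Finset.range (t + 1), glue k t m c π' (i * (2 * k + 1) + 1) =
      π' (i * (2 * k + 1) + 1) + m := by
    intro i hi
    rw [Finset.mem_range] at hi
    have hmul : i * (2 * k + 1) ≤ t * (2 * k + 1) := Nat.mul_le_mul_right _ (by omega)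
    exact glue_low k t m c π' _ (by omega) (by omega)
  rw [Finset.sum_congr rfl hterm, Finset.sum_add_distrib, Finset.sum_const,
    Finset.card_range, smul_eq_mul, Finset.sum_range_succ, h0]
  have : (t + 1) * m = t * m + m := by ring
  omega

/-- the fiber over `m` in the decomposition of diamonds with `≤ t+1` blocks -/
abbrev Fiber (k t n m : ℕ) : Type :=
  {q : {c : Fin k → ℕ × ℕ // ChainCond k m c} ×
      {π' : ℕ →₀ ℕ // IsDiamond k π' ∧ diamondWeight k π' = n - (t + 1) * m ∧
        π' (t * (2 * k + 1) + 1) = 0} // (t + 1) * m ≤ n}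

noncomputable def glueMap (k t n : ℕ) (hk : 1 ≤ k) (x : Σ m : Fin (n + 1), Fiber k t n m.1) :
    {π : ℕ →₀ ℕ // IsDiamond k π ∧ diamondWeight k π = n ∧
      π ((t + 1) * (2 * k + 1) + 1) = 0} :=
  ⟨glue k t x.1.1 x.2.1.1.1 x.2.1.2.1,
    glue_isDiamond hk x.2.1.1.2 x.2.1.2.2.1 x.2.1.2.2.2.2,
    by
      rw [glue_weight hk x.2.1.1.2 x.2.1.2.2.1 x.2.1.2.2.2.2, x.2.1.2.2.2.1]
      have := x.2.2
      omega,
    glue_high k t x.1.1 _ _ _ le_rfl⟩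

lemma glueMap_injective (k t n : ℕ) (hk : 1 ≤ k) :
    Function.Injective (glueMap k t n hk) := by
  rintro ⟨⟨m, hm⟩, ⟨⟨⟨c, hc⟩, ⟨π', hπ'⟩⟩, hle⟩⟩ ⟨⟨m', hm'⟩, ⟨⟨⟨c', hc'⟩, ⟨π'', hπ''⟩⟩, hle'⟩⟩ heq
  have heqv : glue k t m c π' = glue k t m' c' π'' := congrArg Subtype.val heq
  -- the anchors at t*(2k+1)+1 recover m and m'
  have hmm : m = m' := by
    have h1 := DFunLike.congr_fun heqv (t * (2 * k + 1) + 1)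
    rw [glue_low k t m c π' _ (by omega) le_rfl, glue_low k t m' c' π'' _ (by omega) le_rfl,
      hπ'.2.2, hπ''.2.2] at h1
    omega
  subst hmm
  have hcc : c = c' := by
    funext j
    have h1 := DFunLike.congr_fun heqv (t * (2 * k + 1) + 2 * j.1 + 2)
    have h2 := DFunLike.congr_fun heqv (t * (2 * k + 1) + 2 * j.1 + 3)
    rw [glue_fst k t m c π' j.1 j.2, glue_fst k t m c' π'' j.1 j.2] at h1
    rw [glue_snd k t m c π' j.1 j.2, glue_snd k t m c' π'' j.1 j.2] at h2
    have hj : (⟨j.1, j.2⟩ : Fin k) = j := rfl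
    rw [hj] at h1 h2
    exact Prod.ext h1 h2
  subst hcc
  have hpp : π' = π'' := by
    ext p
    have h1 := DFunLike.congr_fun heqv p
    rcases Nat.eq_zero_or_pos p with rfl | hp
    · rw [hπ'.1.1, hπ''.1.1]
    rcases Nat.lt_or_ge p (t * (2 * k + 1) + 2) with hlow | hhigh
    · rw [glue_low k t m c π' _ (by omega) (by omega),
        glue_low k t m c π'' _ (by omega) (by omega)] at h1
      omega
    · rw [zero_from hk hπ'.1 hπ'.2.2 (by omega), zero_from hk hπ''.1 hπ''.2.2 (by omega)]
  subst hpp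
  rfl

lemma glueMap_surjective (k t n : ℕ) (hk : 1 ≤ k) :
    Function.Surjective (glueMap k t n hk) := by
  rintro ⟨π, hd, hw, hT1⟩
  obtain ⟨m, hmdef⟩ : ∃ m, π (t * (2 * k + 1) + 1) = m := ⟨_, rfl⟩
  have hguard : (t + 1) * m ≤ n := by
    have h := anchor_le_weight hk hd hT1
    rw [hmdef, hw] at h
    exact h
  have hwp : diamondWeight k (peel k t m π) = n - (t + 1) * m := by
    have h := peel_weight hk hd hT1
    rw [hmdef, hw] at h
    omega
  have hpz : peel k t m π (t * (2 * k + 1) + 1) = 0 := by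
    rw [← hmdef]; exact peel_anchor_zero π
  have hmn : m < n + 1 := by
    have h2 : m ≤ (t + 1) * m := Nat.le_mul_of_pos_left m (by omega)
    omega
  refine ⟨⟨⟨m, hmn⟩, ⟨(⟨blockChain k t π, by
      show ChainCond k m (blockChain k t π)
      rw [← hmdef]; exact blockChain_chainCond hk hd⟩,
    ⟨peel k t m π, peel_isDiamond hk hd, hwp, hpz⟩), hguard⟩⟩, ?_⟩
  apply Subtype.ext
  show glue k t m (blockChain k t π) (peel k t m π) = π
  ext p
  rcases Nat.eq_zero_or_pos p with rfl | hp
  · rw [glue_zero, hd.1]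
  rcases Nat.lt_or_ge p (t * (2 * k + 1) + 2) with hlow | hh
  · rw [glue_low k t m _ _ _ (by omega) (by omega), peel_apply, if_pos ⟨by omega, by omega⟩]
    have h := low_entry_ge (t := t) hk hd (by omega : 1 ≤ p) (by omega)
    rw [hmdef] at h
    omega
  rcases Nat.lt_or_ge p (t * (2 * k + 1) + 2 * k + 2) with hmid | hhh
  · -- chain region
    obtain ⟨r, hr2k, hrp⟩ : ∃ r, r < 2 * k ∧ p = t * (2 * k + 1) + 2 + r :=
      ⟨p - (t * (2 * k + 1) + 2), by omega, by omega⟩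
    rcases Nat.even_or_odd r with ⟨j, hj⟩ | ⟨j, hj⟩
    · rw [show p = t * (2 * k + 1) + 2 * j + 2 from by omega,
        glue_fst k t m _ _ j (by omega)]
      show π (t * (2 * k + 1) + 2 * j + 2) = _
      rfl
    · rw [show p = t * (2 * k + 1) + 2 * j + 3 from by omega,
        glue_snd k t m _ _ j (by omega)]
      show π (t * (2 * k + 1) + 2 * j + 3) = _
      rfl
  · -- above the chain: both vanish
    have hring : (t + 1) * (2 * k + 1) = t * (2 * k + 1) + (2 * k + 1) := by ring
    rw [glue_high k t m _ _ p (by omega), zero_from hk hd hT1 (by omega)]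


lemma card_subtype_const {α : Type*} (p : Prop) [Decidable p] :
    Nat.card {_q : α // p} = if p then Nat.card α else 0 := by
  split_ifs with h
  · exact Nat.card_congr (Equiv.subtypeUnivEquiv fun _ => h)
  · have : IsEmpty {_q : α // p} := ⟨fun q => h q.2⟩
    exact Nat.card_of_isEmpty

lemma step_card (k t n : ℕ) (hk : 1 ≤ k) :
    Nat.card {π : ℕ →₀ ℕ // IsDiamond k π ∧ diamondWeight k π = n ∧
      π ((t + 1) * (2 * k + 1) + 1) = 0} =
    ∑ m ∈ Finset.range (n + 1), if (t + 1) * m ≤ n then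
      f k m * Nat.card {π : ℕ →₀ ℕ // IsDiamond k π ∧
        diamondWeight k π = n - (t + 1) * m ∧ π (t * (2 * k + 1) + 1) = 0} else 0 := by
  classical
  letI fint : ∀ m : ℕ, Fintype (Fiber k t n m) := fun m =>
    haveI := chain_finite k m
    haveI := S_finite (k := k) hk t (n - (t + 1) * m)
    Fintype.ofFinite _
  rw [← Nat.card_congr (Equiv.ofBijective (glueMap k t n hk)
    ⟨glueMap_injective k t n hk, glueMap_surjective k t n hk⟩)]
  rw [Nat.card_eq_fintype_card, Fintype.card_sigma]
  rw [Fin.sum_univ_eq_sum_range (fun m => Fintype.card (Fiber k t n m))]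
  apply Finset.sum_congr rfl
  intro m hm
  rw [← Nat.card_eq_fintype_card]
  rw [card_subtype_const]
  split_ifs with h
  · rw [Nat.card_prod, chain_card]
  · rfl


lemma f_zero (j : ℕ) : f j 0 = 1 := by
  induction j with
  | zero => rfl
  | succ j ih => simp [f, ih]

lemma f_succ_succ (j m : ℕ) : f (j + 1) (m + 1) =
    f (j + 1) m + f j (m + 1) + 2 * ∑ s ∈ Finset.range (m + 1), f j s := by
  have lhs : f (j + 1) (m + 1) =
      ∑ x ∈ Finset.range (m + 2), ∑ y ∈ Finset.range (m + 2), f j (min x y) := rfl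
  rw [lhs, Finset.sum_range_succ]
  have inner : ∀ x ∈ Finset.range (m + 1),
      ∑ y ∈ Finset.range (m + 2), f j (min x y) =
        (∑ y ∈ Finset.range (m + 1), f j (min x y)) + f j x := by
    intro x hx
    rw [Finset.mem_range] at hx
    rw [Finset.sum_range_succ, min_eq_left (by omega)]
  rw [Finset.sum_congr rfl inner, Finset.sum_add_distrib]
  have last : ∑ y ∈ Finset.range (m + 2), f j (min (m + 1) y) =
      (∑ y ∈ Finset.range (m + 1), f j y) + f j (m + 1) := by
    rw [Finset.sum_range_succ, min_self]
    congr 1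
    apply Finset.sum_congr rfl
    intro y hy
    rw [Finset.mem_range] at hy
    rw [min_eq_right (by omega)]
  rw [last]
  have hf : f (j + 1) m = ∑ x ∈ Finset.range (m + 1), ∑ y ∈ Finset.range (m + 1), f j (min x y) := rfl
  omega

open PowerSeries

noncomputable def Gaux (j i : ℕ) : PowerSeries ℤ :=
  PowerSeries.mk fun nn => if i ∣ nn then (f j (nn / i) : ℤ) else 0

noncomputable def Haux (j i : ℕ) : PowerSeries ℤ :=
  PowerSeries.mk fun nn => if i ∣ nn then
    ((f j (nn / i) : ℤ) + 2 * ∑ s ∈ Finset.range (nn / i), (f j s : ℤ)) else 0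

lemma coeff_mul_one_sub_pow (A : PowerSeries ℤ) (i nn : ℕ) :
    coeff (R := ℤ) nn (A * (1 - X ^ i)) =
      coeff (R := ℤ) nn A - (if i ≤ nn then coeff (R := ℤ) (nn - i) A else 0) := by
  rw [mul_sub, mul_one, map_sub, coeff_mul_X_pow']

lemma coeff_mul_one_add_pow (A : PowerSeries ℤ) (i nn : ℕ) :
    coeff (R := ℤ) nn (A * (1 + X ^ i)) =
      coeff (R := ℤ) nn A + (if i ≤ nn then coeff (R := ℤ) (nn - i) A else 0) := by
  rw [mul_add, mul_one, map_add, coeff_mul_X_pow']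

lemma f_zero' (m : ℕ) : f 0 m = 1 := rfl

lemma not_dvd_sub {i nn : ℕ} (hi : 1 ≤ i) (hnd : ¬ i ∣ nn) (hle : i ≤ nn) : ¬ i ∣ nn - i := by
  intro ⟨q, hq⟩
  refine hnd ⟨q + 1, ?_⟩
  have : i * (q + 1) = i * q + i := by ring
  omega

lemma mul_div_self_q {i q : ℕ} (hi : 1 ≤ i) : (i * q) / i = q :=
  Nat.mul_div_cancel_left q (by omega)

lemma Gaux_zero (i : ℕ) (hi : 1 ≤ i) : Gaux 0 i * (1 - X ^ i) = 1 := by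
  ext nn
  rw [coeff_mul_one_sub_pow, coeff_one]
  simp only [Gaux, coeff_mk]
  rcases Nat.eq_zero_or_pos nn with rfl | hnn
  · rw [if_pos (dvd_zero i), if_neg (by omega), if_pos rfl]
    simp [f_zero']
  · rw [if_neg (by omega : ¬ nn = 0)]
    by_cases hd : i ∣ nn
    · obtain ⟨q, rfl⟩ := hd
      have hq : 1 ≤ q := by
        rcases Nat.eq_zero_or_pos q with rfl | h
        · simp at hnn
        · exact h
      have hle : i ≤ i * q := Nat.le_mul_of_pos_right i hq
      obtain ⟨q', rfl⟩ : ∃ q', q = q' + 1 := ⟨q - 1, by omega⟩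
      have hsub : i * (q' + 1) - i = i * q' := by rw [Nat.mul_succ]; omega
      simp only [hsub, mul_div_self_q hi, dvd_mul_right, hle, if_true, ite_true]
      simp [f_zero']
    · rw [if_neg hd]
      by_cases hle : i ≤ nn
      · rw [if_pos hle, if_neg (not_dvd_sub hi hd hle)]
        ring
      · rw [if_neg hle]
        ring

lemma Gaux_succ_half (j i : ℕ) (hi : 1 ≤ i) :
    Gaux (j + 1) i * (1 - X ^ i) = Haux j i := by
  ext nn
  rw [coeff_mul_one_sub_pow]
  simp only [Gaux, Haux, coeff_mk]
  rcases Nat.eq_zero_or_pos nn with rfl | hnn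
  · simp [Nat.zero_div, f_zero, show ¬ i ≤ 0 from by omega]
  by_cases hd : i ∣ nn
  · obtain ⟨q, rfl⟩ := hd
    have hq : 1 ≤ q := by
      rcases Nat.eq_zero_or_pos q with rfl | h
      · simp at hnn
      · exact h
    obtain ⟨q', rfl⟩ : ∃ q', q = q' + 1 := ⟨q - 1, by omega⟩
    have hle : i ≤ i * (q' + 1) := Nat.le_mul_of_pos_right i (by omega)
    have hsub : i * (q' + 1) - i = i * q' := by rw [Nat.mul_succ]; omega
    simp only [hsub, mul_div_self_q hi, dvd_mul_right, hle, if_true, ite_true]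
    have hrec := f_succ_succ j q'
    have hcast : ((∑ s ∈ Finset.range (q' + 1), f j s : ℕ) : ℤ) =
        ∑ s ∈ Finset.range (q' + 1), (f j s : ℤ) := Nat.cast_sum _ _
    push_cast at hrec ⊢
    omega
  · rw [if_neg hd, if_neg hd]
    by_cases hle : i ≤ nn
    · rw [if_pos hle, if_neg (not_dvd_sub hi hd hle)]
      ring
    · rw [if_neg hle]
      ring

lemma Haux_half (j i : ℕ) (hi : 1 ≤ i) :
    Haux j i * (1 - X ^ i) = Gaux j i * (1 + X ^ i) := by
  ext nn
  rw [coeff_mul_one_sub_pow, coeff_mul_one_add_pow]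
  simp only [Gaux, Haux, coeff_mk]
  rcases Nat.eq_zero_or_pos nn with rfl | hnn
  · simp [Nat.zero_div, f_zero, show ¬ i ≤ 0 from by omega]
  by_cases hd : i ∣ nn
  · obtain ⟨q, rfl⟩ := hd
    have hq : 1 ≤ q := by
      rcases Nat.eq_zero_or_pos q with rfl | h
      · simp at hnn
      · exact h
    obtain ⟨q', rfl⟩ : ∃ q', q = q' + 1 := ⟨q - 1, by omega⟩
    have hle : i ≤ i * (q' + 1) := Nat.le_mul_of_pos_right i (by omega)
    have hsub : i * (q' + 1) - i = i * q' := by rw [Nat.mul_succ]; omega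
    simp only [hsub, mul_div_self_q hi, dvd_mul_right, hle, if_true, ite_true]
    have hsum : ∑ s ∈ Finset.range (q' + 1), (f j s : ℤ) =
        (∑ s ∈ Finset.range q', (f j s : ℤ)) + (f j q' : ℤ) := Finset.sum_range_succ _ _
    omega
  · rw [if_neg hd, if_neg hd]
    by_cases hle : i ≤ nn
    · rw [if_pos hle, if_neg (not_dvd_sub hi hd hle), if_pos hle,
        if_neg (not_dvd_sub hi hd hle)]
      ring
    · rw [if_neg hle, if_neg hle]
      ring

lemma Gaux_succ (j i : ℕ) (hi : 1 ≤ i) :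
    Gaux (j + 1) i * (1 - X ^ i) ^ 2 = Gaux j i * (1 + X ^ i) := by
  rw [sq, ← mul_assoc, Gaux_succ_half j i hi, Haux_half j i hi]

lemma Gaux_identity (j i : ℕ) (hi : 1 ≤ i) :
    Gaux j i * (1 - X ^ i) ^ (2 * j + 1) = (1 + X ^ i) ^ j := by
  induction j with
  | zero => rw [pow_one, pow_zero]; exact Gaux_zero i hi
  | succ j ih =>
    have h2 : 2 * (j + 1) + 1 = 2 + (2 * j + 1) := by ring
    rw [h2, pow_add, ← mul_assoc, Gaux_succ j i hi, mul_right_comm, ih]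
    exact (pow_succ _ _).symm


noncomputable def DtS (k t : ℕ) : PowerSeries ℤ :=
  PowerSeries.mk fun n => (Nat.card {π : ℕ →₀ ℕ // IsDiamond k π ∧
    diamondWeight k π = n ∧ π (t * (2 * k + 1) + 1) = 0} : ℤ)

lemma DtS_zero (k : ℕ) (hk : 1 ≤ k) : DtS k 0 = 1 := by
  ext nn
  rw [coeff_one]
  simp only [DtS, coeff_mk]
  rw [base_card hk nn]
  split_ifs with h <;> simp

lemma DtS_succ (k t : ℕ) (hk : 1 ≤ k) :
    DtS k (t + 1) = Gaux k (t + 1) * DtS k t := by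
  ext nn
  rw [coeff_mul]
  simp only [DtS, Gaux, coeff_mk]
  rw [Finset.Nat.sum_antidiagonal_eq_sum_range_succ_mk]
  rw [step_card k t nn hk]
  push_cast
  -- both sides are sums over range (nn+1); reindex by a = (t+1)*m
  rw [← Finset.sum_filter (p := fun m => (t + 1) * m ≤ nn)]
  have rhs_eq : ∀ a ∈ Finset.range (nn + 1),
      (if t + 1 ∣ a then (f k (a / (t + 1)) : ℤ) else 0) *
        (Nat.card {π : ℕ →₀ ℕ // IsDiamond k π ∧ diamondWeight k π = nn - a ∧
          π (t * (2 * k + 1) + 1) = 0} : ℤ) =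
      if t + 1 ∣ a then (f k (a / (t + 1)) : ℤ) *
        (Nat.card {π : ℕ →₀ ℕ // IsDiamond k π ∧ diamondWeight k π = nn - a ∧
          π (t * (2 * k + 1) + 1) = 0} : ℤ) else 0 := by
    intro a _
    split_ifs <;> simp
  rw [Finset.sum_congr rfl rhs_eq, ← Finset.sum_filter (p := fun a => t + 1 ∣ a)]
  apply Finset.sum_nbij' (i := fun m => (t + 1) * m) (j := fun a => a / (t + 1))
  · intro m hm
    simp only [Finset.mem_filter, Finset.mem_range] at hm ⊢
    exact ⟨by omega, Dvd.intro m rfl⟩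
  · intro a ha
    simp only [Finset.mem_filter, Finset.mem_range] at ha ⊢
    obtain ⟨ha1, q, hq⟩ := ha
    subst hq
    rw [mul_div_self_q (by omega)]
    constructor
    · have : q ≤ (t + 1) * q := Nat.le_mul_of_pos_left q (by omega)
      omega
    · omega
  · intro m hm
    rw [mul_div_self_q (by omega)]
  · intro a ha
    simp only [Finset.mem_filter, Finset.mem_range] at ha
    obtain ⟨ha1, q, hq⟩ := ha
    subst hq
    rw [mul_div_self_q (by omega)]
  · intro m hm
    rw [mul_div_self_q (by omega)]

lemma DtS_prod (k t : ℕ) (hk : 1 ≤ k) :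
    DtS k t = ∏ i ∈ Finset.range t, Gaux k (i + 1) := by
  induction t with
  | zero => rw [Finset.prod_range_zero]; exact DtS_zero k hk
  | succ t ih =>
    rw [DtS_succ k t hk, ih, Finset.prod_range_succ, mul_comm]


lemma anchor_vanishes {k t n : ℕ} {π : ℕ →₀ ℕ} (hk : 1 ≤ k) (hd : IsDiamond k π)
    (hw : diamondWeight k π = n) (ht : n ≤ t) : π (t * (2 * k + 1) + 1) = 0 := by
  by_contra h0
  have hbig : ∀ p, π.support.sup id + 1 ≤ p → π p = 0 := by
    intro p hp
    by_contra hne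
    have h1 : p ∈ π.support := Finsupp.mem_support_iff.mpr hne
    have h2 : p ≤ π.support.sup id := Finset.le_sup (f := id) h1
    omega
  obtain ⟨T, hT1, hTz⟩ : ∃ T, t + 1 ≤ T ∧ π (T * (2 * k + 1) + 1) = 0 := by
    refine ⟨max (π.support.sup id + 1) (t + 1), le_max_right _ _, ?_⟩
    apply hbig
    have h1 : max (π.support.sup id + 1) (t + 1) ≤
        max (π.support.sup id + 1) (t + 1) * (2 * k + 1) :=
      Nat.le_mul_of_pos_right _ (by omega)
    have h2 : π.support.sup id + 1 ≤ max (π.support.sup id + 1) (t + 1) := le_max_left _ _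
    omega
  have hwf := weight_eq hk hd (T := T) hTz
  have hanch : ∀ i ∈ Finset.range (t + 1), 1 ≤ π (i * (2 * k + 1) + 1) := by
    intro i hi
    rw [Finset.mem_range] at hi
    have := anchor_mono hk hd (by omega : i ≤ t)
    omega
  have hsum : (t + 1) * 1 ≤ ∑ i ∈ Finset.range (t + 1), π (i * (2 * k + 1) + 1) := by
    have := Finset.card_nsmul_le_sum (Finset.range (t + 1))
      (fun i => π (i * (2 * k + 1) + 1)) 1 hanch
    rw [Finset.card_range, smul_eq_mul] at this
    exact this
  have hmono : ∑ i ∈ Finset.range (t + 1), π (i * (2 * k + 1) + 1) ≤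
      ∑ i ∈ Finset.range T, π (i * (2 * k + 1) + 1) :=
    Finset.sum_le_sum_of_subset (Finset.range_subset_range.mpr hT1)
  omega

open PowerSeries in
lemma coeff_mul_congr (A B C : PowerSeries ℤ) (n : ℕ)
    (h : ∀ m, m ≤ n → coeff (R := ℤ) m A = coeff (R := ℤ) m B) :
    coeff (R := ℤ) n (A * C) = coeff (R := ℤ) n (B * C) := by
  rw [coeff_mul, coeff_mul]
  apply Finset.sum_congr rfl
  intro p hp
  rw [Finset.HasAntidiagonal.mem_antidiagonal] at hp
  rw [h p.1 (by omega)]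

open PowerSeries in
lemma main_identity (k n : ℕ) (hk : 1 ≤ k) :
    DtS k (n + 1) * ∏ i ∈ Finset.range (n + 1), (1 - (X : PowerSeries ℤ) ^ (i + 1)) ^ (3 * k + 1) =
      ∏ i ∈ Finset.range (n + 1), (1 - (X : PowerSeries ℤ) ^ (2 * (i + 1))) ^ k := by
  rw [DtS_prod k (n + 1) hk, ← Finset.prod_mul_distrib]
  apply Finset.prod_congr rfl
  intro i _
  have h1 : 3 * k + 1 = (2 * k + 1) + k := by ring
  rw [h1, pow_add, ← mul_assoc, Gaux_identity k (i + 1) (by omega), ← mul_pow]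
  congr 1
  rw [show 2 * (i + 1) = (i + 1) * 2 from by ring, pow_mul]
  ring

end DiamondAux


open PowerSeries in
/-- Andrews–Paule: `Σ_{n≥0} d_k(n) qⁿ = (q²;q²)_∞^k / (q;q)_∞^{3k+1}`, stated as the
coefficientwise identity `(Σ d_k(n) qⁿ) · (q;q)_∞^{3k+1} = (q²;q²)_∞^k`; truncating the
infinite products at `n + 1` factors does not affect the `n`-th coefficient. -/
theorem diamond_gf (k : ℕ) (hk : 1 ≤ k) (n : ℕ) :
    coeff (R := ℤ) n ((PowerSeries.mk fun m => (diamondCount k m : ℤ)) *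
        ∏ i ∈ Finset.range (n + 1), (1 - (X : PowerSeries ℤ) ^ (i + 1)) ^ (3 * k + 1)) =
      coeff (R := ℤ) n (∏ i ∈ Finset.range (n + 1),
        (1 - (X : PowerSeries ℤ) ^ (2 * (i + 1))) ^ k) := by
  have hcoeff : ∀ m, m ≤ n → coeff (R := ℤ) m (PowerSeries.mk fun m => (diamondCount k m : ℤ)) =
      coeff (R := ℤ) m (DiamondAux.DtS k (n + 1)) := by
    intro m hm
    rw [coeff_mk]
    simp only [DiamondAux.DtS, coeff_mk]
    congr 1
    unfold diamondCount
    apply Nat.card_congr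
    apply Equiv.subtypeEquivRight
    intro π
    constructor
    · intro h
      exact ⟨h.1, h.2, DiamondAux.anchor_vanishes hk h.1 h.2 (by omega)⟩
    · intro h
      exact ⟨h.1, h.2.1⟩
  rw [DiamondAux.coeff_mul_congr _ _ _ n hcoeff, DiamondAux.main_identity k n hk]
end

section
/- For integers n, k, t, r with 1 ≤ r ≤ 2k+1, the number of (2k+1)-tuples (α¹, …, α^{2k+1}) of total weight n, where the even-indexed αⁱ are overpartitions and the odd-indexed αⁱ are ordinary partitions, with max_i ℓ(αⁱ) = t and r the largest index i with ℓ(αⁱ) = t, equals the number of k-elongated partition diamonds of n with length t and exactly (t−1)(2k+1)+r nonzero entries. -/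
open Finset

/-- An overpartition, encoded as a list of (part, overlined?) pairs: parts are positive
and weakly decreasing, and only the final occurrence of a part value may be overlined. -/
def IsOverpartition (l : List (ℕ × Bool)) : Prop :=
  (l.map Prod.fst).Pairwise (· ≥ ·) ∧ (∀ x ∈ l, 0 < x.1) ∧
  ∀ i, i + 1 < l.length → (l.getD i (0, false)).2 = true →
    (l.getD (i + 1) (0, false)).1 < (l.getD i (0, false)).1

section Helpers

lemma mono_of_succ (f : ℕ → ℕ) (hf : ∀ j, f (j+1) ≤ f j) {a b : ℕ} (hab : a ≤ b) :
    f b ≤ f a := by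
  induction hab with
  | refl => exact le_refl _
  | step h ih => exact le_trans (hf _) ih

lemma tele (f : ℕ → ℕ) (hf : ∀ j, f (j+1) ≤ f j) (a : ℕ) :
    ∀ b, a ≤ b → ∑ j ∈ Finset.Ico a b, (f j - f (j+1)) = f a - f b := by
  intro b
  induction b with
  | zero => intro h; simp [Nat.le_zero.mp h]
  | succ b ih =>
    intro h
    rcases Nat.lt_or_ge a (b+1) with h' | h'
    · have hab : a ≤ b := Nat.lt_succ_iff.mp h'
      rw [Finset.sum_Ico_succ_top hab, ih hab]
      have h1 : f b ≤ f a := mono_of_succ f hf hab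
      have h2 : f (b+1) ≤ f b := hf b
      omega
    · have : a = b + 1 := le_antisymm h h'
      subst this; simp

lemma initseg (f : ℕ → ℕ) (hf : ∀ j, f (j+1) ≤ f j) (N : ℕ) (hN : ∀ j, N ≤ j → f j = 0)
    (p : ℕ) :
    f p ≠ 0 ↔ p < ((Finset.range N).filter (fun q => f q ≠ 0)).card := by
  set S := (Finset.range N).filter (fun q => f q ≠ 0) with hS
  constructor
  · intro hp
    have hpN : p < N := by
      by_contra h
      exact hp (hN p (le_of_not_gt h))
    have hsub : Finset.range (p+1) ⊆ S := by
      intro q hq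
      simp only [Finset.mem_range] at hq
      simp only [hS, Finset.mem_filter, Finset.mem_range]
      have hqp : q ≤ p := Nat.lt_succ_iff.mp hq
      refine ⟨lt_of_le_of_lt hqp hpN, ?_⟩
      intro h0
      have := mono_of_succ f hf hqp
      omega
    have := Finset.card_le_card hsub
    rw [Finset.card_range] at this
    omega
  · intro hp
    intro h0
    have hsub : S ⊆ Finset.range p := by
      intro q hq
      simp only [hS, Finset.mem_filter, Finset.mem_range] at hq
      simp only [Finset.mem_range]
      by_contra hq'
      have := mono_of_succ f hf (le_of_not_gt hq')
      omega
    have := Finset.card_le_card hsub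
    rw [Finset.card_range] at this
    omega

lemma sum_blocks (g : ℕ → ℕ) (K : ℕ) :
    ∀ t, ∑ p ∈ Finset.range (t*K), g p
      = ∑ i ∈ Finset.range t, ∑ s ∈ Finset.range K, g (i*K+s) := by
  intro t
  induction t with
  | zero => simp
  | succ t ih =>
    rw [Finset.sum_range_succ, ← ih, Nat.succ_mul]
    rw [Finset.sum_range_add]

lemma sum_pairs (g : ℕ → ℕ) : ∀ k, ∑ s ∈ Finset.range (2*k+1), g s
    = g 0 + ∑ j ∈ Finset.range k, (g (2*j+1) + g (2*j+2)) := by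
  intro k
  induction k with
  | zero => simp
  | succ k ih =>
    have h : 2*(k+1)+1 = (2*k+1) + 1 + 1 := by ring
    rw [h, Finset.sum_range_succ, Finset.sum_range_succ, ih, Finset.sum_range_succ]
    have h1 : 2*k+1+1 = 2*k+2 := by ring
    rw [h1]
    omega

lemma list_getD_map_range {β : Type*} (f : ℕ → β) (n i : ℕ) (d : β) (h : i < n) :
    (((List.range n).map f).getD i d) = f i := by
  rw [List.getD_eq_getElem _ _ (by simpa using h)]
  simp

lemma list_sum_map_range (f : ℕ → ℕ) (n : ℕ) :
    (((List.range n).map f).sum) = ∑ i ∈ Finset.range n, f i := by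
  induction n with
  | zero => simp
  | succ n ih => rw [List.range_succ, Finset.sum_range_succ, ← ih]; simp

end Helpers

section Defs

/-- the `i`-th part (0-based) of an (over)partition list, `0` beyond the end. -/
def part (l : List (ℕ × Bool)) (i : ℕ) : ℕ := (l.getD i (0, false)).1

/-- the `i`-th overline mark of an (over)partition list, `false` beyond the end. -/
def mark (l : List (ℕ × Bool)) (i : ℕ) : Bool := (l.getD i (0, false)).2

lemma part_pos_iff (l : List (ℕ × Bool)) (hpos : ∀ x ∈ l, 0 < x.1) (i : ℕ) :
    0 < part l i ↔ i < l.length := by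
  unfold part
  rcases Nat.lt_or_ge i l.length with h | h
  · rw [List.getD_eq_getElem _ _ h]
    constructor
    · intro _; exact h
    · intro _; simpa using hpos _ (List.getElem_mem h)
  · rw [List.getD_eq_default _ _ h]
    simp
    omega

lemma part_zero_of_ge (l : List (ℕ × Bool)) (i : ℕ) (h : l.length ≤ i) :
    part l i = 0 := by
  unfold part; rw [List.getD_eq_default _ _ h]

lemma mark_false_of_ge (l : List (ℕ × Bool)) (i : ℕ) (h : l.length ≤ i) :
    mark l i = false := by
  unfold mark; rw [List.getD_eq_default _ _ h]

lemma part_antitone (l : List (ℕ × Bool)) (hs : (l.map Prod.fst).Pairwise (· ≥ ·))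
    (hpos : ∀ x ∈ l, 0 < x.1) (i : ℕ) : part l (i+1) ≤ part l i := by
  rcases Nat.lt_or_ge (i+1) l.length with h | h
  · have hi : i < l.length := by omega
    unfold part
    rw [List.getD_eq_getElem _ _ h, List.getD_eq_getElem _ _ hi]
    have h2 := List.Pairwise.rel_get_of_lt hs (a := ⟨i, by simpa using hi⟩)
      (b := ⟨i+1, by simpa using h⟩) (by simp)
    simpa using h2
  · rw [part_zero_of_ge _ _ h]
    exact Nat.zero_le _

end Defs

section Mid

/-- The middle normal form: a weakly decreasing sequence `x` supported on
`[0, t(2k+1))` with prescribed weight, last-nonzero position, and overline bits. -/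
def MidP (n k t r : ℕ) (x : ℕ → ℕ) (b : ℕ → Bool) : Prop :=
  (∀ p, x (p+1) ≤ x p) ∧
  (∀ p, t*(2*k+1) ≤ p → x p = 0) ∧
  (∑ i ∈ Finset.range t, x (i*(2*k+1)) = n) ∧
  x ((t-1)*(2*k+1) + (r-1)) ≠ 0 ∧
  x ((t-1)*(2*k+1) + r) = 0 ∧
  (∀ p, ¬(p < t*(2*k+1) ∧ p % (2*k+1) % 2 = 1) → b p = false) ∧
  (∀ p, x p = x (p+1) → b p = false)

end Mid
section TupleToMid

variable {k t r n : ℕ}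

/-- lift a tuple of lists to the middle sequence. -/
def xOf (k : ℕ) (α : Fin (2*k+1) → List (ℕ × Bool)) (p : ℕ) : ℕ :=
  ∑ q : Fin (2*k+1), if (q:ℕ) < p % (2*k+1) then part (α q) (p/(2*k+1)+1)
    else part (α q) (p/(2*k+1))

/-- lift a tuple of lists to the middle bit sequence. -/
def bOf (k t : ℕ) (α : Fin (2*k+1) → List (ℕ × Bool)) (p : ℕ) : Bool :=
  if p < t*(2*k+1) ∧ p % (2*k+1) % 2 = 1 then
    mark (α ⟨p % (2*k+1), Nat.mod_lt _ (Nat.succ_pos _)⟩) (p / (2*k+1))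
  else false

lemma exists_decomp (K p : ℕ) (h : 0 < K) : ∃ i s, s < K ∧ p = i*K + s :=
  ⟨p/K, p%K, Nat.mod_lt _ h, by rw [mul_comm]; exact (Nat.div_add_mod p K).symm⟩

lemma xOf_eval (α : Fin (2*k+1) → List (ℕ × Bool)) (i s : ℕ) (hs : s < 2*k+1) :
    xOf k α (i*(2*k+1)+s)
      = ∑ q : Fin (2*k+1), if (q:ℕ) < s then part (α q) (i+1) else part (α q) i := by
  unfold xOf
  have h1 : (i*(2*k+1)+s) % (2*k+1) = s := by
    rw [mul_comm i (2*k+1), Nat.mul_add_mod]; exact Nat.mod_eq_of_lt hs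
  have h2 : (i*(2*k+1)+s) / (2*k+1) = i := by
    rw [mul_comm i (2*k+1), Nat.mul_add_div (by omega)]
    simp [Nat.div_eq_of_lt hs]
  rw [h1, h2]

lemma sum_split {K : ℕ} (F G : Fin K → ℕ) (s : Fin K) :
    (∑ q : Fin K, if (q:ℕ) < (s:ℕ)+1 then F q else G q) + G s
      = (∑ q : Fin K, if (q:ℕ) < (s:ℕ) then F q else G q) + F s := by
  rw [← Finset.sum_erase_add _ _ (Finset.mem_univ s),
      ← Finset.sum_erase_add _ _ (Finset.mem_univ s)]
  have hcongr : ∀ q ∈ Finset.univ.erase s,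
      (if (q:ℕ) < (s:ℕ)+1 then F q else G q) = (if (q:ℕ) < (s:ℕ) then F q else G q) := by
    intro q hq
    have hne : q ≠ s := Finset.ne_of_mem_erase hq
    have : (q:ℕ) ≠ (s:ℕ) := fun h => hne (Fin.ext h)
    by_cases h1 : (q:ℕ) < (s:ℕ)
    · rw [if_pos h1, if_pos (by omega)]
    · rw [if_neg h1, if_neg (by omega)]
  rw [Finset.sum_congr rfl hcongr]
  rw [if_pos (by omega), if_neg (by omega)]
  omega

lemma xOf_adj (α : Fin (2*k+1) → List (ℕ × Bool))
    (hsort : ∀ q, ((α q).map Prod.fst).Pairwise (· ≥ ·))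
    (hpos : ∀ q, ∀ x ∈ α q, 0 < x.1) (p : ℕ) :
    xOf k α (p+1) ≤ xOf k α p := by
  obtain ⟨i, s, hs, rfl⟩ := exists_decomp (2*k+1) p (by omega)
  have hpa : ∀ (q : Fin (2*k+1)) (j : ℕ), part (α q) (j+1) ≤ part (α q) j :=
    fun q j => part_antitone (α q) (hsort q) (hpos q) j
  rcases Nat.lt_or_ge (s+1) (2*k+1) with h | h
  · have e1 : i*(2*k+1) + s + 1 = i*(2*k+1) + (s+1) := by omega
    rw [e1, xOf_eval α i (s+1) h, xOf_eval α i s hs]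
    apply Finset.sum_le_sum
    intro q _
    split_ifs with h1 h2
    · exact le_refl _
    · exact hpa q i
    · omega
    · exact le_refl _
  · have hsK : s = 2*k := by omega
    have e1 : i*(2*k+1) + s + 1 = (i+1)*(2*k+1) + 0 := by
      subst hsK; ring
    rw [e1, xOf_eval α (i+1) 0 (by omega), xOf_eval α i s hs]
    apply Finset.sum_le_sum
    intro q _
    rw [if_neg (by omega)]
    split_ifs with h1
    · exact le_refl _
    · exact hpa q i

lemma xOf_zero (α : Fin (2*k+1) → List (ℕ × Bool))
    (hlen : ∀ q, (α q).length ≤ t) (p : ℕ) (hp : t*(2*k+1) ≤ p) :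
    xOf k α p = 0 := by
  obtain ⟨i, s, hs, rfl⟩ := exists_decomp (2*k+1) p (by omega)
  have hit : t ≤ i := by
    by_contra h
    have h1 : i ≤ t - 1 := by omega
    have h2 : i*(2*k+1) ≤ (t-1)*(2*k+1) := Nat.mul_le_mul_right _ h1
    have h3 : (t-1)*(2*k+1) + (2*k+1) = t*(2*k+1) := by
      have : t - 1 + 1 = t := by omega
      rw [← Nat.succ_mul]; rw [Nat.succ_eq_add_one, this]
    omega
  rw [xOf_eval α i s hs]
  apply Finset.sum_eq_zero
  intro q _
  have z1 : part (α q) i = 0 := part_zero_of_ge _ _ (by have := hlen q; omega)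
  have z2 : part (α q) (i+1) = 0 := part_zero_of_ge _ _ (by have := hlen q; omega)
  split_ifs <;> assumption

end TupleToMid
section TupleToMid2

variable {k t r n : ℕ}

lemma mod_eval (k i s : ℕ) (hs : s < 2*k+1) : (i*(2*k+1)+s) % (2*k+1) = s := by
  rw [mul_comm i (2*k+1), Nat.mul_add_mod]; exact Nat.mod_eq_of_lt hs

lemma div_eval (k i s : ℕ) (hs : s < 2*k+1) : (i*(2*k+1)+s) / (2*k+1) = i := by
  rw [mul_comm i (2*k+1), Nat.mul_add_div (by omega)]
  simp [Nat.div_eq_of_lt hs]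

lemma sum_part (l : List (ℕ × Bool)) :
    ∀ t, l.length ≤ t → ∑ i ∈ Finset.range t, part l i = (l.map Prod.fst).sum := by
  induction l with
  | nil =>
    intro t _
    simp [part]
  | cons a l ih =>
    intro t ht
    have h1 : 1 ≤ t := by simp at ht; omega
    obtain ⟨t', rfl⟩ : ∃ t', t = t' + 1 := ⟨t - 1, by omega⟩
    rw [Finset.sum_range_succ']
    have h2 : ∀ i, part (a :: l) (i+1) = part l i := fun i => by simp [part]
    have h3 : part (a :: l) 0 = a.1 := by simp [part]
    rw [h3, Finset.sum_congr rfl (fun i _ => h2 i), ih t' (by simp at ht; omega)]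
    simp [add_comm]

lemma bOf_eval (α : Fin (2*k+1) → List (ℕ × Bool)) (i s : ℕ) (hs : s < 2*k+1) :
    bOf k t α (i*(2*k+1)+s)
      = if i*(2*k+1)+s < t*(2*k+1) ∧ s % 2 = 1 then mark (α ⟨s, hs⟩) i else false := by
  unfold bOf
  by_cases h : i*(2*k+1)+s < t*(2*k+1) ∧ s % 2 = 1
  · have hc : i*(2*k+1)+s < t*(2*k+1) ∧ (i*(2*k+1)+s) % (2*k+1) % 2 = 1 :=
      ⟨h.1, by rw [mod_eval k i s hs]; exact h.2⟩
    rw [if_pos hc, if_pos h]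
    have hfin : (⟨(i*(2*k+1)+s) % (2*k+1), Nat.mod_lt _ (Nat.succ_pos _)⟩ : Fin (2*k+1))
        = ⟨s, hs⟩ := Fin.ext (mod_eval k i s hs)
    rw [hfin, div_eval k i s hs]
  · have hc : ¬(i*(2*k+1)+s < t*(2*k+1) ∧ (i*(2*k+1)+s) % (2*k+1) % 2 = 1) := by
      rw [mod_eval k i s hs]; exact h
    rw [if_neg hc, if_neg h]

theorem midP_of_tuple (hk : 1 ≤ k) (ht : 1 ≤ t) (hr1 : 1 ≤ r) (hr2 : r ≤ 2*k+1)
    (α : Fin (2*k+1) → List (ℕ × Bool))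
    (hov : ∀ i, IsOverpartition (α i))
    (hlen : ∀ i : Fin (2*k+1), (α i).length ≤ t)
    (hlenr : ∀ i : Fin (2*k+1), i.val = r - 1 → (α i).length = t)
    (hlenr' : ∀ i : Fin (2*k+1), r ≤ i.val → (α i).length < t)
    (hsum : ∑ i, ((α i).map Prod.fst).sum = n) :
    MidP n k t r (xOf k α) (bOf k t α) := by
  have hsort : ∀ q, ((α q).map Prod.fst).Pairwise (· ≥ ·) := fun q => (hov q).1
  have hpos : ∀ q, ∀ x ∈ α q, 0 < x.1 := fun q => (hov q).2.1
  refine ⟨xOf_adj α hsort hpos, xOf_zero α hlen, ?_, ?_, ?_, ?_, ?_⟩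
  · -- weight
    have h1 : ∀ i, xOf k α (i*(2*k+1)) = ∑ q : Fin (2*k+1), part (α q) i := by
      intro i
      have := xOf_eval α i 0 (by omega)
      simpa using this
    calc ∑ i ∈ Finset.range t, xOf k α (i*(2*k+1))
        = ∑ i ∈ Finset.range t, ∑ q : Fin (2*k+1), part (α q) i :=
          Finset.sum_congr rfl (fun i _ => h1 i)
      _ = ∑ q : Fin (2*k+1), ∑ i ∈ Finset.range t, part (α q) i := Finset.sum_comm
      _ = ∑ q : Fin (2*k+1), ((α q).map Prod.fst).sum :=
          Finset.sum_congr rfl (fun q _ => sum_part (α q) t (hlen q))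
      _ = n := hsum
  · -- nonzero at (t-1)K + (r-1)
    have hr1' : r - 1 < 2*k+1 := by omega
    rw [xOf_eval α (t-1) (r-1) hr1']
    set q0 : Fin (2*k+1) := ⟨r-1, hr1'⟩ with hq0
    have hterm : (0:ℕ) < (if (q0:ℕ) < r-1 then part (α q0) ((t-1)+1) else part (α q0) (t-1)) := by
      rw [if_neg (by simp [hq0])]
      rw [part_pos_iff _ (hpos q0), hlenr q0 rfl]
      omega
    intro h0
    have := (Finset.sum_eq_zero_iff).mp h0 q0 (Finset.mem_univ q0)
    omega
  · -- zero at (t-1)K + r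
    rcases Nat.lt_or_ge r (2*k+1) with h | h
    · rw [xOf_eval α (t-1) r h]
      apply Finset.sum_eq_zero
      intro q _
      split_ifs with h1
      · exact part_zero_of_ge _ _ (by have := hlen q; omega)
      · exact part_zero_of_ge _ _ (by have := hlenr' q (by omega); omega)
    · have hrK : r = 2*k+1 := by omega
      apply xOf_zero α hlen
      subst hrK
      have : (t-1)*(2*k+1) + (2*k+1) = t*(2*k+1) := by
        have h2 : t - 1 + 1 = t := by omega
        calc (t-1)*(2*k+1) + (2*k+1) = (t-1+1)*(2*k+1) := (Nat.succ_mul _ _).symm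
          _ = t*(2*k+1) := by rw [h2]
      omega
  · -- bits vanish out of range
    intro p hp
    unfold bOf
    rw [if_neg hp]
  · -- bits vanish on plateaus
    intro p hxp
    obtain ⟨i, s, hs, rfl⟩ := exists_decomp (2*k+1) p (by omega)
    rw [bOf_eval α i s hs]
    split_ifs with h
    · -- in range, odd slot
      have hs1 : s + 1 < 2*k+1 := by omega
      have e1 : i*(2*k+1) + s + 1 = i*(2*k+1) + (s+1) := by omega
      rw [e1, xOf_eval α i (s+1) hs1, xOf_eval α i s hs] at hxp
      have hsplit := sum_split (fun q : Fin (2*k+1) => part (α q) (i+1))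
        (fun q : Fin (2*k+1) => part (α q) i) ⟨s, hs⟩
      simp only at hsplit
      -- from hxp and hsplit : part (α ⟨s,hs⟩) i = part (α ⟨s,hs⟩) (i+1)
      have heq : part (α ⟨s, hs⟩) i = part (α ⟨s, hs⟩) (i+1) := by omega
      set l := α ⟨s, hs⟩ with hl
      rcases Nat.lt_or_ge i l.length with hi | hi
      · rcases Nat.lt_or_ge (i+1) l.length with hi1 | hi1
        · by_contra hm
          have hm' : mark l i = true := by
            revert hm; cases mark l i <;> simp
          have := (hov ⟨s, hs⟩).2.2 i (by rw [← hl]; omega) hm'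
          change part l (i+1) < part l i at this
          omega
        · have h1 : 0 < part l i := (part_pos_iff l (hpos _) i).mpr hi
          have h2 : part l (i+1) = 0 := part_zero_of_ge _ _ hi1
          omega
      · exact mark_false_of_ge _ _ hi
    · rfl

end TupleToMid2
section MidToTuple

variable {k t r n : ℕ}

/-- the parts of the `q`-th partition extracted from a middle sequence. -/
def AOf (k t : ℕ) (x : ℕ → ℕ) (q i : ℕ) : ℕ :=
  ∑ m ∈ Finset.Ico i t, (x (m*(2*k+1)+q) - x (m*(2*k+1)+q+1))

def lenOf (k t : ℕ) (x : ℕ → ℕ) (q : ℕ) : ℕ :=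
  ((Finset.range t).filter (fun i => AOf k t x q i ≠ 0)).card

def listOf (k t : ℕ) (x : ℕ → ℕ) (b : ℕ → Bool) (q : ℕ) : List (ℕ × Bool) :=
  (List.range (lenOf k t x q)).map (fun i => (AOf k t x q i, b (i*(2*k+1)+q)))

lemma AOf_adj (x : ℕ → ℕ) (q i : ℕ) : AOf k t x q (i+1) ≤ AOf k t x q i :=
  Finset.sum_le_sum_of_subset (Finset.Ico_subset_Ico (by omega) (le_refl _))

lemma AOf_zero (x : ℕ → ℕ) (q i : ℕ) (h : t ≤ i) : AOf k t x q i = 0 := by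
  unfold AOf
  rw [Finset.Ico_eq_empty (by omega)]
  simp

lemma AOf_step (x : ℕ → ℕ) (q i : ℕ) (h : i < t) :
    AOf k t x q i = (x (i*(2*k+1)+q) - x (i*(2*k+1)+q+1)) + AOf k t x q (i+1) := by
  unfold AOf
  rw [Finset.sum_eq_sum_Ico_succ_bot h]

lemma AOf_pos_iff (x : ℕ → ℕ) (q i : ℕ) :
    AOf k t x q i ≠ 0 ↔ i < lenOf k t x q :=
  initseg (AOf k t x q) (AOf_adj x q) t (AOf_zero x q) i

lemma lenOf_le (x : ℕ → ℕ) (q : ℕ) : lenOf k t x q ≤ t := by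
  unfold lenOf
  calc ((Finset.range t).filter _).card ≤ (Finset.range t).card := Finset.card_filter_le _ _
    _ = t := Finset.card_range t

lemma listOf_length (x : ℕ → ℕ) (b : ℕ → Bool) (q : ℕ) :
    (listOf k t x b q).length = lenOf k t x q := by
  unfold listOf; simp

lemma listOf_getD (x : ℕ → ℕ) (b : ℕ → Bool) (q i : ℕ) (h : i < lenOf k t x q) :
    (listOf k t x b q).getD i (0, false) = (AOf k t x q i, b (i*(2*k+1)+q)) := by
  unfold listOf
  exact list_getD_map_range _ _ _ _ h

lemma listOf_part (x : ℕ → ℕ) (b : ℕ → Bool) (q i : ℕ) :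
    part (listOf k t x b q) i = AOf k t x q i := by
  rcases Nat.lt_or_ge i (lenOf k t x q) with h | h
  · unfold part; rw [listOf_getD x b q i h]
  · rw [part_zero_of_ge _ _ (by rw [listOf_length]; omega)]
    by_contra h0
    have := (AOf_pos_iff x q i).mp (fun hh => h0 hh.symm)
    omega

lemma listOf_sorted (x : ℕ → ℕ) (b : ℕ → Bool) (q : ℕ) :
    ((listOf k t x b q).map Prod.fst).Pairwise (· ≥ ·) := by
  unfold listOf
  rw [List.map_map]
  have : (Prod.fst ∘ fun i => (AOf k t x q i, b (i*(2*k+1)+q))) = AOf k t x q := rfl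
  rw [this]
  rw [List.pairwise_map]
  exact List.Pairwise.imp_of_mem
    (fun {a b'} _ _ hab => mono_of_succ _ (AOf_adj x q) (Nat.le_of_lt hab))
    List.pairwise_lt_range

theorem tuple_of_midP (hk : 1 ≤ k) (ht : 1 ≤ t) (hr1 : 1 ≤ r) (hr2 : r ≤ 2*k+1)
    (x : ℕ → ℕ) (b : ℕ → Bool) (hM : MidP n k t r x b) :
    (∀ q : Fin (2*k+1), IsOverpartition (listOf k t x b q.val)) ∧
    (∀ q : Fin (2*k+1), q.val % 2 = 0 → ∀ y ∈ listOf k t x b q.val, y.2 = false) ∧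
    (∀ q : Fin (2*k+1), (listOf k t x b q.val).length ≤ t) ∧
    (∀ q : Fin (2*k+1), q.val = r - 1 → (listOf k t x b q.val).length = t) ∧
    (∀ q : Fin (2*k+1), r ≤ q.val → (listOf k t x b q.val).length < t) ∧
    (∑ q : Fin (2*k+1), ((listOf k t x b q.val).map Prod.fst).sum = n) := by
  obtain ⟨hadj, hzero, hwt, h4, h5, hb1, hb2⟩ := hM
  have hlenA : ∀ q : Fin (2*k+1), AOf k t x q.val (t-1) ≠ 0 → lenOf k t x q.val = t := by
    intro q hA
    have := (AOf_pos_iff (k := k) (t := t) x q.val (t-1)).mp hA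
    have := lenOf_le (k := k) (t := t) x q.val
    omega
  refine ⟨?_, ?_, ?_, ?_, ?_, ?_⟩
  · -- IsOverpartition
    intro q
    refine ⟨listOf_sorted x b q.val, ?_, ?_⟩
    · intro y hy
      unfold listOf at hy
      obtain ⟨i, hi, rfl⟩ := List.mem_map.mp hy
      simp only [List.mem_range] at hi
      have := (AOf_pos_iff x q.val i).mpr hi
      simp only
      omega
    · intro i hi hm
      rw [listOf_length] at hi
      rw [listOf_getD x b q.val i (by omega)] at hm
      rw [listOf_getD x b q.val (i+1) (by omega), listOf_getD x b q.val i (by omega)]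
      simp only at hm ⊢
      -- hm : b (i*(2*k+1)+q.val) = true
      have hxne : x (i*(2*k+1)+q.val) ≠ x (i*(2*k+1)+q.val+1) := by
        intro heq
        rw [hb2 _ heq] at hm
        exact Bool.false_ne_true hm
      have hstep := AOf_step (k := k) (t := t) x q.val i
        (by have := lenOf_le (k := k) (t := t) x q.val; omega)
      have hle := hadj (i*(2*k+1)+q.val)
      omega
  · -- even marks false
    intro q hq y hy
    unfold listOf at hy
    obtain ⟨i, hi, rfl⟩ := List.mem_map.mp hy
    simp only
    apply hb1
    intro hcon
    rw [mod_eval k i q.val q.isLt] at hcon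
    omega
  · intro q
    rw [listOf_length]
    exact lenOf_le x q.val
  · -- length at r-1
    intro q hq
    rw [listOf_length]
    apply hlenA
    have hstep := AOf_step (k := k) (t := t) x q.val (t-1) (by omega)
    have hA0 : AOf k t x q.val (t-1+1) = 0 := AOf_zero x q.val _ (by omega)
    rw [hq] at hstep ⊢
    have e1 : (t-1)*(2*k+1) + (r-1) + 1 = (t-1)*(2*k+1) + r := by omega
    rw [e1, h5] at hstep
    omega
  · -- length short beyond r
    intro q hq
    rw [listOf_length]
    have hA : AOf k t x q.val (t-1) = 0 := by
      have hstep := AOf_step (k := k) (t := t) x q.val (t-1) (by omega)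
      have hA0 : AOf k t x q.val (t-1+1) = 0 := AOf_zero x q.val _ (by omega)
      have hx0 : x ((t-1)*(2*k+1) + q.val) = 0 := by
        have := mono_of_succ x hadj (a := (t-1)*(2*k+1) + r) (b := (t-1)*(2*k+1) + q.val) (by omega)
        omega
      omega
    have h1 : ¬ (t-1 < lenOf k t x q.val) := by
      intro h
      exact ((AOf_pos_iff x q.val (t-1)).mpr h) hA
    have := lenOf_le (k := k) (t := t) x q.val
    omega
  · -- total sum
    have hsum1 : ∀ q : Fin (2*k+1), ((listOf k t x b q.val).map Prod.fst).sum
        = ∑ i ∈ Finset.range t, AOf k t x q.val i := by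
      intro q
      unfold listOf
      rw [List.map_map]
      have e : (Prod.fst ∘ fun i => (AOf k t x q.val i, b (i*(2*k+1)+q.val))) = AOf k t x q.val := rfl
      rw [e, list_sum_map_range]
      apply Finset.sum_subset (Finset.range_subset_range.mpr (lenOf_le x q.val))
      intro i _ hi
      simp only [Finset.mem_range] at hi
      by_contra h0
      have := (AOf_pos_iff x q.val i).mp h0
      omega
    rw [Finset.sum_congr rfl (fun q _ => hsum1 q)]
    rw [Fin.sum_univ_eq_sum_range (fun q => ∑ i ∈ Finset.range t, AOf k t x q i)]
    rw [Finset.sum_comm]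
    have hinner : ∀ i ∈ Finset.range t, ∑ q ∈ Finset.range (2*k+1), AOf k t x q i
        = x (i*(2*k+1)) := by
      intro i hi
      simp only [Finset.mem_range] at hi
      unfold AOf
      rw [Finset.sum_comm]
      have hblock : ∀ m ∈ Finset.Ico i t, ∑ q ∈ Finset.range (2*k+1),
          (x (m*(2*k+1)+q) - x (m*(2*k+1)+q+1)) = x (m*(2*k+1)) - x ((m+1)*(2*k+1)) := by
        intro m _
        have e2 : ∀ q, x (m*(2*k+1)+q) - x (m*(2*k+1)+q+1)
            = (fun p => x p - x (p+1)) (m*(2*k+1)+q) := fun q => rfl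
        rw [Finset.sum_congr rfl (fun q _ => e2 q)]
        have htele := tele x hadj (m*(2*k+1)) (m*(2*k+1)+(2*k+1)) (by omega)
        rw [Finset.sum_Ico_eq_sum_range] at htele
        have e3 : m*(2*k+1)+(2*k+1) - m*(2*k+1) = 2*k+1 := by omega
        rw [e3] at htele
        have e4 : (m+1)*(2*k+1) = m*(2*k+1)+(2*k+1) := by ring
        rw [e4, ← htele]
      rw [Finset.sum_congr rfl hblock]
      have hy : ∀ m, (fun m => x (m*(2*k+1))) (m+1) ≤ (fun m => x (m*(2*k+1))) m := by
        intro m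
        exact mono_of_succ x hadj (Nat.mul_le_mul_right _ (Nat.le_succ m))
      have htele2 := tele (fun m => x (m*(2*k+1))) hy i t (le_of_lt hi)
      rw [htele2, hzero (t*(2*k+1)) (le_refl _), Nat.sub_zero]
    rw [Finset.sum_congr rfl hinner]
    exact hwt

end MidToTuple
section RoundTrips

variable {k t r n : ℕ}

lemma slot_lt (k t i s : ℕ) (hi : i < t) (hs : s < 2*k+1) :
    i*(2*k+1)+s < t*(2*k+1) := by
  have h1 : i+1 ≤ t := hi
  have h2 : i*(2*k+1)+(2*k+1) ≤ t*(2*k+1) := by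
    calc i*(2*k+1)+(2*k+1) = (i+1)*(2*k+1) := (Nat.succ_mul _ _).symm
      _ ≤ t*(2*k+1) := Nat.mul_le_mul_right _ h1
  omega

lemma i_lt_of_slot (k t i s : ℕ) (h : i*(2*k+1)+s < t*(2*k+1)) : i < t := by
  by_contra hc
  have : t*(2*k+1) ≤ i*(2*k+1) := Nat.mul_le_mul_right _ (by omega)
  omega

lemma AOf_xOf (α : Fin (2*k+1) → List (ℕ × Bool))
    (hov : ∀ i, IsOverpartition (α i))
    (hlen : ∀ i : Fin (2*k+1), (α i).length ≤ t)
    (q : Fin (2*k+1)) (i : ℕ) :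
    AOf k t (xOf k α) q.val i = part (α q) i := by
  have hsort := fun j => (hov j).1
  have hpos := fun j => (hov j).2.1
  have hpa : ∀ (j : Fin (2*k+1)) (m : ℕ), part (α j) (m+1) ≤ part (α j) m :=
    fun j m => part_antitone (α j) (hsort j) (hpos j) m
  have hkey : ∀ m, m < t → xOf k α (m*(2*k+1)+q.val) + part (α q) (m+1)
      = xOf k α (m*(2*k+1)+q.val+1) + part (α q) m := by
    intro m _
    have hsplit := sum_split (fun j : Fin (2*k+1) => part (α j) (m+1))
      (fun j : Fin (2*k+1) => part (α j) m) q
    rcases Nat.lt_or_ge q.val (2*k) with h | h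
    · have e1 : m*(2*k+1)+q.val+1 = m*(2*k+1)+(q.val+1) := by omega
      rw [e1, xOf_eval α m (q.val+1) (by omega), xOf_eval α m q.val (by omega)]
      omega
    · have hq : q.val = 2*k := by have := q.isLt; omega
      have e1 : m*(2*k+1)+q.val+1 = (m+1)*(2*k+1)+0 := by rw [hq]; ring
      rw [e1, xOf_eval α (m+1) 0 (by omega), xOf_eval α m q.val (by omega)]
      have e2 : (∑ j : Fin (2*k+1), if (j:ℕ) < 0 then part (α j) ((m+1)+1) else part (α j) (m+1))
          = ∑ j : Fin (2*k+1), if (j:ℕ) < (q:ℕ)+1 then part (α j) (m+1) else part (α j) m := by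
        apply Finset.sum_congr rfl
        intro j _
        rw [if_neg (by omega), if_pos (by have := j.isLt; omega)]
      rw [e2]
      omega
  rcases Nat.lt_or_ge i t with hi | hi
  · unfold AOf
    have hterm : ∀ m ∈ Finset.Ico i t,
        xOf k α (m*(2*k+1)+q.val) - xOf k α (m*(2*k+1)+q.val+1)
          = part (α q) m - part (α q) (m+1) := by
      intro m hm
      simp only [Finset.mem_Ico] at hm
      have h1 := hkey m hm.2
      have h2 := hpa q m
      have h3 := xOf_adj α hsort hpos (m*(2*k+1)+q.val)
      omega
    rw [Finset.sum_congr rfl hterm]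
    rw [tele (part (α q)) (hpa q) i t (le_of_lt hi)]
    rw [part_zero_of_ge (α q) t (hlen q), Nat.sub_zero]
  · rw [AOf_zero _ _ _ hi, part_zero_of_ge (α q) i (le_trans (hlen q) hi)]

lemma listOf_xOf (α : Fin (2*k+1) → List (ℕ × Bool))
    (hov : ∀ i, IsOverpartition (α i))
    (hev : ∀ i : Fin (2*k+1), i.val % 2 = 0 → ∀ x ∈ α i, x.2 = false)
    (hlen : ∀ i : Fin (2*k+1), (α i).length ≤ t)
    (q : Fin (2*k+1)) :
    listOf k t (xOf k α) (bOf k t α) q.val = α q := by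
  have hpos := fun j => (hov j).2.1
  have hA : ∀ i, AOf k t (xOf k α) q.val i = part (α q) i := AOf_xOf α hov hlen q
  have hlen' : lenOf k t (xOf k α) q.val = (α q).length := by
    unfold lenOf
    rw [Finset.filter_congr (fun i _ => by rw [hA i])]
    have hset : (Finset.range t).filter (fun i => part (α q) i ≠ 0)
        = Finset.range (α q).length := by
      ext i
      simp only [Finset.mem_filter, Finset.mem_range]
      constructor
      · intro ⟨_, h2⟩
        have := (part_pos_iff (α q) (hpos q) i).mp (by omega)
        exact this
      · intro h
        have h2 := (part_pos_iff (α q) (hpos q) i).mpr h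
        exact ⟨lt_of_lt_of_le h (hlen q), by omega⟩
    rw [hset, Finset.card_range]
  apply List.ext_getElem
  · rw [listOf_length, hlen']
  · intro i h1 h2
    rw [listOf_length, hlen'] at h1
    simp only [listOf, List.getElem_map, List.getElem_range]
    have hit : i < t := lt_of_lt_of_le h1 (hlen q)
    have hp : part (α q) i = (α q)[i].1 := by
      unfold part
      rw [List.getD_eq_getElem _ _ h2]
    refine Prod.ext ?_ ?_
    · simp only
      rw [hA i, hp]
    · simp only
      rw [bOf_eval α i q.val q.isLt]
      rcases Nat.eq_zero_or_pos (q.val % 2) with hpar | hpar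
      · rw [if_neg (by omega)]
        exact ((hev q hpar) _ (List.getElem_mem h2)).symm
      · rw [if_pos ⟨slot_lt k t i q.val hit q.isLt, by omega⟩]
        have : (⟨q.val, q.isLt⟩ : Fin (2*k+1)) = q := Fin.eta q q.isLt
        rw [this]
        unfold mark
        rw [List.getD_eq_getElem _ _ h2]

lemma xOf_listOf (x : ℕ → ℕ) (b : ℕ → Bool) (hM : MidP n k t r x b) (p : ℕ) :
    xOf k (fun q : Fin (2*k+1) => listOf k t x b q.val) p = x p := by
  obtain ⟨hadj, hzero, _, _, _, hb1, hb2⟩ := hM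
  set α' := fun q : Fin (2*k+1) => listOf k t x b q.val with hα'
  have hlen' : ∀ q : Fin (2*k+1), (α' q).length ≤ t := by
    intro q; rw [hα']; simp only; rw [listOf_length]; exact lenOf_le x q.val
  have heval : ∀ i s, s < 2*k+1 → xOf k α' (i*(2*k+1)+s)
      = ∑ j : Fin (2*k+1), if (j:ℕ) < s then AOf k t x j.val (i+1) else AOf k t x j.val i := by
    intro i s hs
    rw [xOf_eval α' i s hs]
    apply Finset.sum_congr rfl
    intro j _
    rw [hα']
    simp only
    rw [listOf_part x b j.val (i+1), listOf_part x b j.val i]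
  have main : ∀ d p, t*(2*k+1) ≤ p + d → xOf k α' p = x p := by
    intro d
    induction d with
    | zero =>
      intro p hp
      rw [xOf_zero α' hlen' p (by omega), hzero p (by omega)]
    | succ d ih =>
      intro p hp
      rcases Nat.lt_or_ge p (t*(2*k+1)) with h | h
      · obtain ⟨i, s, hs, rfl⟩ := exists_decomp (2*k+1) p (by omega)
        have hit : i < t := i_lt_of_slot k t i s h
        have hnext : xOf k α' (i*(2*k+1)+s+1) = x (i*(2*k+1)+s+1) := ih _ (by omega)
        have hstep := AOf_step (k := k) (t := t) x s i hit
        have hle := hadj (i*(2*k+1)+s)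
        have hsplit := sum_split (fun j : Fin (2*k+1) => AOf k t x j.val (i+1))
          (fun j : Fin (2*k+1) => AOf k t x j.val i) ⟨s, hs⟩
        simp only [Fin.val_mk] at hsplit
        have hAadj := AOf_adj (k := k) (t := t) x s i
        rcases Nat.lt_or_ge (s+1) (2*k+1) with h' | h'
        · have e1 : i*(2*k+1)+s+1 = i*(2*k+1)+(s+1) := by omega
          rw [e1, heval i (s+1) h'] at hnext
          rw [← e1] at hnext
          rw [heval i s hs]
          omega
        · have hs2k : s = 2*k := by omega
          have e1 : i*(2*k+1)+s+1 = (i+1)*(2*k+1)+0 := by rw [hs2k]; ring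
          rw [e1, heval (i+1) 0 (by omega)] at hnext
          rw [← e1] at hnext
          rw [heval i s hs]
          have e2 : (∑ j : Fin (2*k+1), if (j:ℕ) < 0 then AOf k t x j.val ((i+1)+1) else AOf k t x j.val (i+1))
              = ∑ j : Fin (2*k+1), if (j:ℕ) < s+1 then AOf k t x j.val (i+1) else AOf k t x j.val i := by
            apply Finset.sum_congr rfl
            intro j _
            rw [if_neg (by omega), if_pos (by have := j.isLt; omega; )]
          rw [e2] at hnext
          omega
      · rw [xOf_zero α' hlen' p (by omega), hzero p (by omega)]
  exact main (t*(2*k+1)) p (by omega)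

lemma bOf_listOf (x : ℕ → ℕ) (b : ℕ → Bool) (hM : MidP n k t r x b) (p : ℕ) :
    bOf k t (fun q : Fin (2*k+1) => listOf k t x b q.val) p = b p := by
  obtain ⟨hadj, hzero, _, _, _, hb1, hb2⟩ := hM
  by_cases h : p < t*(2*k+1) ∧ p % (2*k+1) % 2 = 1
  · obtain ⟨i, s, hs, rfl⟩ := exists_decomp (2*k+1) p (by omega)
    have hit : i < t := i_lt_of_slot k t i s h.1
    rw [bOf_eval _ i s hs]
    rw [if_pos ⟨h.1, by have := h.2; rwa [mod_eval k i s hs] at this⟩]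
    simp only [Fin.val_mk]
    rcases Nat.lt_or_ge i (lenOf k t x s) with hi | hi
    · unfold mark
      rw [listOf_getD x b s i hi]
    · rw [mark_false_of_ge _ _ (by rw [listOf_length]; omega)]
      have hA : AOf k t x s i = 0 := by
        by_contra h0
        have := (AOf_pos_iff x s i).mp h0
        omega
      have hstep := AOf_step (k := k) (t := t) x s i hit
      have hle := hadj (i*(2*k+1)+s)
      exact (hb2 _ (by omega)).symm
  · unfold bOf
    rw [if_neg h, (hb1 p h)]

end RoundTrips
section DiamondToMid

variable {k t r n : ℕ}

/-- the middle sequence of a diamond: the entries sorted within each pair. -/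
def xD (k : ℕ) (π : ℕ →₀ ℕ) (p : ℕ) : ℕ :=
  if p % (2*k+1) = 0 then π (p+1)
  else if p % (2*k+1) % 2 = 1 then max (π (p+1)) (π (p+2))
  else min (π p) (π (p+1))

/-- the pair-orientation bits of a diamond. -/
def bD (k t : ℕ) (π : ℕ →₀ ℕ) (p : ℕ) : Bool :=
  if p < t*(2*k+1) ∧ p % (2*k+1) % 2 = 1 then decide (π (p+1) < π (p+2)) else false

lemma xD_eval (π : ℕ →₀ ℕ) (i s : ℕ) (hs : s < 2*k+1) :
    xD k π (i*(2*k+1)+s) = if s = 0 then π (i*(2*k+1)+s+1)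
      else if s % 2 = 1 then max (π (i*(2*k+1)+s+1)) (π (i*(2*k+1)+s+2))
      else min (π (i*(2*k+1)+s)) (π (i*(2*k+1)+s+1)) := by
  unfold xD
  rw [mod_eval k i s hs]

lemma xD_adj (hk : 1 ≤ k) (π : ℕ →₀ ℕ) (hD : IsDiamond k π) (p : ℕ) :
    xD k π (p+1) ≤ xD k π p := by
  obtain ⟨i, s, hs, rfl⟩ := exists_decomp (2*k+1) p (by omega)
  obtain ⟨c1, c2, c3⟩ := hD.2 i
  rcases Nat.eq_zero_or_pos s with hs0 | hs1
  · -- s = 0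
    subst hs0
    have e1 : i*(2*k+1)+0+1 = i*(2*k+1)+1 := by omega
    rw [e1, xD_eval π i 1 (by omega), xD_eval π i 0 (by omega)]
    rw [if_neg (by omega), if_pos (by omega), if_pos rfl]
    have e2 : i*(2*k+1)+1+1 = i*(2*k+1)+2 := by omega
    have e3 : i*(2*k+1)+1+2 = i*(2*k+1)+3 := by omega
    have e4 : i*(2*k+1)+0+1 = i*(2*k+1)+1 := by omega
    rw [e2, e3, e4]
    exact c1
  rcases Nat.even_or_odd s with hpar | hpar
  · -- s even, s ≥ 2
    obtain ⟨j, rfl⟩ : ∃ j, s = 2*j := by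
      obtain ⟨j, hj⟩ := hpar; exact ⟨j, by omega⟩
    have hj1 : 1 ≤ j := by omega
    rcases Nat.lt_or_ge (2*j) (2*k) with hlt | hge
    · -- 1 ≤ j < k
      have hjk : j < k := by omega
      have e1 : i*(2*k+1)+2*j+1 = i*(2*k+1)+(2*j+1) := by omega
      rw [e1, xD_eval π i (2*j+1) (by omega), xD_eval π i (2*j) hs]
      rw [if_neg (by omega), if_pos (by omega), if_neg (by omega), if_neg (by omega)]
      have e2 : i*(2*k+1)+(2*j+1)+1 = i*(2*k+1)+2*j+2 := by omega
      have e3 : i*(2*k+1)+(2*j+1)+2 = i*(2*k+1)+2*j+3 := by omega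
      rw [e2, e3]
      exact c2 j hj1 hjk
    · -- s = 2k
      have e1 : i*(2*k+1)+2*j+1 = (i+1)*(2*k+1)+0 := by
        rw [show j = k by omega]; ring
      rw [e1, xD_eval π (i+1) 0 (by omega), xD_eval π i (2*j) hs]
      rw [if_pos rfl, if_neg (by omega), if_neg (by omega)]
      have e2 : (i+1)*(2*k+1)+0+1 = (i+1)*(2*k+1)+1 := by omega
      rw [e2, show j = k by omega]
      exact c3
  · -- s odd
    obtain ⟨j, rfl⟩ : ∃ j, s = 2*j+1 := by
      obtain ⟨j, hj⟩ := hpar; exact ⟨j, by omega⟩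
    have e1 : i*(2*k+1)+(2*j+1)+1 = i*(2*k+1)+(2*j+2) := by omega
    rw [e1, xD_eval π i (2*j+2) (by omega), xD_eval π i (2*j+1) hs]
    rw [if_neg (by omega), if_neg (by omega), if_neg (by omega), if_pos (by omega)]
    have e3 : i*(2*k+1)+(2*j+2)+1 = i*(2*k+1)+(2*j+1)+2 := by omega
    have e2 : i*(2*k+1)+(2*j+2) = i*(2*k+1)+(2*j+1)+1 := by omega
    rw [e3, e2]
    exact le_trans (min_le_left _ _) (le_max_left _ _)

lemma pi_zero_of_gt (π : ℕ →₀ ℕ) (hbd : ∀ m ∈ π.support, m ≤ t*(2*k+1)) (m : ℕ)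
    (hm : t*(2*k+1) < m) : π m = 0 := by
  by_contra h0
  have := hbd m (Finsupp.mem_support_iff.mpr h0)
  omega

lemma xD_zero (π : ℕ →₀ ℕ)
    (hbd : ∀ m ∈ π.support, m ≤ t*(2*k+1)) (p : ℕ) (hp : t*(2*k+1) ≤ p) :
    xD k π p = 0 := by
  unfold xD
  have hz : ∀ m, t*(2*k+1) < m → π m = 0 := pi_zero_of_gt π hbd
  split_ifs with h1 h2
  · exact hz _ (by omega)
  · rw [hz _ (by omega), hz _ (by omega)]; simp
  · have hp' : t*(2*k+1) < p := by
      rcases Nat.lt_or_ge (t*(2*k+1)) p with h | h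
      · exact h
      · exfalso
        have : p = t*(2*k+1) := by omega
        subst this
        exact h1 (Nat.mul_mod_left t (2*k+1))
    rw [hz _ (by omega), hz _ (by omega)]
    simp

lemma weight_eq (π : ℕ →₀ ℕ) (hbd : ∀ m ∈ π.support, m ≤ t*(2*k+1)) :
    diamondWeight k π = ∑ i ∈ Finset.range t, π (i*(2*k+1)+1) := by
  unfold diamondWeight
  rw [Finset.sum_subset (s₁ := π.support) (s₂ := Finset.range (t*(2*k+1)+1))]
  · rw [Finset.sum_range_succ']
    have hterm0 : (if 1 ≤ 0 ∧ (0-1) % (2*k+1) = 0 then π 0 else 0) = 0 := by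
      rw [if_neg (by omega)]
    rw [hterm0, add_zero]
    have hterm : ∀ p, (if 1 ≤ p+1 ∧ (p+1-1) % (2*k+1) = 0 then π (p+1) else 0)
        = if p % (2*k+1) = 0 then π (p+1) else 0 := by
      intro p
      have e1 : p + 1 - 1 = p := by omega
      rw [e1]
      by_cases h : p % (2*k+1) = 0
      · rw [if_pos ⟨by omega, h⟩, if_pos h]
      · rw [if_neg (by omega), if_neg h]
    rw [Finset.sum_congr rfl (fun p _ => hterm p)]
    rw [sum_blocks (fun p => if p % (2*k+1) = 0 then π (p+1) else 0) (2*k+1) t]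
    apply Finset.sum_congr rfl
    intro i _
    rw [Finset.sum_eq_single_of_mem 0 (Finset.mem_range.mpr (by omega))]
    · rw [mod_eval k i 0 (by omega), if_pos rfl]
    · intro s hs hs0
      rw [mod_eval k i s (Finset.mem_range.mp hs), if_neg hs0]
  · intro m hm
    rw [Finset.mem_range]
    have := hbd m hm
    omega
  · intro m _ hm
    rw [Finsupp.notMem_support_iff.mp hm]
    split_ifs <;> rfl

end DiamondToMid
section DiamondToMid2

variable {k t r n : ℕ}

lemma ind_max_min (a b : ℕ) :
    ((if max a b ≠ 0 then 1 else 0) + if min a b ≠ 0 then 1 else 0)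
      = ((if a ≠ 0 then 1 else 0) + if b ≠ 0 then 1 else 0 : ℕ) := by
  rcases le_total a b with h | h
  · rw [max_eq_right h, min_eq_left h, add_comm]
  · rw [max_eq_left h, min_eq_right h]

lemma card_support_pi (π : ℕ →₀ ℕ) (hD0 : π 0 = 0)
    (hbd : ∀ m ∈ π.support, m ≤ t*(2*k+1)) :
    ((Finset.range (t*(2*k+1))).filter (fun p => π (p+1) ≠ 0)).card = π.support.card := by
  apply Finset.card_bij (fun p _ => p + 1)
  · intro p hp
    simp only [Finset.mem_filter] at hp
    exact Finsupp.mem_support_iff.mpr hp.2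
  · intro p hp q hq h
    omega
  · intro m hm
    have h1 : π m ≠ 0 := Finsupp.mem_support_iff.mp hm
    have h2 : m ≤ t*(2*k+1) := hbd m hm
    have h3 : m ≠ 0 := fun h => h1 (h ▸ hD0)
    refine ⟨m - 1, ?_, by omega⟩
    simp only [Finset.mem_filter, Finset.mem_range]
    constructor
    · omega
    · rw [show m - 1 + 1 = m by omega]
      exact h1

lemma card_xD (hk : 1 ≤ k) (π : ℕ →₀ ℕ) :
    ((Finset.range (t*(2*k+1))).filter (fun p => xD k π p ≠ 0)).card
      = ((Finset.range (t*(2*k+1))).filter (fun p => π (p+1) ≠ 0)).card := by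
  rw [Finset.card_filter, Finset.card_filter]
  rw [sum_blocks (fun p => if xD k π p ≠ 0 then 1 else 0) (2*k+1) t]
  rw [sum_blocks (fun p => if π (p+1) ≠ 0 then 1 else 0) (2*k+1) t]
  apply Finset.sum_congr rfl
  intro i _
  rw [sum_pairs (fun s => if xD k π (i*(2*k+1)+s) ≠ 0 then 1 else 0) k]
  rw [sum_pairs (fun s => if π (i*(2*k+1)+s+1) ≠ 0 then 1 else 0) k]
  congr 1
  · -- head terms
    have h1 : xD k π (i*(2*k+1)+0) = π (i*(2*k+1)+0+1) := by
      rw [xD_eval π i 0 (by omega), if_pos rfl]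
    rw [h1]
  · apply Finset.sum_congr rfl
    intro j hj
    simp only [Finset.mem_range] at hj
    have h1 : xD k π (i*(2*k+1)+(2*j+1))
        = max (π (i*(2*k+1)+(2*j+1)+1)) (π (i*(2*k+1)+(2*j+1)+2)) := by
      rw [xD_eval π i (2*j+1) (by omega), if_neg (by omega), if_pos (by omega)]
    have h2 : xD k π (i*(2*k+1)+(2*j+2))
        = min (π (i*(2*k+1)+(2*j+2))) (π (i*(2*k+1)+(2*j+2)+1)) := by
      rw [xD_eval π i (2*j+2) (by omega), if_neg (by omega), if_neg (by omega)]
    rw [h1, h2]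
    have e1 : i*(2*k+1)+(2*j+2) = i*(2*k+1)+(2*j+1)+1 := by omega
    have e2 : i*(2*k+1)+(2*j+2)+1 = i*(2*k+1)+(2*j+1)+2 := by omega
    rw [e2, e1]
    exact ind_max_min _ _

theorem midP_of_diamond (hk : 1 ≤ k) (ht : 1 ≤ t) (hr1 : 1 ≤ r) (hr2 : r ≤ 2*k+1)
    (π : ℕ →₀ ℕ) (hD : IsDiamond k π) (hw : diamondWeight k π = n)
    (hbd : ∀ m ∈ π.support, m ≤ t*(2*k+1))
    (hcard : π.support.card = (t-1)*(2*k+1)+r) :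
    MidP n k t r (xD k π) (bD k t π) := by
  have hadj := xD_adj hk π hD
  have hzero := xD_zero (t := t) π hbd
  have hcc : ((Finset.range (t*(2*k+1))).filter (fun p => xD k π p ≠ 0)).card
      = (t-1)*(2*k+1)+r := by
    rw [card_xD hk π, card_support_pi π hD.1 hbd, hcard]
  have hiff : ∀ p, xD k π p ≠ 0 ↔ p < (t-1)*(2*k+1)+r := by
    intro p
    rw [initseg (xD k π) hadj (t*(2*k+1)) hzero p, hcc]
  refine ⟨hadj, hzero, ?_, ?_, ?_, ?_, ?_⟩
  · -- weight
    have h1 : ∀ i, xD k π (i*(2*k+1)) = π (i*(2*k+1)+1) := by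
      intro i
      have h2 : xD k π (i*(2*k+1)+0) = π (i*(2*k+1)+0+1) := by
        rw [xD_eval π i 0 (by omega), if_pos rfl]
      simpa using h2
    rw [Finset.sum_congr rfl (fun i _ => h1 i), ← weight_eq π hbd]
    exact hw
  · rw [hiff]
    have h1 : (t-1)*(2*k+1) + (r-1) < (t-1)*(2*k+1) + r := by omega
    omega
  · by_contra h0
    have := (hiff ((t-1)*(2*k+1)+r)).mp h0
    omega
  · intro p hp
    unfold bD
    rw [if_neg hp]
  · intro p hxp
    unfold bD
    split_ifs with h
    · obtain ⟨i, s, hs, rfl⟩ := exists_decomp (2*k+1) p (by omega)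
      have hodd : s % 2 = 1 := by
        have := h.2
        rwa [mod_eval k i s hs] at this
      have hs2k : s < 2*k := by omega
      have h1 : xD k π (i*(2*k+1)+s)
          = max (π (i*(2*k+1)+s+1)) (π (i*(2*k+1)+s+2)) := by
        rw [xD_eval π i s hs, if_neg (by omega), if_pos hodd]
      have e1 : i*(2*k+1)+s+1 = i*(2*k+1)+(s+1) := by omega
      have h2 : xD k π (i*(2*k+1)+s+1)
          = min (π (i*(2*k+1)+s+1)) (π (i*(2*k+1)+s+2)) := by
        rw [e1, xD_eval π i (s+1) (by omega), if_neg (by omega), if_neg (by omega)]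
        rfl
      rw [h1, h2] at hxp
      have hle1 := min_le_left (π (i*(2*k+1)+s+1)) (π (i*(2*k+1)+s+2))
      have hle2 := le_max_left (π (i*(2*k+1)+s+1)) (π (i*(2*k+1)+s+2))
      have hle3 := min_le_right (π (i*(2*k+1)+s+1)) (π (i*(2*k+1)+s+2))
      have hle4 := le_max_right (π (i*(2*k+1)+s+1)) (π (i*(2*k+1)+s+2))
      simp only [decide_eq_false_iff_not]
      omega
    · rfl

end DiamondToMid2
section MidToDiamond

variable {k t r n : ℕ}

/-- the diamond entries reconstructed from a middle sequence and bits. -/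
def yM (k : ℕ) (x : ℕ → ℕ) (b : ℕ → Bool) (p : ℕ) : ℕ :=
  if p % (2*k+1) = 0 then x p
  else if p % (2*k+1) % 2 = 1 then (if b p then x (p+1) else x p)
  else (if b (p-1) then x (p-1) else x p)

/-- the diamond reconstructed from a middle sequence and bits. -/
noncomputable def piF (k t : ℕ) (x : ℕ → ℕ) (b : ℕ → Bool) : ℕ →₀ ℕ :=
  Finsupp.onFinset (Finset.range (t*(2*k+1)+1))
    (fun m => if m = 0 ∨ t*(2*k+1) < m then 0 else yM k x b (m-1))
    (fun m h => by
      rw [Finset.mem_range]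
      by_contra hc
      exact h (if_pos (Or.inr (by omega))))

lemma yM_slot0 (x : ℕ → ℕ) (b : ℕ → Bool) (i : ℕ) :
    yM k x b (i*(2*k+1)) = x (i*(2*k+1)) := by
  unfold yM
  rw [if_pos (Nat.mul_mod_left i (2*k+1))]

lemma yM_odd (x : ℕ → ℕ) (b : ℕ → Bool) (i s : ℕ) (hodd : s % 2 = 1) (hs2 : s < 2*k) :
    yM k x b (i*(2*k+1)+s)
      = if b (i*(2*k+1)+s) then x (i*(2*k+1)+s+1) else x (i*(2*k+1)+s) := by
  unfold yM
  rw [mod_eval k i s (by omega), if_neg (by omega), if_pos hodd]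

lemma yM_odd' (x : ℕ → ℕ) (b : ℕ → Bool) (i s : ℕ) (hodd : s % 2 = 1) (hs2 : s < 2*k) :
    yM k x b (i*(2*k+1)+s+1)
      = if b (i*(2*k+1)+s) then x (i*(2*k+1)+s) else x (i*(2*k+1)+s+1) := by
  unfold yM
  have e1 : i*(2*k+1)+s+1 = i*(2*k+1)+(s+1) := by omega
  rw [e1, mod_eval k i (s+1) (by omega), if_neg (by omega), if_neg (by omega)]
  have e2 : i*(2*k+1)+(s+1)-1 = i*(2*k+1)+s := by omega
  rw [e2, ← e1]

lemma yM_max (x : ℕ → ℕ) (b : ℕ → Bool) (hadj : ∀ p, x (p+1) ≤ x p)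
    (i s : ℕ) (hodd : s % 2 = 1) (hs2 : s < 2*k) :
    max (yM k x b (i*(2*k+1)+s)) (yM k x b (i*(2*k+1)+s+1)) = x (i*(2*k+1)+s) := by
  rw [yM_odd x b i s hodd hs2, yM_odd' x b i s hodd hs2]
  have := hadj (i*(2*k+1)+s)
  cases hb : b (i*(2*k+1)+s) <;> simp <;> omega

lemma yM_min (x : ℕ → ℕ) (b : ℕ → Bool) (hadj : ∀ p, x (p+1) ≤ x p)
    (i s : ℕ) (hodd : s % 2 = 1) (hs2 : s < 2*k) :
    min (yM k x b (i*(2*k+1)+s)) (yM k x b (i*(2*k+1)+s+1)) = x (i*(2*k+1)+s+1) := by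
  rw [yM_odd x b i s hodd hs2, yM_odd' x b i s hodd hs2]
  have := hadj (i*(2*k+1)+s)
  cases hb : b (i*(2*k+1)+s) <;> simp <;> omega

lemma yM_zero (hk : 1 ≤ k) (x : ℕ → ℕ) (b : ℕ → Bool)
    (hzero : ∀ p, t*(2*k+1) ≤ p → x p = 0) (p : ℕ) (hp : t*(2*k+1) ≤ p) :
    yM k x b p = 0 := by
  obtain ⟨i, s, hs, rfl⟩ := exists_decomp (2*k+1) p (by omega)
  have hit : t ≤ i := by
    by_contra h
    have h2 : i*(2*k+1)+s < t*(2*k+1) := slot_lt k t i s (by omega) hs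
    omega
  have hiK : t*(2*k+1) ≤ i*(2*k+1) := Nat.mul_le_mul_right _ hit
  rcases Nat.eq_zero_or_pos s with hs0 | hs1
  · subst hs0
    rw [show i*(2*k+1)+0 = i*(2*k+1) from rfl, yM_slot0]
    exact hzero _ (by omega)
  rcases Nat.even_or_odd s with hpar | hpar
  · obtain ⟨j, rfl⟩ : ∃ j, s = 2*j := by
      obtain ⟨j, hj⟩ := hpar; exact ⟨j, by omega⟩
    have e1 : i*(2*k+1)+2*j = i*(2*k+1)+(2*j-1)+1 := by omega
    rw [e1, yM_odd' x b i (2*j-1) (by omega) (by omega)]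
    split_ifs with hb
    · exact hzero _ (by omega)
    · exact hzero _ (by omega)
  · have hodd : s % 2 = 1 := Nat.odd_iff.mp hpar
    rw [yM_odd x b i s hodd (by omega)]
    split_ifs with hb
    · exact hzero _ (by omega)
    · exact hzero _ (by omega)

lemma piF_apply (x : ℕ → ℕ) (b : ℕ → Bool) (m : ℕ) :
    piF k t x b m = if m = 0 ∨ t*(2*k+1) < m then 0 else yM k x b (m-1) := rfl

lemma piF_eval (hk : 1 ≤ k) (x : ℕ → ℕ) (b : ℕ → Bool)
    (hzero : ∀ p, t*(2*k+1) ≤ p → x p = 0) (m : ℕ) (hm : 1 ≤ m) :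
    piF k t x b m = yM k x b (m-1) := by
  rw [piF_apply]
  rcases Nat.lt_or_ge (t*(2*k+1)) m with h | h
  · rw [if_pos (Or.inr h), yM_zero hk x b hzero (m-1) (by omega)]
  · rw [if_neg (by omega)]

lemma piF_bd (x : ℕ → ℕ) (b : ℕ → Bool) :
    ∀ m ∈ (piF k t x b).support, m ≤ t*(2*k+1) := by
  intro m hm
  have := Finsupp.support_onFinset_subset hm
  rw [Finset.mem_range] at this
  omega

theorem diamond_of_midP (hk : 1 ≤ k) (ht : 1 ≤ t) (hr1 : 1 ≤ r) (hr2 : r ≤ 2*k+1)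
    (x : ℕ → ℕ) (b : ℕ → Bool) (hM : MidP n k t r x b) :
    IsDiamond k (piF k t x b) ∧ diamondWeight k (piF k t x b) = n ∧
    (∀ m ∈ (piF k t x b).support, m ≤ t*(2*k+1)) ∧
    (piF k t x b).support.card = (t-1)*(2*k+1)+r := by
  obtain ⟨hadj, hzero, hwt, h4, h5, hb1, hb2⟩ := hM
  set π := piF k t x b with hπ
  have hev : ∀ m, 1 ≤ m → π m = yM k x b (m-1) := piF_eval hk x b hzero
  have hev' : ∀ p, π (p+1) = yM k x b p := by
    intro p
    rw [hev (p+1) (by omega)]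
    congr 1
  have hD0 : π 0 = 0 := by rw [hπ, piF_apply, if_pos (Or.inl rfl)]
  have hD : IsDiamond k π := by
    refine ⟨hD0, ?_⟩
    intro i
    refine ⟨?_, ?_, ?_⟩
    · -- head condition
      have e1 : i*(2*k+1)+2 = i*(2*k+1)+1+1 := by omega
      rw [hev' (i*(2*k+1)), e1]
      have e2 : i*(2*k+1)+3 = i*(2*k+1)+1+1+1 := by omega
      rw [e2, hev (i*(2*k+1)+1+1+1) (by omega), hev (i*(2*k+1)+1+1) (by omega)]
      have e3 : i*(2*k+1)+1+1+1-1 = i*(2*k+1)+1+1 := by omega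
      have e4 : i*(2*k+1)+1+1-1 = i*(2*k+1)+1 := by omega
      rw [e3, e4]
      rw [yM_slot0 x b i]
      calc max (yM k x b (i*(2*k+1)+1)) (yM k x b (i*(2*k+1)+1+1))
          = x (i*(2*k+1)+1) := yM_max x b hadj i 1 (by omega) (by omega)
        _ ≤ x (i*(2*k+1)) := hadj _
    · intro j hj1 hjk
      have e1 : i*(2*k+1)+2*j = i*(2*k+1)+(2*j-1)+1 := by omega
      have e2 : i*(2*k+1)+2*j+1 = i*(2*k+1)+(2*j-1)+1+1 := by omega
      have e3 : i*(2*k+1)+2*j+2 = i*(2*k+1)+(2*j+1)+1 := by omega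
      have e4 : i*(2*k+1)+2*j+3 = i*(2*k+1)+(2*j+1)+1+1 := by omega
      rw [e4, e3, e2, e1, hev' _, hev' _, hev' _, hev' _]
      have hmin := yM_min (k := k) x b hadj i (2*j-1) (by omega) (by omega)
      have hmax := yM_max (k := k) x b hadj i (2*j+1) (by omega) (by omega)
      rw [hmin, hmax]
      have e5 : i*(2*k+1)+(2*j+1) = i*(2*k+1)+(2*j-1)+1+1 := by omega
      rw [e5]
      exact hadj _
    · have e1 : i*(2*k+1)+2*k = i*(2*k+1)+(2*k-1)+1 := by omega
      have e2 : i*(2*k+1)+2*k+1 = i*(2*k+1)+(2*k-1)+1+1 := by omega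
      rw [e2, e1, hev' _, hev' _]
      have hmin := yM_min (k := k) x b hadj i (2*k-1) (by omega) (by omega)
      rw [hmin, hev' ((i+1)*(2*k+1)), yM_slot0 x b (i+1)]
      have e3 : (i+1)*(2*k+1) = i*(2*k+1)+(2*k-1)+1+1 := by
        have h2 : (i+1)*(2*k+1) = i*(2*k+1)+(2*k+1) := by ring
        omega
      rw [e3]
      exact hadj _
  refine ⟨hD, ?_, piF_bd x b, ?_⟩
  · -- weight
    rw [weight_eq π (piF_bd x b)]
    have h1 : ∀ i, π (i*(2*k+1)+1) = x (i*(2*k+1)) := by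
      intro i
      rw [hev' _, yM_slot0]
    rw [Finset.sum_congr rfl (fun i _ => h1 i)]
    exact hwt
  · -- support cardinality
    rw [← card_support_pi π hD0 (piF_bd x b)]
    have h1 : ((Finset.range (t*(2*k+1))).filter (fun p => π (p+1) ≠ 0)).card
        = ((Finset.range (t*(2*k+1))).filter (fun p => x p ≠ 0)).card := by
      rw [Finset.card_filter, Finset.card_filter]
      rw [sum_blocks (fun p => if π (p+1) ≠ 0 then 1 else 0) (2*k+1) t]
      rw [sum_blocks (fun p => if x p ≠ 0 then 1 else 0) (2*k+1) t]
      apply Finset.sum_congr rfl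
      intro i _
      rw [sum_pairs (fun s => if π (i*(2*k+1)+s+1) ≠ 0 then 1 else 0) k]
      rw [sum_pairs (fun s => if x (i*(2*k+1)+s) ≠ 0 then 1 else 0) k]
      congr 1
      · rw [hev' _, yM_slot0]
        rfl
      · apply Finset.sum_congr rfl
        intro j hj
        simp only [Finset.mem_range] at hj
        have e1 : i*(2*k+1)+(2*j+2) = i*(2*k+1)+(2*j+1)+1 := by omega
        rw [e1, hev' _, hev' _]
        have hmax := yM_max (k := k) x b hadj i (2*j+1) (by omega) (by omega)
        have hmin := yM_min (k := k) x b hadj i (2*j+1) (by omega) (by omega)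
        have := ind_max_min (yM k x b (i*(2*k+1)+(2*j+1))) (yM k x b (i*(2*k+1)+(2*j+1)+1))
        rw [hmax, hmin] at this
        rw [← this]
    have h2 : ((Finset.range (t*(2*k+1))).filter (fun p => x p ≠ 0)).card
        = (t-1)*(2*k+1)+r := by
      set cc := ((Finset.range (t*(2*k+1))).filter (fun p => x p ≠ 0)).card with hcc
      have hiff : ∀ p, x p ≠ 0 ↔ p < cc := fun p => initseg x hadj _ hzero p
      have hup : (t-1)*(2*k+1)+(r-1) < cc := (hiff _).mp h4
      have hccN : cc ≤ t*(2*k+1) := by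
        rw [hcc]
        calc ((Finset.range (t*(2*k+1))).filter _).card
            ≤ (Finset.range (t*(2*k+1))).card := Finset.card_filter_le _ _
          _ = t*(2*k+1) := Finset.card_range _
      have hN : t*(2*k+1) = (t-1)*(2*k+1)+(2*k+1) := by
        have h3 : t-1+1 = t := by omega
        calc t*(2*k+1) = (t-1+1)*(2*k+1) := by rw [h3]
          _ = (t-1)*(2*k+1)+(2*k+1) := Nat.succ_mul _ _
      rcases Nat.lt_or_ge ((t-1)*(2*k+1)+r) (t*(2*k+1)) with hc | hc
      · have hdown : ¬ ((t-1)*(2*k+1)+r < cc) := fun h => ((hiff _).mpr h) h5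
        omega
      · omega
    rw [h1, h2]

end MidToDiamond
section DiamondRoundTrips

variable {k t r n : ℕ}

lemma piF_xD (hk : 1 ≤ k) (ht : 1 ≤ t) (π : ℕ →₀ ℕ) (hD : IsDiamond k π)
    (hbd : ∀ m ∈ π.support, m ≤ t*(2*k+1)) :
    piF k t (xD k π) (bD k t π) = π := by
  have hzx : ∀ p, t*(2*k+1) ≤ p → xD k π p = 0 := xD_zero (t := t) π hbd
  ext m
  rcases Nat.eq_zero_or_pos m with hm0 | hm1
  · subst hm0
    rw [piF_apply, if_pos (Or.inl rfl), hD.1]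
  rcases Nat.lt_or_ge (t*(2*k+1)) m with hmN | hmN
  · rw [piF_apply, if_pos (Or.inr hmN), pi_zero_of_gt π hbd m hmN]
  rw [piF_eval hk _ _ hzx m hm1]
  obtain ⟨i, s, hs, hp⟩ := exists_decomp (2*k+1) (m-1) (by omega)
  have hm : m = i*(2*k+1)+s+1 := by omega
  have hpN : i*(2*k+1)+s < t*(2*k+1) := by omega
  rw [hm]
  have e0 : i*(2*k+1)+s+1-1 = i*(2*k+1)+s := by omega
  rw [e0]
  rcases Nat.eq_zero_or_pos s with hs0 | hs1
  · subst hs0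
    have h0 : yM k (xD k π) (bD k t π) (i*(2*k+1)+0) = xD k π (i*(2*k+1)+0) :=
      yM_slot0 _ _ i
    rw [h0, xD_eval π i 0 (by omega), if_pos rfl]
  rcases Nat.even_or_odd s with hpar | hpar
  · -- s even, ≥ 2
    obtain ⟨j, rfl⟩ : ∃ j, s = 2*j := by
      obtain ⟨j, hj⟩ := hpar; exact ⟨j, by omega⟩
    have e1 : i*(2*k+1)+2*j = i*(2*k+1)+(2*j-1)+1 := by omega
    rw [e1, yM_odd' (k := k) _ _ i (2*j-1) (by omega) (by omega)]
    have hbD : bD k t π (i*(2*k+1)+(2*j-1))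
        = decide (π (i*(2*k+1)+(2*j-1)+1) < π (i*(2*k+1)+(2*j-1)+2)) := by
      unfold bD
      rw [if_pos ⟨by omega, by rw [mod_eval k i (2*j-1) (by omega)]; omega⟩]
    have hx1 : xD k π (i*(2*k+1)+(2*j-1))
        = max (π (i*(2*k+1)+(2*j-1)+1)) (π (i*(2*k+1)+(2*j-1)+2)) := by
      rw [xD_eval π i (2*j-1) (by omega), if_neg (by omega), if_pos (by omega)]
    have hx2 : xD k π (i*(2*k+1)+(2*j-1)+1)
        = min (π (i*(2*k+1)+(2*j-1)+1)) (π (i*(2*k+1)+(2*j-1)+2)) := by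
      have e2 : i*(2*k+1)+(2*j-1)+1 = i*(2*k+1)+(2*j-1+1) := by omega
      rw [e2, xD_eval π i (2*j-1+1) (by omega), if_neg (by omega), if_neg (by omega)]
      rfl
    rw [hbD, hx1, hx2]
    by_cases hlt : π (i*(2*k+1)+(2*j-1)+1) < π (i*(2*k+1)+(2*j-1)+2)
    · rw [decide_eq_true hlt, if_pos rfl]
      exact max_eq_right (le_of_lt hlt)
    · rw [decide_eq_false hlt]
      simp only [Bool.false_eq_true, if_false]
      exact min_eq_right (le_of_not_gt hlt)
  · -- s odd
    have hodd : s % 2 = 1 := Nat.odd_iff.mp hpar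
    rw [yM_odd (k := k) _ _ i s hodd (by omega)]
    have hbD : bD k t π (i*(2*k+1)+s)
        = decide (π (i*(2*k+1)+s+1) < π (i*(2*k+1)+s+2)) := by
      unfold bD
      rw [if_pos ⟨hpN, by rw [mod_eval k i s hs]; omega⟩]
    have hx1 : xD k π (i*(2*k+1)+s)
        = max (π (i*(2*k+1)+s+1)) (π (i*(2*k+1)+s+2)) := by
      rw [xD_eval π i s hs, if_neg (by omega), if_pos hodd]
    have hx2 : xD k π (i*(2*k+1)+s+1)
        = min (π (i*(2*k+1)+s+1)) (π (i*(2*k+1)+s+2)) := by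
      have e2 : i*(2*k+1)+s+1 = i*(2*k+1)+(s+1) := by omega
      rw [e2, xD_eval π i (s+1) (by omega), if_neg (by omega), if_neg (by omega)]
      rfl
    rw [hbD, hx1, hx2]
    by_cases hlt : π (i*(2*k+1)+s+1) < π (i*(2*k+1)+s+2)
    · rw [decide_eq_true hlt, if_pos rfl]
      exact min_eq_left (le_of_lt hlt)
    · rw [decide_eq_false hlt]
      simp only [Bool.false_eq_true, if_false]
      exact max_eq_left (le_of_not_gt hlt)

lemma xD_piF (hk : 1 ≤ k) (ht : 1 ≤ t) (hr1 : 1 ≤ r) (hr2 : r ≤ 2*k+1)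
    (x : ℕ → ℕ) (b : ℕ → Bool) (hM : MidP n k t r x b) (p : ℕ) :
    xD k (piF k t x b) p = x p := by
  obtain ⟨hadj, hzero, hwt, h4, h5, hb1, hb2⟩ := hM
  have hev' : ∀ p, piF k t x b (p+1) = yM k x b p := by
    intro p
    rw [piF_eval hk x b hzero (p+1) (by omega)]
    rfl
  rcases Nat.lt_or_ge p (t*(2*k+1)) with hpN | hpN
  · obtain ⟨i, s, hs, rfl⟩ := exists_decomp (2*k+1) p (by omega)
    rcases Nat.eq_zero_or_pos s with hs0 | hs1
    · subst hs0
      rw [xD_eval _ i 0 (by omega), if_pos rfl, hev' _]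
      have h0 : yM k x b (i*(2*k+1)) = x (i*(2*k+1)+0) := yM_slot0 x b i
      rw [h0]
    rcases Nat.even_or_odd s with hpar | hpar
    · obtain ⟨j, rfl⟩ : ∃ j, s = 2*j := by
        obtain ⟨j, hj⟩ := hpar; exact ⟨j, by omega⟩
      rw [xD_eval _ i (2*j) hs, if_neg (by omega), if_neg (by omega)]
      have e1 : i*(2*k+1)+2*j = i*(2*k+1)+(2*j-1)+1 := by omega
      rw [e1, hev' _]
      have e2 : i*(2*k+1)+(2*j-1)+1+1 = i*(2*k+1)+(2*j-1)+1+1 := rfl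
      rw [show i*(2*k+1)+(2*j-1)+1+1 = (i*(2*k+1)+(2*j-1)+1)+1 from rfl, hev' _]
      have := yM_min (k := k) x b hadj i (2*j-1) (by omega) (by omega)
      rw [this]
    · have hodd : s % 2 = 1 := Nat.odd_iff.mp hpar
      rw [xD_eval _ i s hs, if_neg (by omega), if_pos hodd]
      have e1 : i*(2*k+1)+s+2 = (i*(2*k+1)+s+1)+1 := by omega
      rw [e1, hev' _, hev' _]
      exact yM_max (k := k) x b hadj i s hodd (by omega)
  · rw [xD_zero (t := t) _ (piF_bd x b) p hpN, hzero p hpN]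

lemma bD_piF (hk : 1 ≤ k) (ht : 1 ≤ t) (hr1 : 1 ≤ r) (hr2 : r ≤ 2*k+1)
    (x : ℕ → ℕ) (b : ℕ → Bool) (hM : MidP n k t r x b) (p : ℕ) :
    bD k t (piF k t x b) p = b p := by
  obtain ⟨hadj, hzero, hwt, h4, h5, hb1, hb2⟩ := hM
  have hev' : ∀ p, piF k t x b (p+1) = yM k x b p := by
    intro p
    rw [piF_eval hk x b hzero (p+1) (by omega)]
    rfl
  by_cases h : p < t*(2*k+1) ∧ p % (2*k+1) % 2 = 1
  · obtain ⟨i, s, hs, rfl⟩ := exists_decomp (2*k+1) p (by omega)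
    have hodd : s % 2 = 1 := by
      have := h.2; rwa [mod_eval k i s hs] at this
    unfold bD
    rw [if_pos h]
    have e1 : i*(2*k+1)+s+2 = (i*(2*k+1)+s+1)+1 := by omega
    rw [e1, hev' _, hev' _]
    rw [yM_odd (k := k) x b i s hodd (by omega), yM_odd' (k := k) x b i s hodd (by omega)]
    cases hb : b (i*(2*k+1)+s)
    · simp only [Bool.false_eq_true, if_false]
      have := hadj (i*(2*k+1)+s)
      simp only [decide_eq_false_iff_not]
      omega
    · simp only [if_true]
      have hne : x (i*(2*k+1)+s) ≠ x (i*(2*k+1)+s+1) := by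
        intro heq
        rw [hb2 _ heq] at hb
        exact Bool.false_ne_true hb
      have := hadj (i*(2*k+1)+s)
      rw [decide_eq_true (by omega)]
  · unfold bD
    rw [if_neg h, hb1 p h]

end DiamondRoundTrips
/-- Refined diamond theorem: `(2k+1)`-tuples of total weight `n` (even positions
overpartitions, odd positions ordinary partitions), with maximal length `t` attained
last at (1-based) index `r`, are equinumerous with `k`-elongated partition diamonds of
`n` of length `t` with exactly `(t-1)(2k+1) + r` nonzero entries. -/
theorem diamond_tuple_refined (n k t r : ℕ) (hk : 1 ≤ k) (ht : 1 ≤ t)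
    (hr1 : 1 ≤ r) (hr2 : r ≤ 2 * k + 1) :
    Nat.card {α : Fin (2 * k + 1) → List (ℕ × Bool) //
        (∀ i, IsOverpartition (α i)) ∧
        (∀ i : Fin (2 * k + 1), i.val % 2 = 0 → ∀ x ∈ α i, x.2 = false) ∧
        (∀ i : Fin (2 * k + 1), (α i).length ≤ t) ∧
        (∀ i : Fin (2 * k + 1), i.val = r - 1 → (α i).length = t) ∧
        (∀ i : Fin (2 * k + 1), r ≤ i.val → (α i).length < t) ∧
        ∑ i, ((α i).map Prod.fst).sum = n} =
      Nat.card {π : ℕ →₀ ℕ // IsDiamond k π ∧ diamondWeight k π = n ∧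
        (∀ m ∈ π.support, m ≤ t * (2 * k + 1)) ∧
        π.support.card = (t - 1) * (2 * k + 1) + r} := by
  apply Nat.card_congr
  have e1 : {α : Fin (2 * k + 1) → List (ℕ × Bool) //
        (∀ i, IsOverpartition (α i)) ∧
        (∀ i : Fin (2 * k + 1), i.val % 2 = 0 → ∀ x ∈ α i, x.2 = false) ∧
        (∀ i : Fin (2 * k + 1), (α i).length ≤ t) ∧
        (∀ i : Fin (2 * k + 1), i.val = r - 1 → (α i).length = t) ∧
        (∀ i : Fin (2 * k + 1), r ≤ i.val → (α i).length < t) ∧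
        ∑ i, ((α i).map Prod.fst).sum = n} ≃
      {xb : (ℕ → ℕ) × (ℕ → Bool) // MidP n k t r xb.1 xb.2} :=
    { toFun := fun a => ⟨(xOf k a.1, bOf k t a.1),
        midP_of_tuple hk ht hr1 hr2 a.1 a.2.1 a.2.2.2.1 a.2.2.2.2.1 a.2.2.2.2.2.1
          a.2.2.2.2.2.2⟩
      invFun := fun m => ⟨fun q => listOf k t m.1.1 m.1.2 q.val,
        tuple_of_midP hk ht hr1 hr2 m.1.1 m.1.2 m.2⟩
      left_inv := fun a => Subtype.ext (funext fun q =>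
        listOf_xOf a.1 a.2.1 a.2.2.1 a.2.2.2.1 q)
      right_inv := fun m => Subtype.ext (Prod.ext
        (funext (xOf_listOf m.1.1 m.1.2 m.2))
        (funext (bOf_listOf m.1.1 m.1.2 m.2))) }
  have e2 : {xb : (ℕ → ℕ) × (ℕ → Bool) // MidP n k t r xb.1 xb.2} ≃
      {π : ℕ →₀ ℕ // IsDiamond k π ∧ diamondWeight k π = n ∧
        (∀ m ∈ π.support, m ≤ t * (2 * k + 1)) ∧
        π.support.card = (t - 1) * (2 * k + 1) + r} :=
    { toFun := fun m => ⟨piF k t m.1.1 m.1.2,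
        diamond_of_midP hk ht hr1 hr2 m.1.1 m.1.2 m.2⟩
      invFun := fun d => ⟨(xD k d.1, bD k t d.1),
        midP_of_diamond hk ht hr1 hr2 d.1 d.2.1 d.2.2.1 d.2.2.2.1 d.2.2.2.2⟩
      left_inv := fun m => Subtype.ext (Prod.ext
        (funext (xD_piF hk ht hr1 hr2 m.1.1 m.1.2 m.2))
        (funext (bD_piF hk ht hr1 hr2 m.1.1 m.1.2 m.2)))
      right_inv := fun d => Subtype.ext (piF_xD hk ht d.1 d.2.1 d.2.2.2.1) }
  exact e1.trans e2
end
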